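/- arXiv:1906.06155 — 8 statements merged into one kernel-verified Lean document; each statement's English description precedes it below -/
import Mathlib

section
/- Let a < x₀ < x₁ < ... < x_{2n-1} < b, let q be a complex polynomial of degree at most n-1, and let y₀ < y₁ < y₂ ∈ (a,b) be points distinct from all xᵢ. Then N(q)(z)/∏_{i=0}^{2n-1}(z - xᵢ) equals ((y₂-y₁)/(y₂-y₀))·N((z-y₀)q)(z)/((z-y₀)(z-y₁)∏ᵢ(z-xᵢ)) + ((y₁-y₀)/(y₂-y₀))·N((z-y₂)q)(z)/((z-y₁)(z-y₂)∏ᵢ(z-xᵢ)) as rational functions, where both coefficients are nonnegative. -/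
open Polynomial Finset

/-- `N(q) = q ⬝ q*`, where `q*` has conjugated coefficients. -/
noncomputable def Nq (q : Polynomial ℂ) : Polynomial ℂ := q * q.map (starRingEnd ℂ)

lemma Nq_real_linear_mul (y : ℝ) (q : Polynomial ℂ) (z : ℂ) :
    (Nq ((X - Polynomial.C (y : ℂ)) * q)).eval z = (z - (y : ℂ))^2 * (Nq q).eval z := by
  simp only [Nq, Polynomial.map_mul, Polynomial.map_sub, map_X, map_C]
  have : (starRingEnd ℂ) (y : ℂ) = (y : ℂ) := by simp [Complex.conj_ofReal]
  rw [this]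
  simp [eval_mul, eval_sub]
  ring

theorem cone_decomposition {n : ℕ} (a b : ℝ) (x : Fin (2 * n) → ℝ) (hx : StrictMono x)
    (hax : ∀ i, a < x i) (hxb : ∀ i, x i < b)
    (q : Polynomial ℂ) (hq : q ∈ Polynomial.degreeLT ℂ n)
    (y₀ y₁ y₂ : ℝ) (hy01 : y₀ < y₁) (hy12 : y₁ < y₂)
    (hy0 : y₀ ∈ Set.Ioo a b) (hy1 : y₁ ∈ Set.Ioo a b) (hy2 : y₂ ∈ Set.Ioo a b)
    (hdisj : ∀ i, y₀ ≠ x i ∧ y₁ ≠ x i ∧ y₂ ≠ x i) :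
    0 ≤ (y₂ - y₁) / (y₂ - y₀) ∧ 0 ≤ (y₁ - y₀) / (y₂ - y₀) ∧
    ∀ z : ℂ, z ≠ (y₀ : ℂ) → z ≠ (y₁ : ℂ) → z ≠ (y₂ : ℂ) → (∀ i, z ≠ (x i : ℂ)) →
      (Nq q).eval z / ∏ i, (z - (x i : ℂ)) =
        (((y₂ - y₁) / (y₂ - y₀) : ℝ) : ℂ) *
          ((Nq ((X - Polynomial.C (y₀ : ℂ)) * q)).eval z /
            ((z - (y₀ : ℂ)) * (z - (y₁ : ℂ)) * ∏ i, (z - (x i : ℂ)))) +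
        (((y₁ - y₀) / (y₂ - y₀) : ℝ) : ℂ) *
          ((Nq ((X - Polynomial.C (y₂ : ℂ)) * q)).eval z /
            ((z - (y₁ : ℂ)) * (z - (y₂ : ℂ)) * ∏ i, (z - (x i : ℂ)))) := by
  have h02 : y₀ < y₂ := hy01.trans hy12
  refine ⟨div_nonneg (by linarith) (by linarith), div_nonneg (by linarith) (by linarith), ?_⟩
  intro z hz0 hz1 hz2 hzx
  have hP : (∏ i, (z - (x i : ℂ))) ≠ 0 :=
    Finset.prod_ne_zero_iff.2 fun i _ => sub_ne_zero.2 (hzx i)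
  have h0 : z - (y₀ : ℂ) ≠ 0 := sub_ne_zero.2 hz0
  have h1 : z - (y₁ : ℂ) ≠ 0 := sub_ne_zero.2 hz1
  have h2 : z - (y₂ : ℂ) ≠ 0 := sub_ne_zero.2 hz2
  have hd : ((y₂ : ℂ) - y₀) ≠ 0 := by
    simpa using sub_ne_zero.2 (show (y₂ : ℂ) ≠ y₀ by exact_mod_cast h02.ne')
  rw [Nq_real_linear_mul, Nq_real_linear_mul]
  set E := (Nq q).eval z with hE
  set P := ∏ i, (z - (x i : ℂ)) with hPdef
  have key : (((y₂ - y₁) / (y₂ - y₀) : ℝ) : ℂ) * (z - (y₀ : ℂ)) +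
      (((y₁ - y₀) / (y₂ - y₀) : ℝ) : ℂ) * (z - (y₂ : ℂ)) = z - (y₁ : ℂ) := by
    push_cast
    field_simp
    ring
  have t1 : (z - (y₀ : ℂ))^2 * E / ((z - (y₀ : ℂ)) * (z - (y₁ : ℂ)) * P) =
      (z - (y₀ : ℂ)) * (E / ((z - (y₁ : ℂ)) * P)) := by
    rw [sq, mul_assoc, mul_assoc, mul_div_mul_left _ _ h0, mul_div_assoc]
  have t2 : (z - (y₂ : ℂ))^2 * E / ((z - (y₁ : ℂ)) * (z - (y₂ : ℂ)) * P) =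
      (z - (y₂ : ℂ)) * (E / ((z - (y₁ : ℂ)) * P)) := by
    rw [mul_comm (z - (y₁ : ℂ)) (z - (y₂ : ℂ)), sq, mul_assoc, mul_assoc,
      mul_div_mul_left _ _ h2, mul_div_assoc]
  rw [t1, t2, ← mul_assoc, ← mul_assoc, ← add_mul, key, ← mul_div_assoc,
    mul_div_mul_left _ _ h1]
end

section
/- Let n be a positive integer and p a polynomial with complex coefficients. Then the following are equivalent: (1) p has real coefficients, is nonnegative on ℝ, and has degree at most 2n; (2) p = q₁² + q₂² for some real polynomials q₁, q₂ of degree at most n; (3) p = q·q* for some complex polynomial q of degree at most n, where q* is the polynomial with conjugated coefficients. -/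
open Polynomial Complex

noncomputable def reP (q : Polynomial ℂ) : Polynomial ℝ :=
  ⟨⟨q.toFinsupp.coeff.mapRange Complex.re Complex.zero_re⟩⟩

noncomputable def imP (q : Polynomial ℂ) : Polynomial ℝ :=
  ⟨⟨q.toFinsupp.coeff.mapRange Complex.im Complex.zero_im⟩⟩

lemma coeff_reP (q : Polynomial ℂ) (k : ℕ) : (reP q).coeff k = (q.coeff k).re := rfl
lemma coeff_imP (q : Polynomial ℂ) (k : ℕ) : (imP q).coeff k = (q.coeff k).im := rfl

lemma decomp (q : Polynomial ℂ) :
    (reP q).map (algebraMap ℝ ℂ) + C Complex.I * (imP q).map (algebraMap ℝ ℂ) = q := by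
  ext k
  simp [coeff_reP, coeff_imP, coeff_map, coeff_C_mul, Complex.coe_algebraMap]
  rw [mul_comm]
  exact Complex.re_add_im _

lemma decomp_conj (q : Polynomial ℂ) :
    (reP q).map (algebraMap ℝ ℂ) - C Complex.I * (imP q).map (algebraMap ℝ ℂ)
      = q.map (starRingEnd ℂ) := by
  ext k
  simp [coeff_reP, coeff_imP, coeff_map, coeff_C_mul, Complex.coe_algebraMap]
  apply Complex.ext <;> simp

lemma prod_eq (a b : Polynomial ℝ) :
    (a.map (algebraMap ℝ ℂ) + C Complex.I * b.map (algebraMap ℝ ℂ)) *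
      (a.map (algebraMap ℝ ℂ) - C Complex.I * b.map (algebraMap ℝ ℂ))
      = (a ^ 2 + b ^ 2).map (algebraMap ℝ ℂ) := by
  have h : (C Complex.I : Polynomial ℂ) ^ 2 = -1 := by
    rw [← C_pow, Complex.I_sq, map_neg, map_one]
  rw [Polynomial.map_add, Polynomial.map_pow, Polynomial.map_pow]
  linear_combination (-(b.map (algebraMap ℝ ℂ)) ^ 2) * h

lemma conj_map_real (a : Polynomial ℝ) :
    (a.map (algebraMap ℝ ℂ)).map (starRingEnd ℂ) = a.map (algebraMap ℝ ℂ) := by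
  rw [Polynomial.map_map]
  congr 1
  ext x
  simp [Complex.conj_ofReal]

lemma key : ∀ d : ℕ, ∀ pr : Polynomial ℝ, pr.natDegree ≤ d → (∀ x : ℝ, 0 ≤ pr.eval x) →
    ∃ q : Polynomial ℂ, 2 * q.natDegree ≤ pr.natDegree ∧
      pr.map (algebraMap ℝ ℂ) = q * q.map (starRingEnd ℂ) := by
  intro d
  induction d using Nat.strong_induction_on with
  | _ d ih =>
  intro pr hdeg hpos
  by_cases h0 : pr = 0
  · exact ⟨0, by simp [h0]⟩
  by_cases hd0 : pr.natDegree = 0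
  · -- constant case
    have hc : pr = C (pr.coeff 0) := eq_C_of_natDegree_eq_zero hd0
    have hc0 : 0 ≤ pr.coeff 0 := by have := hpos 0; rwa [hc, eval_C] at this
    refine ⟨C ((Real.sqrt (pr.coeff 0) : ℝ) : ℂ), by simp, ?_⟩
    conv_lhs => rw [hc]
    simp only [Polynomial.map_C, map_C, Complex.conj_ofReal, ← C_mul]
    congr 1
    rw [← Complex.ofReal_mul, Real.mul_self_sqrt hc0]
    rfl
  · -- nonconstant
    have hP0 : pr.map (algebraMap ℝ ℂ) ≠ 0 := by
      simpa using (Polynomial.map_ne_zero_iff (algebraMap ℝ ℂ).injective).mpr h0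
    have hdegP : 0 < (pr.map (algebraMap ℝ ℂ)).degree := by
      rw [natDegree_pos_iff_degree_pos.symm, natDegree_map_eq_of_injective
        (algebraMap ℝ ℂ).injective]
      omega
    obtain ⟨z, hz⟩ := Complex.exists_root hdegP
    by_cases him : z.im = 0
    · -- real root case
      set r := z.re with hr
      have hzr : z = (r : ℂ) := Complex.ext rfl him
      have hroot : pr.IsRoot r := by
        have : (algebraMap ℝ ℂ) (pr.eval r) = 0 := by
          rw [← Polynomial.eval₂_at_apply, ← Polynomial.eval_map]
          rw [hzr] at hz
          exact hz
        exact (map_eq_zero_iff _ (algebraMap ℝ ℂ).injective).mp this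
      have hmin : IsLocalMin (fun x => pr.eval x) r := by
        have hm : IsMinOn (fun x => pr.eval x) Set.univ r :=
          isMinOn_univ_iff.mpr fun x => by simpa [hroot.eq_zero] using hpos x
        exact hm.isLocalMin Filter.univ_mem
      have hderiv : pr.derivative.IsRoot r := by
        have := hmin.deriv_eq_zero
        rwa [Polynomial.deriv] at this
      have hdvd : (X - C r) ^ 2 ∣ pr := by
        refine dvd_trans (pow_dvd_pow _ ?_) (pr.pow_rootMultiplicity_dvd r)
        exact (one_lt_rootMultiplicity_iff_isRoot h0).mpr ⟨hroot, hderiv⟩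
      obtain ⟨g, hg⟩ := hdvd
      have hg0 : g ≠ 0 := by rintro rfl; simp at hg; exact h0 hg
      have hgpos : ∀ x : ℝ, 0 ≤ g.eval x := by
        have hne : ∀ x : ℝ, x ≠ r → 0 ≤ g.eval x := by
          intro x hx
          have h1 := hpos x
          rw [hg] at h1
          simp only [eval_mul, eval_pow, eval_sub, eval_X, eval_C] at h1
          have hxr : x - r ≠ 0 := sub_ne_zero.mpr hx
          have h2 : 0 < (x - r) ^ 2 := by positivity
          nlinarith
        intro x
        by_cases hx : x = r
        · rw [hx]
          have htend : Filter.Tendsto (fun y => g.eval y)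
              (nhdsWithin r (({r} : Set ℝ)ᶜ)) (nhds (g.eval r)) :=
            (g.continuousAt).continuousWithinAt.tendsto
          refine ge_of_tendsto htend ?_
          filter_upwards [self_mem_nhdsWithin] with y hy
          exact hne y hy
        · exact hne x hx
      have hndeg : pr.natDegree = 2 + g.natDegree := by
        rw [hg, natDegree_mul (pow_ne_zero 2 (X_sub_C_ne_zero r)) hg0]
        simp [natDegree_pow]
      obtain ⟨q', hq'deg, hq'⟩ := ih g.natDegree (by omega) g le_rfl hgpos
      have hq'0 : q' ≠ 0 := by
        rintro rfl
        refine hg0 ((Polynomial.map_eq_zero_iff (algebraMap ℝ ℂ).injective).mp ?_)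
        rw [hq', zero_mul]
      refine ⟨(X - C (r : ℂ)) * q', ?_, ?_⟩
      · rw [natDegree_mul (X_sub_C_ne_zero _) hq'0, natDegree_X_sub_C]
        omega
      · have hconj : ((X - C (r : ℂ)) * q').map (starRingEnd ℂ)
            = (X - C (r : ℂ)) * q'.map (starRingEnd ℂ) := by
          rw [Polynomial.map_mul, Polynomial.map_sub, Polynomial.map_X, Polynomial.map_C,
            Complex.conj_ofReal]
        rw [hconj, hg, Polynomial.map_mul, Polynomial.map_pow, Polynomial.map_sub,
          Polynomial.map_X, Polynomial.map_C, hq', Complex.coe_algebraMap]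
        ring
    · -- complex root case
      set a := z.re
      set c := z.re ^ 2 + z.im ^ 2
      set dvs : Polynomial ℝ := X ^ 2 + (C (-(2 * a)) * X + C c) with hdvs
      have hmonic : dvs.Monic := by
        apply monic_X_pow_add
        exact lt_of_le_of_lt (degree_linear_le) (by norm_num)
      have hmapdvs : dvs.map (algebraMap ℝ ℂ) = (X - C z) * (X - C ((starRingEnd ℂ) z)) := by
        have h1 : ((2 * a : ℝ) : ℂ) = z + (starRingEnd ℂ) z := by
          rw [Complex.add_conj]
        have h2 : ((c : ℝ) : ℂ) = z * (starRingEnd ℂ) z := by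
          rw [Complex.mul_conj]
          congr 1
          simp only [Complex.normSq_apply, c]
          ring
        rw [hdvs]
        simp only [Polynomial.map_add, Polynomial.map_pow, Polynomial.map_mul,
          Polynomial.map_X, Polynomial.map_C, Complex.coe_algebraMap]
        rw [show ((-(2 * a) : ℝ) : ℂ) = -((2 * a : ℝ) : ℂ) by push_cast; ring]
        rw [h1, h2, map_neg, map_add, map_mul]
        ring
      have hzbar : (pr.map (algebraMap ℝ ℂ)).IsRoot ((starRingEnd ℂ) z) := by
        have hfix : (pr.map (algebraMap ℝ ℂ)).map (starRingEnd ℂ)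
            = pr.map (algebraMap ℝ ℂ) := by
          rw [Polynomial.map_map]
          congr 1
          ext x
          simp [Complex.conj_ofReal]
        have : ((pr.map (algebraMap ℝ ℂ)).map (starRingEnd ℂ)).eval ((starRingEnd ℂ) z)
            = (starRingEnd ℂ) ((pr.map (algebraMap ℝ ℂ)).eval z) := by
          rw [Polynomial.eval_map, Polynomial.eval₂_at_apply]
        rw [hfix] at this
        rw [IsRoot, this, hz, map_zero]
      have hne : z ≠ (starRingEnd ℂ) z := by
        intro h
        exact him ((Complex.conj_eq_iff_im).mp h.symm)
      have hdvdC : (X - C z) * (X - C ((starRingEnd ℂ) z)) ∣ pr.map (algebraMap ℝ ℂ) := by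
        apply IsCoprime.mul_dvd
        · exact isCoprime_X_sub_C_of_isUnit_sub (by simpa using sub_ne_zero.mpr hne)
        · exact dvd_iff_isRoot.mpr hz
        · exact dvd_iff_isRoot.mpr hzbar
      have hdvd : dvs ∣ pr := by
        rw [← map_dvd_map (algebraMap ℝ ℂ) (algebraMap ℝ ℂ).injective hmonic, hmapdvs]
        exact hdvdC
      obtain ⟨g, hg⟩ := hdvd
      have hg0 : g ≠ 0 := by rintro rfl; simp at hg; exact h0 hg
      have hdvspos : ∀ x : ℝ, 0 < dvs.eval x := by
        intro x
        have him2 : 0 < z.im ^ 2 :=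
          lt_of_le_of_ne (sq_nonneg _) (Ne.symm (pow_ne_zero 2 him))
        have hca : c = a ^ 2 + z.im ^ 2 := rfl
        simp only [hdvs, eval_add, eval_pow, eval_mul, eval_X, eval_C]
        nlinarith [sq_nonneg (x - a), him2, hca]
      have hgpos : ∀ x : ℝ, 0 ≤ g.eval x := by
        intro x
        have h1 := hpos x
        rw [hg, eval_mul] at h1
        nlinarith [hdvspos x]
      have hdvsdeg : dvs.natDegree = 2 := by
        rw [hdvs]
        compute_degree!
      have hndeg : pr.natDegree = 2 + g.natDegree := by
        rw [hg, natDegree_mul hmonic.ne_zero hg0, hdvsdeg]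
      obtain ⟨q', hq'deg, hq'⟩ := ih g.natDegree (by omega) g le_rfl hgpos
      have hq'0 : q' ≠ 0 := by
        rintro rfl
        refine hg0 ((Polynomial.map_eq_zero_iff (algebraMap ℝ ℂ).injective).mp ?_)
        rw [hq', zero_mul]
      refine ⟨(X - C z) * q', ?_, ?_⟩
      · rw [natDegree_mul (X_sub_C_ne_zero _) hq'0, natDegree_X_sub_C]
        omega
      · have hconj : ((X - C z) * q').map (starRingEnd ℂ)
            = (X - C ((starRingEnd ℂ) z)) * q'.map (starRingEnd ℂ) := by
          rw [Polynomial.map_mul, Polynomial.map_sub, Polynomial.map_X, Polynomial.map_C]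
        rw [hconj, hg, Polynomial.map_mul, hmapdvs, hq']
        ring

theorem nonneg_poly_tfae (n : ℕ) (hn : 0 < n) (p : Polynomial ℂ) :
    (((∃ pr : Polynomial ℝ, p = pr.map (algebraMap ℝ ℂ) ∧ ∀ x : ℝ, 0 ≤ pr.eval x) ∧
        p.natDegree ≤ 2 * n) ↔
      (∃ q₁ q₂ : Polynomial ℝ, q₁.natDegree ≤ n ∧ q₂.natDegree ≤ n ∧
        p = (q₁ ^ 2 + q₂ ^ 2).map (algebraMap ℝ ℂ))) ∧
    ((∃ q₁ q₂ : Polynomial ℝ, q₁.natDegree ≤ n ∧ q₂.natDegree ≤ n ∧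
        p = (q₁ ^ 2 + q₂ ^ 2).map (algebraMap ℝ ℂ)) ↔
      (∃ q : Polynomial ℂ, q.natDegree ≤ n ∧ p = q * q.map (starRingEnd ℂ))) := by
  -- (2) → (3)
  have h23 : (∃ q₁ q₂ : Polynomial ℝ, q₁.natDegree ≤ n ∧ q₂.natDegree ≤ n ∧
      p = (q₁ ^ 2 + q₂ ^ 2).map (algebraMap ℝ ℂ)) →
      (∃ q : Polynomial ℂ, q.natDegree ≤ n ∧ p = q * q.map (starRingEnd ℂ)) := by
    rintro ⟨q₁, q₂, h1, h2, rfl⟩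
    refine ⟨q₁.map (algebraMap ℝ ℂ) + C Complex.I * q₂.map (algebraMap ℝ ℂ), ?_, ?_⟩
    · refine le_trans (natDegree_add_le _ _) (max_le ?_ ?_)
      · exact le_trans (natDegree_map_le) h1
      · exact le_trans (natDegree_C_mul_le _ _) (le_trans (natDegree_map_le) h2)
    · have hc : (q₁.map (algebraMap ℝ ℂ) + C Complex.I * q₂.map (algebraMap ℝ ℂ)).map
          (starRingEnd ℂ)
          = q₁.map (algebraMap ℝ ℂ) - C Complex.I * q₂.map (algebraMap ℝ ℂ) := by
        rw [Polynomial.map_add, Polynomial.map_mul, Polynomial.map_C, conj_map_real,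
          conj_map_real, Complex.conj_I, map_neg]
        ring
      rw [hc, prod_eq]
  -- (3) → (2)
  have h32 : (∃ q : Polynomial ℂ, q.natDegree ≤ n ∧ p = q * q.map (starRingEnd ℂ)) →
      (∃ q₁ q₂ : Polynomial ℝ, q₁.natDegree ≤ n ∧ q₂.natDegree ≤ n ∧
        p = (q₁ ^ 2 + q₂ ^ 2).map (algebraMap ℝ ℂ)) := by
    rintro ⟨q, hq, rfl⟩
    refine ⟨reP q, imP q, ?_, ?_, ?_⟩
    · refine natDegree_le_iff_coeff_eq_zero.mpr fun N hN => ?_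
      rw [coeff_reP, coeff_eq_zero_of_natDegree_lt (lt_of_le_of_lt hq hN), Complex.zero_re]
    · refine natDegree_le_iff_coeff_eq_zero.mpr fun N hN => ?_
      rw [coeff_imP, coeff_eq_zero_of_natDegree_lt (lt_of_le_of_lt hq hN), Complex.zero_im]
    · rw [← prod_eq, decomp, decomp_conj]
  -- (2) → (1)
  have h21 : (∃ q₁ q₂ : Polynomial ℝ, q₁.natDegree ≤ n ∧ q₂.natDegree ≤ n ∧
      p = (q₁ ^ 2 + q₂ ^ 2).map (algebraMap ℝ ℂ)) →
      ((∃ pr : Polynomial ℝ, p = pr.map (algebraMap ℝ ℂ) ∧ ∀ x : ℝ, 0 ≤ pr.eval x) ∧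
        p.natDegree ≤ 2 * n) := by
    rintro ⟨q₁, q₂, h1, h2, rfl⟩
    constructor
    · exact ⟨q₁ ^ 2 + q₂ ^ 2, rfl, fun x => by simp only [eval_add, eval_pow]; positivity⟩
    · refine le_trans (natDegree_map_le) (le_trans (natDegree_add_le _ _) ?_)
      rw [natDegree_pow, natDegree_pow]
      omega
  -- (1) → (3)
  have h13 : ((∃ pr : Polynomial ℝ, p = pr.map (algebraMap ℝ ℂ) ∧ ∀ x : ℝ, 0 ≤ pr.eval x) ∧
      p.natDegree ≤ 2 * n) →
      (∃ q : Polynomial ℂ, q.natDegree ≤ n ∧ p = q * q.map (starRingEnd ℂ)) := by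
    rintro ⟨⟨pr, rfl, hpos⟩, hdeg⟩
    obtain ⟨q, hqd, hq⟩ := key pr.natDegree pr le_rfl hpos
    refine ⟨q, ?_, hq⟩
    rw [natDegree_map_eq_of_injective (algebraMap ℝ ℂ).injective] at hdeg
    omega
  exact ⟨⟨fun h => h32 (h13 h), h21⟩, ⟨h23, h32⟩⟩
end

section
/- Let a < c < b < d and f : (a,d) → ℝ be such that the restrictions of f to (a,b) and to (c,d) are both k-tone. Then f is k-tone on (a,d). -/
open Finset

/-- Divided difference of order `m - 1` at pairwise distinct points. -/
noncomputable def divDiff (f : ℝ → ℝ) {m : ℕ} (x : Fin m → ℝ) : ℝ :=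
  ∑ i, f (x i) / ∏ j ∈ Finset.univ.erase i, (x i - x j)

/-- Divided difference over a finset of points. -/
noncomputable def DD (f : ℝ → ℝ) (s : Finset ℝ) : ℝ :=
  ∑ x ∈ s, f x / ∏ y ∈ s.erase x, (x - y)

lemma divDiff_eq_DD (f : ℝ → ℝ) {m : ℕ} (x : Fin m → ℝ) (hx : Function.Injective x) :
    divDiff f x = DD f (Finset.univ.image x) := by
  unfold divDiff DD
  rw [Finset.sum_image (fun i _ j _ h => hx h)]
  refine Finset.sum_congr rfl fun i _ => ?_
  congr 1
  rw [← Finset.image_erase hx, Finset.prod_image]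
  intro j hj l hl h
  exact hx h

lemma prod_sub_ne_zero {x : ℝ} {s : Finset ℝ} (hx : x ∉ s) :
    ∏ y ∈ s, (x - y) ≠ 0 := by
  apply Finset.prod_ne_zero_iff.2
  intro y hy
  exact sub_ne_zero.2 (fun h => hx (h ▸ hy))

lemma DD_insert_expand (f : ℝ → ℝ) (s : Finset ℝ) {p : ℝ} (hp : p ∉ s) :
    DD f (insert p s) =
      f p / ∏ y ∈ s, (p - y) +
        ∑ x ∈ s, f x / ((x - p) * ∏ y ∈ s.erase x, (x - y)) := by
  unfold DD
  rw [Finset.sum_insert hp, Finset.erase_insert hp]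
  congr 1
  refine Finset.sum_congr rfl fun x hxs => ?_
  have hxp : x ≠ p := fun h => hp (h ▸ hxs)
  rw [Finset.erase_insert_of_ne hxp.symm,
    Finset.prod_insert (fun h => hp (Finset.erase_subset _ _ h))]

lemma DD_recur (f : ℝ → ℝ) (s : Finset ℝ) {p q : ℝ} (hp : p ∉ s) (hq : q ∉ s)
    (hpq : p ≠ q) :
    (p - q) * DD f (insert p (insert q s)) = DD f (insert p s) - DD f (insert q s) := by
  have hp' : p ∉ insert q s := by simp [hpq, hp]
  rw [DD_insert_expand f _ hp', DD_insert_expand f _ hp, DD_insert_expand f _ hq]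
  rw [Finset.prod_insert hq]
  have hps : ∑ x ∈ insert q s, f x / ((x - p) * ∏ y ∈ (insert q s).erase x, (x - y))
      = f q / ((q - p) * ∏ y ∈ s, (q - y)) +
        ∑ x ∈ s, f x / ((x - p) * ((x - q) * ∏ y ∈ s.erase x, (x - y))) := by
    rw [Finset.sum_insert hq, Finset.erase_insert hq]
    congr 1
    refine Finset.sum_congr rfl fun x hxs => ?_
    have hxq : x ≠ q := fun h => hq (h ▸ hxs)
    rw [Finset.erase_insert_of_ne hxq.symm,
      Finset.prod_insert (fun h => hq (Finset.erase_subset _ _ h))]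
  rw [hps]
  have key : (p - q) * ∑ x ∈ s, f x / ((x - p) * ((x - q) * ∏ y ∈ s.erase x, (x - y)))
      = (∑ x ∈ s, f x / ((x - p) * ∏ y ∈ s.erase x, (x - y)))
        - ∑ x ∈ s, f x / ((x - q) * ∏ y ∈ s.erase x, (x - y)) := by
    rw [Finset.mul_sum, ← Finset.sum_sub_distrib]
    refine Finset.sum_congr rfl fun x hxs => ?_
    have hxp : x - p ≠ 0 := sub_ne_zero.2 (fun h => hp (h ▸ hxs))
    have hxq : x - q ≠ 0 := sub_ne_zero.2 (fun h => hq (h ▸ hxs))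
    have hw : ∏ y ∈ s.erase x, (x - y) ≠ 0 :=
      prod_sub_ne_zero (Finset.notMem_erase x s)
    field_simp
    ring
  have hWp : ∏ y ∈ s, (p - y) ≠ 0 := prod_sub_ne_zero hp
  have hWq : ∏ y ∈ s, (q - y) ≠ 0 := prod_sub_ne_zero hq
  have hpq' : p - q ≠ 0 := sub_ne_zero.2 hpq
  have hqp' : q - p ≠ 0 := sub_ne_zero.2 (Ne.symm hpq)
  have h1 : (p - q) * (f p / ((p - q) * ∏ y ∈ s, (p - y))) = f p / ∏ y ∈ s, (p - y) := by
    field_simp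
  have h2 : (p - q) * (f q / ((q - p) * ∏ y ∈ s, (q - y))) = -(f q / ∏ y ∈ s, (q - y)) := by
    field_simp
    ring
  linarith [key, h1, h2]

lemma DD_swap (f : ℝ → ℝ) (s : Finset ℝ) {α β μ : ℝ} (hα : α ∉ s) (hβ : β ∉ s)
    (hμ : μ ∉ s) (h1 : α < μ) (h2 : μ < β) :
    (β - α) * DD f (insert α (insert β s)) =
      (β - μ) * DD f (insert μ (insert β s)) + (μ - α) * DD f (insert α (insert μ s)) := by
  have hαμ : α ≠ μ := ne_of_lt h1
  have hμβ : μ ≠ β := ne_of_lt h2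
  have hαβ : α ≠ β := ne_of_lt (h1.trans h2)
  have hμβs : μ ∉ insert β s := by simp [hμβ, hμ]
  have hαβs : α ∉ insert β s := by simp [hαβ, hα]
  have hαμs : α ∉ insert μ s := by simp [hαμ, hα]
  have hβμs : β ∉ insert μ s := by simp [hμβ.symm, hβ]
  have E2 := DD_recur f (insert β s) hμβs hαβs (hαμ.symm)
  have E3 := DD_recur f (insert μ s) hβμs hαμs (hαβ.symm)
  have hT : insert μ (insert α (insert β s)) = insert β (insert α (insert μ s)) := by
    rw [Finset.insert_comm α β s, Finset.insert_comm μ β, Finset.insert_comm μ α]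
  rw [hT] at E2
  have hY : insert β (insert μ s) = insert μ (insert β s) := Finset.insert_comm _ _ _
  rw [hY] at E3
  linear_combination (β - α) * E2 - (μ - α) * E3

/-- Points of `t` outside `s` lying strictly between two points of `s`. -/
noncomputable def gapSet (t s : Finset ℝ) : Finset ℝ :=
  t.filter (fun z => z ∉ s ∧ (∃ x ∈ s, x < z) ∧ (∃ y ∈ s, z < y))

lemma window_of_gap_empty (f : ℝ → ℝ) (t : Finset ℝ) (k : ℕ)
    (H : ∀ s ⊆ t, s.card = k + 1 →
      (∀ x ∈ s, ∀ y ∈ s, ∀ z ∈ t, x ≤ z → z ≤ y → z ∈ s) → 0 ≤ DD f s)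
    (s : Finset ℝ) (hst : s ⊆ t) (hcard : s.card = k + 1)
    (hge : gapSet t s = ∅) : 0 ≤ DD f s := by
  apply H s hst hcard
  intro x hx y hy z hz hxz hzy
  by_contra hzs
  have : z ∈ gapSet t s := Finset.mem_filter.2 ⟨hz, hzs,
    ⟨x, hx, lt_of_le_of_ne hxz (fun h => hzs (h ▸ hx))⟩,
    ⟨y, hy, lt_of_le_of_ne hzy (fun h => hzs (h ▸ hy))⟩⟩
  simp [hge] at this

lemma DD_nonneg_of_windows (f : ℝ → ℝ) (t : Finset ℝ) (k : ℕ)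
    (H : ∀ s ⊆ t, s.card = k + 1 →
      (∀ x ∈ s, ∀ y ∈ s, ∀ z ∈ t, x ≤ z → z ≤ y → z ∈ s) → 0 ≤ DD f s) :
    ∀ s ⊆ t, s.card = k + 1 → 0 ≤ DD f s := by
  suffices h : ∀ n : ℕ, ∀ s ⊆ t, s.card = k + 1 → (gapSet t s).card ≤ n → 0 ≤ DD f s by
    intro s hst hcard
    exact h (gapSet t s).card s hst hcard le_rfl
  intro n
  induction n with
  | zero =>
    intro s hst hcard hg
    refine window_of_gap_empty f t k H s hst hcard ?_
    rw [Nat.le_zero, Finset.card_eq_zero] at hg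
    exact hg
  | succ n ih =>
    intro s hst hcard hg
    rcases Finset.eq_empty_or_nonempty (gapSet t s) with hge | ⟨μ, hμg⟩
    · exact window_of_gap_empty f t k H s hst hcard hge
    obtain ⟨hμt, hμs, ⟨x₀, hx₀, hx₀μ⟩, ⟨y₀, hy₀, hμy₀⟩⟩ := Finset.mem_filter.1 hμg
    have hsne : s.Nonempty := ⟨x₀, hx₀⟩
    set α := s.min' hsne with hαdef
    set β := s.max' hsne with hβdef
    have hαs : α ∈ s := s.min'_mem hsne
    have hβs : β ∈ s := s.max'_mem hsne
    have hαμ : α < μ := lt_of_le_of_lt (s.min'_le x₀ hx₀) hx₀μ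
    have hμβ : μ < β := lt_of_lt_of_le hμy₀ (s.le_max' y₀ hy₀)
    have hαβ : α ≠ β := ne_of_lt (hαμ.trans hμβ)
    set s₀ := (s.erase α).erase β with hs₀def
    have hβα : β ∈ s.erase α := Finset.mem_erase.2 ⟨hαβ.symm, hβs⟩
    have hαs₀ : α ∉ s₀ := fun h =>
      Finset.notMem_erase α s (Finset.erase_subset _ _ h)
    have hβs₀ : β ∉ s₀ := Finset.notMem_erase β _
    have hμs₀ : μ ∉ s₀ := fun h => hμs (Finset.erase_subset _ _ (Finset.erase_subset _ _ h))
    have hseq : s = insert α (insert β s₀) := by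
      rw [hs₀def, Finset.insert_erase hβα, Finset.insert_erase hαs]
    have hs₀sub : s₀ ⊆ s := fun z hz =>
      Finset.erase_subset _ _ (Finset.erase_subset _ _ hz)
    have hmem_s₀_lt : ∀ z ∈ s₀, α < z ∧ z < β := by
      intro z hz
      obtain ⟨hzβ, hzα, hzs⟩ :=
        by simpa [hs₀def, Finset.mem_erase, and_assoc] using hz
      exact ⟨lt_of_le_of_ne (s.min'_le z hzs) (Ne.symm hzα),
        lt_of_le_of_ne (s.le_max' z hzs) hzβ⟩
    set s₁ := insert μ (insert β s₀) with hs₁def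
    set s₂ := insert α (insert μ s₀) with hs₂def
    have hs₁sub : s₁ ⊆ t := by
      intro z hz
      rcases Finset.mem_insert.1 hz with rfl | hz
      · exact hμt
      rcases Finset.mem_insert.1 hz with rfl | hz
      · exact hst hβs
      · exact hst (hs₀sub hz)
    have hs₂sub : s₂ ⊆ t := by
      intro z hz
      rcases Finset.mem_insert.1 hz with rfl | hz
      · exact hst hαs
      rcases Finset.mem_insert.1 hz with rfl | hz
      · exact hμt
      · exact hst (hs₀sub hz)
    have hk1 : 1 ≤ k := by
      have h1 : (s.erase α).card = k := by
        rw [Finset.card_erase_of_mem hαs, hcard]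
        omega
      have h2 : 0 < (s.erase α).card := Finset.card_pos.2 ⟨β, hβα⟩
      omega
    have hcards₀ : s₀.card = k - 1 := by
      rw [hs₀def, Finset.card_erase_of_mem hβα, Finset.card_erase_of_mem hαs, hcard]
      omega
    have hμβs₀ : μ ∉ insert β s₀ := by simp [ne_of_lt hμβ, hμs₀]
    have hβins : β ∉ s₀ := hβs₀
    have hcards₁ : s₁.card = k + 1 := by
      rw [hs₁def, Finset.card_insert_of_notMem hμβs₀,
        Finset.card_insert_of_notMem hβs₀, hcards₀]
      omega
    have hαμs₀ : α ∉ insert μ s₀ := by simp [ne_of_lt hαμ, hαs₀]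
    have hcards₂ : s₂.card = k + 1 := by
      rw [hs₂def, Finset.card_insert_of_notMem hαμs₀,
        Finset.card_insert_of_notMem hμs₀, hcards₀]
      omega
    -- gap sets shrink
    have hmem_s₁ : ∀ z ∈ s₁, z ∈ s ∨ z = μ := by
      intro z hz
      rcases Finset.mem_insert.1 hz with rfl | hz
      · exact Or.inr rfl
      rcases Finset.mem_insert.1 hz with rfl | hz
      · exact Or.inl hβs
      · exact Or.inl (hs₀sub hz)
    have hmem_s₂ : ∀ z ∈ s₂, z ∈ s ∨ z = μ := by
      intro z hz
      rcases Finset.mem_insert.1 hz with rfl | hz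
      · exact Or.inl hαs
      rcases Finset.mem_insert.1 hz with rfl | hz
      · exact Or.inr rfl
      · exact Or.inl (hs₀sub hz)
    have hgap₁ : gapSet t s₁ ⊆ (gapSet t s).erase μ := by
      intro z hz
      obtain ⟨hzt, hzs₁, ⟨x, hx, hxz⟩, ⟨y, hy, hzy⟩⟩ := Finset.mem_filter.1 hz
      have hzμ : z ≠ μ := fun h => hzs₁ (h ▸ Finset.mem_insert_self μ _)
      have hzα : z ≠ α := by
        rintro rfl
        -- all elements of s₁ are > α, contradicting x < z = α
        rcases hmem_s₁ x hx with hxs | rfl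
        · exact absurd hxz (not_lt.2 (s.min'_le x hxs))
        · exact absurd (hαμ.trans hxz) (lt_irrefl α)
      have hzs : z ∉ s := by
        intro hzs
        apply hzs₁
        rw [hs₁def]
        have : z ∈ s₀ := by
          rw [hs₀def]
          refine Finset.mem_erase.2 ⟨?_, Finset.mem_erase.2 ⟨hzα, hzs⟩⟩
          rintro rfl
          exact hzs₁ (Finset.mem_insert.2 (Or.inr (Finset.mem_insert_self _ _)))
        exact Finset.mem_insert.2 (Or.inr (Finset.mem_insert.2 (Or.inr this)))
      refine Finset.mem_erase.2 ⟨hzμ, Finset.mem_filter.2 ⟨hzt, hzs, ?_, ?_⟩⟩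
      · rcases hmem_s₁ x hx with hxs | rfl
        · exact ⟨x, hxs, hxz⟩
        · exact ⟨x₀, hx₀, hx₀μ.trans hxz⟩
      · rcases hmem_s₁ y hy with hys | rfl
        · exact ⟨y, hys, hzy⟩
        · exact ⟨β, hβs, hzy.trans hμβ⟩
    have hgap₂ : gapSet t s₂ ⊆ (gapSet t s).erase μ := by
      intro z hz
      obtain ⟨hzt, hzs₂, ⟨x, hx, hxz⟩, ⟨y, hy, hzy⟩⟩ := Finset.mem_filter.1 hz
      have hzμ : z ≠ μ := fun h =>
        hzs₂ (h ▸ Finset.mem_insert.2 (Or.inr (Finset.mem_insert_self μ _)))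
      have hzβ : z ≠ β := by
        rintro rfl
        rcases hmem_s₂ y hy with hys | rfl
        · exact absurd hzy (not_lt.2 (s.le_max' y hys))
        · exact absurd (hzy.trans hμβ) (lt_irrefl β)
      have hzs : z ∉ s := by
        intro hzs
        apply hzs₂
        rw [hs₂def]
        have hzα : z ≠ α := fun h => hzs₂ (h ▸ Finset.mem_insert_self α _)
        have : z ∈ s₀ := by
          rw [hs₀def]
          exact Finset.mem_erase.2 ⟨hzβ, Finset.mem_erase.2 ⟨hzα, hzs⟩⟩
        exact Finset.mem_insert.2 (Or.inr (Finset.mem_insert.2 (Or.inr this)))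
      refine Finset.mem_erase.2 ⟨hzμ, Finset.mem_filter.2 ⟨hzt, hzs, ?_, ?_⟩⟩
      · rcases hmem_s₂ x hx with hxs | rfl
        · exact ⟨x, hxs, hxz⟩
        · exact ⟨x₀, hx₀, hx₀μ.trans hxz⟩
      · rcases hmem_s₂ y hy with hys | rfl
        · exact ⟨y, hys, hzy⟩
        · exact ⟨y₀, hy₀, hzy.trans hμy₀⟩
    have hcarderase : ((gapSet t s).erase μ).card ≤ n := by
      rw [Finset.card_erase_of_mem hμg]
      omega
    have hg₁ : (gapSet t s₁).card ≤ n :=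
      le_trans (Finset.card_le_card hgap₁) hcarderase
    have hg₂ : (gapSet t s₂).card ≤ n :=
      le_trans (Finset.card_le_card hgap₂) hcarderase
    have hD₁ : 0 ≤ DD f s₁ := ih s₁ hs₁sub hcards₁ hg₁
    have hD₂ : 0 ≤ DD f s₂ := ih s₂ hs₂sub hcards₂ hg₂
    have hswap := DD_swap f s₀ hαs₀ hβs₀ hμs₀ hαμ hμβ
    rw [← hs₁def, ← hs₂def, ← hseq] at hswap
    nlinarith [mul_nonneg (le_of_lt (sub_pos.2 hμβ)) hD₁,
      mul_nonneg (le_of_lt (sub_pos.2 hαμ)) hD₂, sub_pos.2 (hαμ.trans hμβ)]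

lemma DD_nonneg_of_Ioo (k : ℕ) (a b : ℝ) (f : ℝ → ℝ)
    (h : ∀ x : Fin (k + 1) → ℝ, (∀ i, x i ∈ Set.Ioo a b) → Function.Injective x →
      0 ≤ divDiff f x)
    (s : Finset ℝ) (hs : ∀ z ∈ s, z ∈ Set.Ioo a b) (hcard : s.card = k + 1) :
    0 ≤ DD f s := by
  set e := s.orderIsoOfFin hcard with hedef
  set x : Fin (k + 1) → ℝ := fun i => (e i : ℝ) with hxdef
  have hxinj : Function.Injective x := by
    intro i j hij
    exact e.injective (Subtype.coe_injective hij)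
  have himg : Finset.univ.image x = s := by
    apply Finset.eq_of_subset_of_card_le
    · intro z hz
      obtain ⟨i, _, rfl⟩ := Finset.mem_image.1 hz
      exact (e i).2
    · rw [hcard, Finset.card_image_of_injective _ hxinj, Finset.card_univ, Fintype.card_fin]
  have := h x (fun i => hs _ (e i).2) hxinj
  rwa [divDiff_eq_DD f x hxinj, himg] at this

theorem kTone_local (k : ℕ) (a b c d : ℝ) (hac : a < c) (hcb : c < b) (hbd : b < d)
    (f : ℝ → ℝ)
    (h₁ : ∀ x : Fin (k + 1) → ℝ, (∀ i, x i ∈ Set.Ioo a b) → Function.Injective x →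
      0 ≤ divDiff f x)
    (h₂ : ∀ x : Fin (k + 1) → ℝ, (∀ i, x i ∈ Set.Ioo c d) → Function.Injective x →
      0 ≤ divDiff f x) :
    ∀ x : Fin (k + 1) → ℝ, (∀ i, x i ∈ Set.Ioo a d) → Function.Injective x →
      0 ≤ divDiff f x := by
  intro x hx hinj
  rw [divDiff_eq_DD f x hinj]
  set S := Finset.univ.image x with hSdef
  have hScard : S.card = k + 1 := by
    rw [hSdef, Finset.card_image_of_injective _ hinj, Finset.card_univ, Fintype.card_fin]
  have hSsub : ∀ z ∈ S, z ∈ Set.Ioo a d := by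
    intro z hz
    obtain ⟨i, _, rfl⟩ := Finset.mem_image.1 hz
    exact hx i
  -- pick k auxiliary points in (c, b) avoiding S
  have hinf : (Set.Ioo c b \ ↑S).Infinite :=
    (Set.Ioo_infinite hcb).diff (S.finite_toSet)
  obtain ⟨Z, hZsub, hZcard⟩ := hinf.exists_subset_card_eq k
  have hZIoo : ∀ z ∈ Z, z ∈ Set.Ioo c b := fun z hz => (hZsub hz).1
  have hZS : ∀ z ∈ Z, z ∉ S := fun z hz => (hZsub hz).2
  set t := S ∪ Z with htdef
  have htIoo : ∀ z ∈ t, z ∈ Set.Ioo a d := by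
    intro z hz
    rcases Finset.mem_union.1 hz with hz | hz
    · exact hSsub z hz
    · obtain ⟨h1, h2⟩ := hZIoo z hz
      exact ⟨hac.trans h1, h2.trans hbd⟩
  have H : ∀ s ⊆ t, s.card = k + 1 →
      (∀ u ∈ s, ∀ v ∈ s, ∀ z ∈ t, u ≤ z → z ≤ v → z ∈ s) → 0 ≤ DD f s := by
    intro s hst hcard hwin
    by_cases hb : ∀ u ∈ s, u < b
    · -- s ⊆ Ioo a b
      refine DD_nonneg_of_Ioo k a b f h₁ s (fun z hz => ⟨(htIoo z (hst hz)).1, hb z hz⟩) hcard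
    · push_neg at hb
      obtain ⟨v, hv, hbv⟩ := hb
      -- claim: all elements of s are > c
      have hcs : ∀ u ∈ s, c < u := by
        intro u hu
        by_contra huc
        push_neg at huc
        -- then Z ∪ {u, v} ⊆ s, too many elements
        have hZs : Z ⊆ s := by
          intro z hz
          have hzc := hZIoo z hz
          exact hwin u hu v hv z (Finset.mem_union.2 (Or.inr hz))
            (le_of_lt (lt_of_le_of_lt huc hzc.1)) (le_of_lt (hzc.2.trans_le hbv))
        have huv : u ≠ v := ne_of_lt (lt_of_le_of_lt huc (lt_of_lt_of_le hcb hbv))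
        have huZ : u ∉ Z := fun h => absurd (hZIoo u h).1 (not_lt.2 huc)
        have hvZ : v ∉ Z := fun h => absurd (hZIoo v h).2 (not_lt.2 hbv)
        have hsub : insert u (insert v Z) ⊆ s := by
          intro z hz
          rcases Finset.mem_insert.1 hz with rfl | hz
          · exact hu
          rcases Finset.mem_insert.1 hz with rfl | hz
          · exact hv
          · exact hZs hz
        have hcard2 : (insert u (insert v Z)).card = k + 2 := by
          rw [Finset.card_insert_of_notMem (by simp [huv, huZ]),
            Finset.card_insert_of_notMem hvZ, hZcard]
        have := Finset.card_le_card hsub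
        omega
      refine DD_nonneg_of_Ioo k c d f h₂ s (fun z hz => ⟨hcs z hz, (htIoo z (hst hz)).2⟩) hcard
  exact DD_nonneg_of_windows f t k H S (Finset.subset_union_left) hScard
end

section
/- Let x₀ < x₁ < ... < xₖ be real numbers and let y₀ < y₁ < ... < yₙ be a refinement (a supersequence containing all the xᵢ). Then there exist nonnegative real numbers t₀, t₁, ..., t_{n-k} such that for every function f defined at all the yⱼ, [x₀, x₁, ..., xₖ]_f = Σ_{j=0}^{n-k} tⱼ·[yⱼ, y_{j+1}, ..., y_{j+k}]_f. -/
open Finset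

noncomputable def DDset (f : ℝ → ℝ) {m : ℕ} (z : Fin m → ℝ) (s : Finset (Fin m)) : ℝ :=
  ∑ i ∈ s, f (z i) / ∏ j ∈ s.erase i, (z i - z j)

lemma divDiff_eq_DDset (f : ℝ → ℝ) {m : ℕ} (z : Fin (m+1) → ℝ) (a : Fin (m+1)) :
    divDiff f (z ∘ a.succAbove) = DDset f z (Finset.univ.erase a) := by
  have hinj : Function.Injective a.succAbove := a.succAbove_right_injective
  have himg : (Finset.univ.image a.succAbove) = Finset.univ.erase a := by
    ext b
    simp only [mem_image, mem_univ, true_and, mem_erase, and_true]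
    exact Fin.exists_succAbove_eq_iff
  rw [DDset, ← himg, Finset.sum_image (fun i _ j _ h => hinj h)]
  refine Finset.sum_congr rfl fun i _ => ?_
  congr 1
  rw [← Finset.image_erase hinj, Finset.prod_image (fun i _ j _ h => hinj h)]
  rfl

lemma DDset_erase_sub (f : ℝ → ℝ) {m : ℕ} {z : Fin m → ℝ} (hz : Function.Injective z)
    {s : Finset (Fin m)} {a b : Fin m} (ha : a ∈ s) (hb : b ∈ s) :
    DDset f z (s.erase a) - DDset f z (s.erase b) = (z b - z a) * DDset f z s := by
  have key : ∀ c ∈ s, DDset f z (s.erase c) =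
      ∑ i ∈ s, f (z i) * (z i - z c) / ∏ j ∈ s.erase i, (z i - z j) := by
    intro c hc
    rw [DDset]
    rw [show (∑ i ∈ s.erase c, f (z i) / ∏ j ∈ (s.erase c).erase i, (z i - z j))
        = ∑ i ∈ s.erase c, f (z i) * (z i - z c) / ∏ j ∈ s.erase i, (z i - z j) from
      Finset.sum_congr rfl fun i hi => by
        have hic : i ≠ c := Finset.ne_of_mem_erase hi
        have hi' : i ∈ s := Finset.mem_of_mem_erase hi
        have hc' : c ∈ s.erase i := Finset.mem_erase.mpr ⟨fun h => hic h.symm, hc⟩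
        have hne : z i - z c ≠ 0 := sub_ne_zero.mpr (fun h => hic (hz h))
        rw [Finset.erase_right_comm, ← Finset.mul_prod_erase _ _ hc', mul_comm (f (z i)),
          mul_div_mul_left _ _ hne]]
    exact Finset.sum_erase s (by simp)
  rw [key a ha, key b hb, ← Finset.sum_sub_distrib, DDset, Finset.mul_sum]
  refine Finset.sum_congr rfl fun i hi => ?_
  rw [div_sub_div_same, ← mul_div_assoc]
  congr 1
  ring

lemma succAbove_val {m : ℕ} (r : Fin (m+1)) (i : Fin m) :
    (r.succAbove i).1 = if i.1 < r.1 then i.1 else i.1 + 1 := by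
  rcases lt_or_ge (Fin.castSucc i) r with h | h
  · rw [Fin.succAbove_of_castSucc_lt _ _ h]
    have : i.1 < r.1 := h
    simp [this]
  · rw [Fin.succAbove_of_le_castSucc _ _ h]
    have h' : r.1 ≤ i.1 := h
    simp [Fin.val_succ, Nat.not_lt.mpr h']

lemma divDiff_interior (f : ℝ → ℝ) {k : ℕ} {z : Fin (k+2) → ℝ} (hz : StrictMono z)
    (r : Fin (k+2)) :
    divDiff f (z ∘ r.succAbove) =
      (1 - (z (Fin.last (k+1)) - z r) / (z (Fin.last (k+1)) - z 0)) * divDiff f (z ∘ Fin.castSucc)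
      + (z (Fin.last (k+1)) - z r) / (z (Fin.last (k+1)) - z 0) * divDiff f (z ∘ Fin.succ) := by
  have hcast : z ∘ Fin.castSucc = z ∘ (Fin.last (k+1)).succAbove := by
    rw [Fin.succAbove_last]
  have hsucc : z ∘ Fin.succ = z ∘ (0 : Fin (k+2)).succAbove := by
    rw [Fin.succAbove_zero]
  rw [hcast, hsucc, divDiff_eq_DDset, divDiff_eq_DDset, divDiff_eq_DDset]
  have h1 := DDset_erase_sub f hz.injective (s := Finset.univ) (a := r)
    (b := Fin.last (k+1)) (mem_univ _) (mem_univ _)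
  have h2 := DDset_erase_sub f hz.injective (s := Finset.univ) (a := (0:Fin (k+2)))
    (b := Fin.last (k+1)) (mem_univ _) (mem_univ _)
  have hlt : z 0 < z (Fin.last (k+1)) := hz (by
    simp [Fin.lt_def, Fin.last])
  have hne : z (Fin.last (k+1)) - z 0 ≠ 0 := sub_ne_zero.mpr hlt.ne'
  have hmul : (z (Fin.last (k+1)) - z r) / (z (Fin.last (k+1)) - z 0)
      * (z (Fin.last (k+1)) - z 0) = z (Fin.last (k+1)) - z r := div_mul_cancel₀ _ hne
  linear_combination h1 - (z (Fin.last (k+1)) - z r) / (z (Fin.last (k+1)) - z 0) * h2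
    - DDset f z Finset.univ * hmul

lemma strictMono_range_subset_eq {k : ℕ} {x y : Fin (k+1) → ℝ} (hx : StrictMono x)
    (hy : StrictMono y) (hsub : Set.range x ⊆ Set.range y) : x = y := by
  set s : Finset ℝ := Finset.univ.image y with hs
  have hcard : s.card = k + 1 := by
    rw [hs, Finset.card_image_of_injective _ hy.injective, card_univ, Fintype.card_fin]
  have hxmem : ∀ i, x i ∈ s := fun i => by
    obtain ⟨m, hm⟩ := hsub ⟨i, rfl⟩
    simp [hs, ← hm]
  have hymem : ∀ i, y i ∈ s := fun i => by simp [hs]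
  rw [Finset.orderEmbOfFin_unique hcard hxmem hx, Finset.orderEmbOfFin_unique hcard hymem hy]

set_option maxHeartbeats 4000000 in
theorem divDiff_refinement {k n : ℕ} (hkn : k ≤ n)
    (x : Fin (k + 1) → ℝ) (y : Fin (n + 1) → ℝ)
    (hx : StrictMono x) (hy : StrictMono y) (hsub : Set.range x ⊆ Set.range y) :
    ∃ t : Fin (n - k + 1) → ℝ, (∀ j, 0 ≤ t j) ∧
      ∀ f : ℝ → ℝ, divDiff f x =
        ∑ j, t j * divDiff f
          (fun i : Fin (k + 1) => y ⟨j.1 + i.1, by have := j.2; have := i.2; omega⟩) := by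
  induction n, hkn using Nat.le_induction with
  | base =>
    refine ⟨fun _ => 1, fun _ => zero_le_one, fun f => ?_⟩
    have hxy : x = y := strictMono_range_subset_eq hx hy hsub
    rw [Finset.sum_eq_single (⟨0, by omega⟩ : Fin (k - k + 1))]
    · rw [one_mul, hxy]
      congr 1
      funext i
      congr 1
      exact Fin.ext (Nat.zero_add _).symm
    · intro b _ hb
      exact absurd (Fin.ext (by omega)) hb
    · intro h; exact absurd (mem_univ _) h
  | succ n hkn IH =>
    have hchoose : ∀ i, ∃ m, y m = x i := fun i => hsub ⟨i, rfl⟩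
    choose g hg using hchoose
    have hginj : Function.Injective g := fun i j h => hx.injective (by rw [← hg, ← hg, h])
    have hns : ¬ Function.Surjective g := by
      intro h
      have := Fintype.card_le_of_surjective g h
      simp at this
      omega
    simp only [Function.Surjective, not_forall, not_exists] at hns
    obtain ⟨r, hr⟩ := hns
    have hy' : StrictMono (y ∘ r.succAbove) := hy.comp (Fin.strictMono_succAbove r)
    have hsub' : Set.range x ⊆ Set.range (y ∘ r.succAbove) := by
      rintro _ ⟨i, rfl⟩
      obtain ⟨m, hm⟩ := Fin.exists_succAbove_eq (hr i)
      exact ⟨m, by simp only [Function.comp_apply, hm, hg]⟩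
    obtain ⟨t', ht'0, ht'⟩ := IH (y ∘ r.succAbove) hy' hsub'
    set lam : Fin (n - k + 1) → ℝ := fun j =>
      (y ⟨j.1 + k + 1, by have := j.2; omega⟩ - y r) /
      (y ⟨j.1 + k + 1, by have := j.2; omega⟩ - y ⟨j.1, by have := j.2; omega⟩) with hlamdef
    have hlam01 : ∀ j : Fin (n - k + 1), j.1 < r.1 → r.1 < j.1 + k + 1 →
        0 ≤ lam j ∧ lam j ≤ 1 := by
      intro j hj1 hj2
      have h1 : y r < y ⟨j.1 + k + 1, by have := j.2; omega⟩ := hy (by simp [Fin.lt_def]; omega)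
      have h2 : y ⟨j.1, by have := j.2; omega⟩ < y r := hy (by simp [Fin.lt_def]; omega)
      constructor
      · apply div_nonneg (by linarith) (by linarith)
      · rw [div_le_one (by linarith)]
        linarith
    set c : Fin (n - k + 1) → Fin (n + 1 - k + 1) → ℝ := fun j m =>
      if j.1 + k + 1 ≤ r.1 then (if m.1 = j.1 then 1 else 0)
      else if r.1 ≤ j.1 then (if m.1 = j.1 + 1 then 1 else 0)
      else (if m.1 = j.1 then 1 - lam j else if m.1 = j.1 + 1 then lam j else 0) with hcdef
    have hc0 : ∀ j m, 0 ≤ c j m := by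
      intro j m
      rw [hcdef]
      dsimp only
      split_ifs with h1 h2 h3 h4 h5
      any_goals norm_num
      · have := hlam01 j (by omega) (by omega)
        linarith
      · exact (hlam01 j (by omega) (by omega)).1
    refine ⟨fun m => ∑ j, t' j * c j m,
      fun m => Finset.sum_nonneg fun j _ => mul_nonneg (ht'0 j) (hc0 j m), fun f => ?_⟩
    have hwin : ∀ j : Fin (n - k + 1),
        divDiff f (fun i : Fin (k + 1) =>
          (y ∘ r.succAbove) ⟨j.1 + i.1, by have := j.2; have := i.2; omega⟩) =
        ∑ m : Fin (n + 1 - k + 1), c j m * divDiff f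
          (fun i : Fin (k + 1) => y ⟨m.1 + i.1, by have := m.2; have := i.2; omega⟩) := by
      intro j
      have hj2 := j.2
      rcases lt_trichotomy (j.1 + k) r.1 with hA | hAB
      · -- case A : j + k < r
        rw [Finset.sum_eq_single (⟨j.1, by omega⟩ : Fin (n + 1 - k + 1))]
        · rw [hcdef]
          dsimp only
          rw [if_pos (by omega), if_pos rfl, one_mul]
          congr 1
          funext i
          simp only [Function.comp_apply]
          congr 1
          apply Fin.ext
          rw [succAbove_val]
          simp only [Fin.val_mk]
          have := i.2
          rw [if_pos (by omega : j.1 + i.1 < r.1)]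
        · intro m _ hm
          rw [hcdef]
          dsimp only
          rw [if_pos (by omega), if_neg (fun h => hm (Fin.ext h)), zero_mul]
        · intro h; exact absurd (mem_univ _) h
      rcases lt_trichotomy r.1 (j.1 + 1) with hB | hC
      · -- case B : r ≤ j
        rw [Finset.sum_eq_single (⟨j.1 + 1, by omega⟩ : Fin (n + 1 - k + 1))]
        · rw [hcdef]
          dsimp only
          rw [if_neg (by omega), if_pos (by omega), if_pos rfl, one_mul]
          congr 1
          funext i
          simp only [Function.comp_apply]
          congr 1
          apply Fin.ext
          rw [succAbove_val]
          simp only [Fin.val_mk]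
          have := i.2
          rw [if_neg (by omega)]
          omega
        · intro m _ hm
          rw [hcdef]
          dsimp only
          rw [if_neg (by omega), if_pos (by omega), if_neg (fun h => hm (Fin.ext h)), zero_mul]
        · intro h; exact absurd (mem_univ _) h
      · -- case C : j < r < j + k + 1
        have hjr : j.1 + 1 ≤ r.1 := by omega
        have hrjk : r.1 ≤ j.1 + k := by omega
        have hz : StrictMono (fun i : Fin (k + 2) => y ⟨j.1 + i.1, by have := i.2; omega⟩) := by
          intro a b hab
          apply hy
          simp only [Fin.mk_lt_mk]
          have : a.1 < b.1 := hab
          omega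
        have hkey := divDiff_interior f hz ⟨r.1 - j.1, by omega⟩
        have e1 : (fun i : Fin (k + 2) => y ⟨j.1 + i.1, by have := i.2; omega⟩) ∘
            (⟨r.1 - j.1, by omega⟩ : Fin (k + 2)).succAbove =
            (fun i : Fin (k + 1) =>
              (y ∘ r.succAbove) ⟨j.1 + i.1, by have := i.2; omega⟩) := by
          funext i
          simp only [Function.comp_apply]
          refine congrArg y (Fin.ext ?_)
          simp only [Fin.val_mk]
          rw [succAbove_val, succAbove_val]
          simp only [Fin.val_mk]
          have := i.2
          split_ifs <;> omega
        have e2 : (fun i : Fin (k + 2) => y ⟨j.1 + i.1, by have := i.2; omega⟩) ∘ Fin.castSucc =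
            (fun i : Fin (k + 1) => y ⟨j.1 + i.1, by have := i.2; omega⟩) := by
          funext i
          simp only [Function.comp_apply]
          refine congrArg y (Fin.ext ?_)
          simp only [Fin.val_mk, Fin.coe_castSucc]
        have e3 : (fun i : Fin (k + 2) => y ⟨j.1 + i.1, by have := i.2; omega⟩) ∘ Fin.succ =
            (fun i : Fin (k + 1) => y ⟨j.1 + 1 + i.1, by have := i.2; omega⟩) := by
          funext i
          simp only [Function.comp_apply]
          refine congrArg y (Fin.ext ?_)
          simp only [Fin.val_mk, Fin.val_succ]
          omega
        have e4 : y ⟨j.1 + (Fin.last (k + 1)).1, by have := j.2; simp only [Fin.val_last]; omega⟩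
            = y ⟨j.1 + k + 1, by have := j.2; omega⟩ := by
          refine congrArg y (Fin.ext ?_)
          simp only [Fin.val_mk, Fin.val_last]
          omega
        have e5 : y ⟨j.1 + ((0 : Fin (k + 2))).1, by have := j.2; simp only [Fin.val_zero]; omega⟩
            = y ⟨j.1, by have := j.2; omega⟩ := by
          refine congrArg y (Fin.ext ?_)
          simp only [Fin.val_mk, Fin.val_zero]
          omega
        have e6 : y ⟨j.1 + ((⟨r.1 - j.1, by omega⟩ : Fin (k + 2))).1,
              by simp only [Fin.val_mk]; omega⟩ = y r := by
          refine congrArg y (Fin.ext ?_)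
          simp only [Fin.val_mk]
          omega
        rw [e1, e2, e3, e4, e5, e6] at hkey
        rw [hkey]
        -- now evaluate the sum
        have hsplit : ∀ m : Fin (n + 1 - k + 1), c j m =
            (if m.1 = j.1 then 1 - lam j else 0) + (if m.1 = j.1 + 1 then lam j else 0) := by
          intro m
          rw [hcdef]
          dsimp only
          rw [if_neg (by omega), if_neg (by omega)]
          split_ifs <;> first | omega | ring
        rw [Finset.sum_congr rfl fun m _ => by rw [hsplit m, add_mul]]
        rw [Finset.sum_add_distrib]
        congr 1
        · rw [Finset.sum_eq_single (⟨j.1, by omega⟩ : Fin (n + 1 - k + 1))]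
          · rw [if_pos rfl]
          · intro m _ hm
            rw [if_neg (fun h => hm (Fin.ext h)), zero_mul]
          · intro h; exact absurd (mem_univ _) h
        · rw [Finset.sum_eq_single (⟨j.1 + 1, by omega⟩ : Fin (n + 1 - k + 1))]
          · rw [if_pos rfl]
          · intro m _ hm
            rw [if_neg (fun h => hm (Fin.ext h)), zero_mul]
          · intro h; exact absurd (mem_univ _) h
    rw [ht' f]
    rw [Finset.sum_congr rfl (fun j _ => by rw [hwin j, Finset.mul_sum])]
    rw [Finset.sum_comm]
    refine Finset.sum_congr rfl fun m _ => ?_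
    rw [Finset.sum_mul]
    exact Finset.sum_congr rfl fun j _ => (mul_assoc _ _ _).symm
end

section
/- Let f ∈ C¹(a,b) and a < x₀ < x₁ < ... < x_{2n-1} < b. Then there exist points a < y₁ < y₂ < ... < yₙ < b such that [x₀, x₁, ..., x_{2n-1}]_f = [y₁, y₁, y₂, y₂, ..., yₙ, yₙ]_f, where repeated arguments in the divided difference are interpreted via the continuous extension (e.g. [y, y]_f = f'(y)). -/
open Finset

/-- The divided difference `[y₁, y₁, y₂, y₂, …, yₘ, yₘ]_f` (each node doubled), given by the
confluent (Hermite) formula: the sum of residues of `f(z)/∏ᵢ(z - yᵢ)²` at the double poles,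
which only requires `f` to be differentiable at the nodes. -/
noncomputable def divDiffDoubled (f : ℝ → ℝ) {m : ℕ} (y : Fin m → ℝ) : ℝ :=
  ∑ i, deriv (fun t => f t / ∏ j ∈ Finset.univ.erase i, (t - y j) ^ 2) (y i)

namespace DDAux

open Polynomial

noncomputable def P {m : ℕ} (y : Fin m → ℝ) (i : Fin m) : ℝ :=
  ∏ j ∈ Finset.univ.erase i, (y i - y j) ^ 2

noncomputable def Pd {m : ℕ} (y : Fin m → ℝ) (i : Fin m) : ℝ :=
  ∑ k ∈ Finset.univ.erase i, (∏ j ∈ (Finset.univ.erase i).erase k, (y i - y j) ^ 2) * (2 * (y i - y k))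

lemma P_pos {m : ℕ} {y : Fin m → ℝ} (hy : Function.Injective y) (i : Fin m) :
    0 < P y i := by
  refine Finset.prod_pos fun j hj => ?_
  have : y i ≠ y j := fun h => (Finset.mem_erase.1 hj).1 (hy h).symm
  exact sq_pos_of_ne_zero (sub_ne_zero.2 this)

lemma P_ne_zero {m : ℕ} {y : Fin m → ℝ} (hy : Function.Injective y) (i : Fin m) :
    P y i ≠ 0 := ne_of_gt (P_pos hy i)

lemma hasDerivAt_prod {m : ℕ} (y : Fin m → ℝ) (i : Fin m) (t : ℝ) :
    HasDerivAt (fun t => ∏ j ∈ Finset.univ.erase i, (t - y j) ^ 2)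
      (∑ k ∈ Finset.univ.erase i, (∏ j ∈ (Finset.univ.erase i).erase k, (t - y j) ^ 2)
        * (2 * (t - y k))) t := by
  have h : ∀ j ∈ Finset.univ.erase i, HasDerivAt (fun t => (t - y j) ^ 2) (2 * (t - y j)) t := by
    intro j _
    have := ((hasDerivAt_id t).sub_const (y j)).pow 2
    simpa [mul_comm, Pi.pow_def] using this
  simpa [smul_eq_mul] using HasDerivAt.fun_finsetProd h

lemma doubled_term_eq {m : ℕ} (f : ℝ → ℝ) {y : Fin m → ℝ} (hy : Function.Injective y) (i : Fin m)
    (hd : DifferentiableAt ℝ f (y i)) :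
    deriv (fun t => f t / ∏ j ∈ Finset.univ.erase i, (t - y j) ^ 2) (y i)
    = (deriv f (y i) * P y i - f (y i) * Pd y i) / (P y i) ^ 2 := by
  have := (hd.hasDerivAt.fun_div (hasDerivAt_prod y i (y i)) (P_ne_zero hy i)).deriv
  simpa [P, Pd] using this

lemma divDiffDoubled_eq {m : ℕ} (f : ℝ → ℝ) {y : Fin m → ℝ} (hy : Function.Injective y)
    (hd : ∀ i, DifferentiableAt ℝ f (y i)) :
    divDiffDoubled f y = ∑ i, (deriv f (y i) * P y i - f (y i) * Pd y i) / (P y i) ^ 2 := by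
  unfold divDiffDoubled
  exact Finset.sum_congr rfl fun i _ => doubled_term_eq f hy i (hd i)

lemma cc_lt {lam p q r s : ℝ} (h0 : 0 ≤ lam) (h1 : lam ≤ 1) (hpq : p < q) (hrs : r < s) :
    (1 - lam) * p + lam * r < (1 - lam) * q + lam * s := by
  rcases eq_or_lt_of_le h0 with h | h
  · rw [← h]; simpa using hpq
  · nlinarith [mul_nonneg (by linarith : (0:ℝ) ≤ 1 - lam) (by linarith : (0:ℝ) ≤ q - p),
      mul_pos h (by linarith : (0:ℝ) < s - r)]


lemma divDiff_poly {m : ℕ} (hm : 0 < m) (x : Fin m → ℝ) (hx : Function.Injective x)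
    (q : Polynomial ℝ) (hq : q.degree < m) :
    divDiff (fun t => q.eval t) x = q.coeff (m - 1) := by
  classical
  set N : Fin m → Polynomial ℝ := fun i => ∏ j ∈ Finset.univ.erase i, (X - C (x j)) with hN
  have hNmonic : ∀ i, (N i).Monic := fun i => monic_prod_of_monic _ _ fun j _ => monic_X_sub_C _
  have hNdeg : ∀ i, (N i).natDegree = m - 1 := by
    intro i
    rw [hN]
    rw [natDegree_prod _ _ (fun j _ => X_sub_C_ne_zero _)]
    simp [natDegree_X_sub_C, Finset.card_erase_of_mem]
  have hNeval : ∀ i t, (N i).eval t = ∏ j ∈ Finset.univ.erase i, (t - x j) := by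
    intro i t; rw [hN]; simp [eval_prod]
  have hNne : ∀ i, (N i).eval (x i) ≠ 0 := by
    intro i
    rw [hNeval]
    exact Finset.prod_ne_zero_iff.2 fun j hj =>
      sub_ne_zero.2 fun h => (Finset.mem_erase.1 hj).1 (hx h).symm
  set H : Polynomial ℝ := ∑ i, C (q.eval (x i) / (N i).eval (x i)) * N i with hH
  have hdegN : ∀ i, (N i).degree = ((m - 1 : ℕ) : WithBot ℕ) := by
    intro i; rw [degree_eq_natDegree (hNmonic i).ne_zero, hNdeg i]
  have hHdeg : H.degree < (m : ℕ) := by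
    refine lt_of_le_of_lt (degree_sum_le _ _) ?_
    refine (Finset.sup_lt_iff (by exact_mod_cast WithBot.bot_lt_coe m)).2 fun i _ => ?_
    rw [← smul_eq_C_mul]
    refine lt_of_le_of_lt (degree_smul_le _ _) ?_
    rw [hdegN i]
    exact_mod_cast Nat.sub_lt hm one_pos
  have heval : ∀ i, H.eval (x i) = q.eval (x i) := by
    intro i
    rw [hH, eval_finset_sum]
    rw [Finset.sum_eq_single i]
    · rw [eval_mul, eval_C, div_mul_cancel₀ _ (hNne i)]
    · intro k _ hk
      have h0 : (N k).eval (x i) = 0 := by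
        rw [hNeval k]
        exact Finset.prod_eq_zero (Finset.mem_erase.2 ⟨hk.symm, Finset.mem_univ i⟩) (by ring)
      rw [eval_mul, h0, mul_zero]
    · simp
  have hqH : q = H := by
    refine Polynomial.eq_of_degrees_lt_of_eval_index_eq (v := x) Finset.univ
      (Set.injOn_of_injective hx) ?_ ?_ fun i _ => (heval i).symm
    · simpa using hq
    · simpa using hHdeg
  have h1 : q.coeff (m - 1) = H.coeff (m - 1) := by rw [hqH]
  have h2 : H.coeff (m - 1) = ∑ i, q.eval (x i) / (N i).eval (x i) := by
    rw [hH, finset_sum_coeff]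
    refine Finset.sum_congr rfl fun i _ => ?_
    rw [coeff_C_mul]
    have h3 : (N i).coeff (m - 1) = 1 := by
      have := (hNmonic i).coeff_natDegree
      rwa [hNdeg i] at this
    rw [h3, mul_one]
  rw [h1, h2]
  unfold divDiff
  exact Finset.sum_congr rfl fun i _ => by rw [hNeval]


lemma divDiffDoubled_poly {n : ℕ} (hn : 0 < n) (y : Fin n → ℝ) (hy : Function.Injective y)
    (q : Polynomial ℝ) (hq : q.degree < (2 * n : ℕ)) :
    divDiffDoubled (fun t => q.eval t) y = q.coeff (2 * n - 1) := by
  classical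
  set Q : Fin n → Polynomial ℝ := fun i => ∏ j ∈ Finset.univ.erase i, (X - C (y j)) ^ 2 with hQ
  have hQmonic : ∀ i, (Q i).Monic :=
    fun i => monic_prod_of_monic _ _ fun j _ => (monic_X_sub_C _).pow 2
  have hQdeg : ∀ i, (Q i).natDegree = 2 * n - 2 := by
    intro i
    rw [hQ, natDegree_prod _ _ (fun j _ => pow_ne_zero 2 (X_sub_C_ne_zero _))]
    simp only [natDegree_pow, natDegree_X_sub_C, mul_one]
    rw [Finset.sum_const, Finset.card_erase_of_mem (Finset.mem_univ i), Finset.card_univ,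
      Fintype.card_fin, smul_eq_mul]
    omega
  have hQeval : ∀ i t, (Q i).eval t = ∏ j ∈ Finset.univ.erase i, (t - y j) ^ 2 := by
    intro i t; rw [hQ]; simp [eval_prod]
  have hQne : ∀ i, (Q i).eval (y i) ≠ 0 := by
    intro i
    rw [hQeval]
    exact Finset.prod_ne_zero_iff.2 fun j hj =>
      pow_ne_zero 2 (sub_ne_zero.2 fun h => (Finset.mem_erase.1 hj).1 (hy h).symm)
  -- off-diagonal vanishing of Q and its derivative
  have hQzero : ∀ i k : Fin n, i ≠ k → (Q i).eval (y k) = 0 := by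
    intro i k hik
    rw [hQeval]
    exact Finset.prod_eq_zero (Finset.mem_erase.2 ⟨Ne.symm hik, Finset.mem_univ k⟩) (by ring)
  have hQdzero : ∀ i k : Fin n, i ≠ k → (Q i).derivative.eval (y k) = 0 := by
    intro i k hik
    have hsplit : Q i = (X - C (y k)) ^ 2 *
        ∏ j ∈ (Finset.univ.erase i).erase k, (X - C (y j)) ^ 2 := by
      rw [hQ]
      exact (Finset.mul_prod_erase _ _ (Finset.mem_erase.2 ⟨Ne.symm hik, Finset.mem_univ k⟩)).symm
    rw [hsplit, derivative_mul, eval_add, eval_mul, eval_mul, derivative_pow]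
    simp
  set a : Fin n → ℝ :=
    fun i => deriv (fun t => q.eval t / ∏ j ∈ Finset.univ.erase i, (t - y j) ^ 2) (y i) with ha
  set b : Fin n → ℝ := fun i => q.eval (y i) / (Q i).eval (y i) with hb
  -- formula for a
  have haf : ∀ i, a i = (q.derivative.eval (y i) * (Q i).eval (y i)
      - q.eval (y i) * (Q i).derivative.eval (y i)) / ((Q i).eval (y i)) ^ 2 := by
    intro i
    have hfe : (fun t => q.eval t / ∏ j ∈ Finset.univ.erase i, (t - y j) ^ 2)
        = fun t => q.eval t / (Q i).eval t := by
      funext t; rw [hQeval]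
    show deriv (fun t => q.eval t / ∏ j ∈ Finset.univ.erase i, (t - y j) ^ 2) (y i) = _
    rw [hfe]
    exact ((q.hasDerivAt (y i)).div ((Q i).hasDerivAt (y i)) (hQne i)).deriv
  set H : Polynomial ℝ := ∑ i, (C (a i) * (X - C (y i)) + C (b i)) * Q i with hH
  set r : Polynomial ℝ := q - H with hr
  have hr1 : ∀ k, r.eval (y k) = 0 := by
    intro k
    rw [hr, eval_sub, hH, eval_finset_sum, Finset.sum_eq_single k]
    · have hkey : (a k * (y k - y k) + b k) * (Q k).eval (y k) = q.eval (y k) := by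
        rw [sub_self, mul_zero, zero_add, hb, div_mul_cancel₀ _ (hQne k)]
      rw [eval_mul, eval_add, eval_mul, eval_C, eval_sub, eval_X, eval_C, eval_C, hkey, sub_self]
    · intro i _ hik
      rw [eval_mul, hQzero i k hik, mul_zero]
    · simp
  have hr2 : ∀ k, r.derivative.eval (y k) = 0 := by
    intro k
    rw [hr, derivative_sub, eval_sub, hH, derivative_sum, eval_finset_sum,
      Finset.sum_eq_single k]
    · rw [derivative_mul]
      have hd1 : (C (a k) * (X - C (y k)) + C (b k)).derivative = C (a k) := by
        simp [derivative_mul]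
      rw [hd1, eval_add, eval_mul, eval_mul, eval_add, eval_mul, eval_C, eval_sub, eval_X,
        eval_C, eval_C, sub_self, mul_zero, zero_add, haf k, hb]
      have hQk := hQne k
      field_simp
      ring
    · intro i _ hik
      rw [derivative_mul, eval_add, eval_mul, eval_mul, hQzero i k hik, hQdzero i k hik,
        mul_zero, mul_zero, add_zero]
    · simp
  -- (X - C (y k))^2 divides r
  have hdvd2 : ∀ k, (X - C (y k)) ^ 2 ∣ r := by
    intro k
    obtain ⟨s, hs⟩ := dvd_iff_isRoot.2 (hr1 k)
    have hs' : s.eval (y k) = 0 := by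
      have := hr2 k
      rw [hs, derivative_mul, derivative_sub, derivative_X, derivative_C, sub_zero, one_mul,
        eval_add, eval_mul] at this
      simpa using this
    obtain ⟨u, hu⟩ := dvd_iff_isRoot.2 hs'
    exact ⟨u, by rw [hs, hu]; ring⟩
  have hWdvd : (∏ i, (X - C (y i)) ^ 2) ∣ r := by
    refine Finset.prod_dvd_of_coprime ?_ fun i _ => hdvd2 i
    intro i _ j _ hij
    exact ((Polynomial.pairwise_coprime_X_sub_C hy hij).pow (m := 2) (n := 2))
  have hWdeg : (∏ i : Fin n, (X - C (y i)) ^ 2).degree = ((2 * n : ℕ) : WithBot ℕ) := by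
    have hm : (∏ i : Fin n, (X - C (y i)) ^ 2).Monic :=
      monic_prod_of_monic _ _ fun j _ => (monic_X_sub_C _).pow 2
    rw [degree_eq_natDegree hm.ne_zero,
      natDegree_prod _ _ (fun j _ => pow_ne_zero 2 (X_sub_C_ne_zero _))]
    simp only [natDegree_pow, natDegree_X_sub_C, mul_one, Finset.sum_const,
      Finset.card_univ, Fintype.card_fin, smul_eq_mul]
    exact congrArg _ (by omega)
  have hHdeg : H.degree < (2 * n : ℕ) := by
    rw [hH]
    refine lt_of_le_of_lt (degree_sum_le _ _) ?_
    refine (Finset.sup_lt_iff (by exact_mod_cast WithBot.bot_lt_coe (2 * n))).2 fun i _ => ?_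
    refine lt_of_le_of_lt (degree_mul_le _ _) ?_
    have h1 : (C (a i) * (X - C (y i)) + C (b i)).degree ≤ 1 := by
      refine le_trans (degree_add_le _ _) ?_
      simp only [sup_le_iff]
      constructor
      · exact le_trans (degree_mul_le _ _)
          (by rw [degree_X_sub_C]; exact add_le_of_nonpos_left (degree_C_le))
      · exact le_trans degree_C_le (by norm_num)
    have h2 : (Q i).degree ≤ ((2 * n - 2 : ℕ) : WithBot ℕ) :=
      le_of_eq (by rw [degree_eq_natDegree (hQmonic i).ne_zero, hQdeg i])
    refine lt_of_le_of_lt (add_le_add h1 h2) ?_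
    have : ((1 : ℕ) : WithBot ℕ) + ((2 * n - 2 : ℕ) : WithBot ℕ) = ((2 * n - 1 : ℕ) : WithBot ℕ) := by
      rw [← Nat.cast_add]
      congr 1
      omega
    rw [show (1 : WithBot ℕ) = ((1 : ℕ) : WithBot ℕ) from rfl, this]
    exact_mod_cast Nat.sub_lt (by omega) one_pos
  have hrzero : r = 0 := by
    refine eq_zero_of_dvd_of_degree_lt hWdvd ?_
    rw [hWdeg, hr]
    calc (q - H).degree ≤ max q.degree H.degree := degree_sub_le _ _
      _ < (2 * n : ℕ) := max_lt hq hHdeg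
  have hqH : q = H := by rwa [hr, sub_eq_zero] at hrzero
  -- coefficient extraction
  have hcoeff : q.coeff (2 * n - 1) = ∑ i, a i := by
    conv_lhs => rw [hqH]
    rw [hH, finset_sum_coeff]
    refine Finset.sum_congr rfl fun i _ => ?_
    have hsplit : (C (a i) * (X - C (y i)) + C (b i)) * Q i
        = C (a i) * ((X - C (y i)) * Q i) + C (b i) * Q i := by ring
    rw [hsplit, coeff_add, coeff_C_mul, coeff_C_mul]
    have hmon : ((X - C (y i)) * Q i).Monic := (monic_X_sub_C _).mul (hQmonic i)
    have hdeg : ((X - C (y i)) * Q i).natDegree = 2 * n - 1 := by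
      rw [(monic_X_sub_C _).natDegree_mul (hQmonic i), natDegree_X_sub_C, hQdeg i]
      omega
    have h1 : ((X - C (y i)) * Q i).coeff (2 * n - 1) = 1 := by
      have := hmon.coeff_natDegree
      rwa [hdeg] at this
    have h2 : (Q i).coeff (2 * n - 1) = 0 := by
      refine coeff_eq_zero_of_natDegree_lt ?_
      rw [hQdeg i]
      omega
    rw [h1, h2, mul_one, mul_zero, add_zero]
  rw [hcoeff]
  rfl


/-- If a differentiable function vanishes at `u < v`, there is a zero in `[u,v]`
where the derivative is nonnegative. -/
lemma exists_zero_deriv_nonneg {g : ℝ → ℝ} {s : Set ℝ} (hs : IsOpen s)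
    (hg : DifferentiableOn ℝ g s) {u v : ℝ} (huv : u < v) (hsub : Set.Icc u v ⊆ s)
    (hu : g u = 0) (hv : g v = 0) :
    ∃ w ∈ Set.Icc u v, g w = 0 ∧ 0 ≤ deriv g w := by
  by_contra hcon
  push_neg at hcon
  have hdiff : ∀ w ∈ Set.Icc u v, DifferentiableAt ℝ g w := fun w hw =>
    hg.differentiableAt (hs.mem_nhds (hsub hw))
  have hcont : ContinuousOn g (Set.Icc u v) := fun w hw => (hdiff w hw).continuousAt.continuousWithinAt
  have hderiv_neg : ∀ w ∈ Set.Icc u v, g w = 0 → deriv g w < 0 := hcon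
  -- step 1 : find u' ∈ Ioo u v with g u' < 0
  have hslope_u : Filter.Tendsto (slope g u) (nhdsWithin u {u}ᶜ) (nhds (deriv g u)) :=
    hasDerivAt_iff_tendsto_slope.1 (hdiff u (Set.left_mem_Icc.2 huv.le)).hasDerivAt
  have hderiv_u : deriv g u < 0 := hderiv_neg u (Set.left_mem_Icc.2 huv.le) hu
  have hev1 : ∀ᶠ t in nhdsWithin u (Set.Ioi u), slope g u t < 0 := by
    refine Filter.Eventually.filter_mono (nhdsWithin_mono u ?_) (hslope_u.eventually (Iio_mem_nhds hderiv_u))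
    intro t ht
    exact ne_of_gt ht
  have hev2 : ∀ᶠ t in nhdsWithin u (Set.Ioi u), t ∈ Set.Ioo u v :=
    Filter.eventually_of_mem (Ioo_mem_nhdsGT huv) fun t ht => ht
  obtain ⟨u', hu'slope, hu'mem⟩ := (hev1.and hev2).exists
  have hgu' : g u' < 0 := by
    rw [slope_def_field, hu, sub_zero] at hu'slope
    rcases div_neg_iff.1 hu'slope with ⟨_, h2⟩ | ⟨h1, _⟩
    · linarith [sub_pos.2 hu'mem.1]
    · exact h1
  -- step 2 : w = inf of zeros in [u', v]
  set S : Set ℝ := {t ∈ Set.Icc u' v | g t = 0} with hS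
  have hSne : S.Nonempty := ⟨v, ⟨Set.right_mem_Icc.2 hu'mem.2.le, hv⟩⟩
  have hSbdd : BddBelow S := ⟨u', fun t ht => ht.1.1⟩
  have hIccsub : Set.Icc u' v ⊆ Set.Icc u v := Set.Icc_subset_Icc hu'mem.1.le le_rfl
  have hSclosed : IsClosed S := by
    refine (hcont.mono hIccsub).preimage_isClosed_of_isClosed isClosed_Icc isClosed_singleton
  set w := sInf S with hw
  have hwS : w ∈ S := hSclosed.csInf_mem hSne hSbdd
  have hgw : g w = 0 := hwS.2
  have hwmem : w ∈ Set.Icc u' v := hwS.1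
  have hu'w : u' < w := lt_of_le_of_ne hwmem.1 fun h => ne_of_lt hgu' (h ▸ hgw)
  -- step 3 : g < 0 on [u', w)
  have hneg : ∀ t ∈ Set.Ico u' w, g t < 0 := by
    intro t ht
    by_contra hge
    push_neg at hge
    rcases lt_or_eq_of_le hge with hpos | heq
    · obtain ⟨z, hz1, hz2⟩ := intermediate_value_Icc ht.1
        (hcont.mono (Set.Icc_subset_Icc hu'mem.1.le (ht.2.le.trans hwmem.2)))
        (Set.mem_Icc.2 ⟨hgu'.le, hpos.le⟩)
      have hzS : z ∈ S := ⟨⟨hz1.1, hz1.2.trans (ht.2.le.trans hwmem.2)⟩, hz2⟩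
      exact absurd (csInf_le hSbdd hzS) (not_le.2 (lt_of_le_of_lt hz1.2 ht.2))
    · have htS : t ∈ S := ⟨⟨ht.1, ht.2.le.trans hwmem.2⟩, heq.symm⟩
      exact absurd (csInf_le hSbdd htS) (not_le.2 ht.2)
  -- step 4 : derivative at w negative gives positive values on the left, contradiction
  have hwIcc : w ∈ Set.Icc u v := hIccsub hwmem
  have hderiv_w : deriv g w < 0 := hderiv_neg w hwIcc hgw
  have hslope_w : Filter.Tendsto (slope g w) (nhdsWithin w {w}ᶜ) (nhds (deriv g w)) :=
    hasDerivAt_iff_tendsto_slope.1 (hdiff w hwIcc).hasDerivAt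
  have hev3 : ∀ᶠ t in nhdsWithin w (Set.Iio w), slope g w t < 0 := by
    refine Filter.Eventually.filter_mono (nhdsWithin_mono w ?_) (hslope_w.eventually (Iio_mem_nhds hderiv_w))
    intro t ht
    exact ne_of_lt ht
  have hev4 : ∀ᶠ t in nhdsWithin w (Set.Iio w), t ∈ Set.Ioo u' w :=
    Filter.eventually_of_mem (Ioo_mem_nhdsLT hu'w) fun t ht => ht
  have hne : (nhdsWithin w (Set.Iio w)).NeBot := nhdsWithin_Iio_self_neBot' ⟨u', hu'w⟩
  obtain ⟨t, htslope, htmem⟩ := (hev3.and hev4).exists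
  have : 0 < g t := by
    rw [slope_def_field, hgw, sub_zero] at htslope
    rcases div_neg_iff.1 htslope with ⟨h1, _⟩ | ⟨_, h3⟩
    · exact h1
    · linarith [sub_neg.2 htmem.2]
  exact absurd this (not_lt.2 (hneg t ⟨htmem.1.le, htmem.2⟩).le)


lemma exists_zero_deriv_nonpos {g : ℝ → ℝ} {s : Set ℝ} (hs : IsOpen s)
    (hg : DifferentiableOn ℝ g s) {u v : ℝ} (huv : u < v) (hsub : Set.Icc u v ⊆ s)
    (hu : g u = 0) (hv : g v = 0) :
    ∃ w ∈ Set.Icc u v, g w = 0 ∧ deriv g w ≤ 0 := by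
  obtain ⟨w, hw1, hw2, hw3⟩ := exists_zero_deriv_nonneg hs hg.neg huv hsub
    (by simp [hu]) (by simp [hv])
  refine ⟨w, hw1, by simpa using hw2, ?_⟩
  have hD : deriv (fun t => -g t) w = -deriv g w := deriv.neg
  rw [show (-g) = fun t => -g t from rfl, hD] at hw3
  linarith

end DDAux

theorem divDiff_eq_doubled_nodes {n : ℕ} (hn : 0 < n) (a b : ℝ) (f : ℝ → ℝ)
    (hf : ContDiffOn ℝ 1 f (Set.Ioo a b))
    (x : Fin (2 * n) → ℝ) (hx : StrictMono x) (hmem : ∀ i, x i ∈ Set.Ioo a b) :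
    ∃ y : Fin n → ℝ, StrictMono y ∧ (∀ i, y i ∈ Set.Ioo a b) ∧
      divDiff f x = divDiffDoubled f y := by
  classical
  have hm : 0 < 2 * n := by omega
  have hxinj : Function.Injective x := hx.injective
  have hopen : IsOpen (Set.Ioo a b) := isOpen_Ioo
  have hfd : DifferentiableOn ℝ f (Set.Ioo a b) := hf.differentiableOn (by norm_num)
  have hfc : ContinuousOn f (Set.Ioo a b) := hf.continuousOn
  have hfc' : ContinuousOn (deriv f) (Set.Ioo a b) :=
    hf.continuousOn_deriv_of_isOpen hopen le_rfl
  have hfdAt : ∀ {t : ℝ}, t ∈ Set.Ioo a b → DifferentiableAt ℝ f t := fun ht =>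
    hfd.differentiableAt (hopen.mem_nhds ht)
  -- the Lagrange interpolation polynomial
  set p : Polynomial ℝ := Lagrange.interpolate Finset.univ x (fun i => f (x i)) with hpdef
  have hinjOn : Set.InjOn x ↑(Finset.univ : Finset (Fin (2 * n))) := Set.injOn_of_injective hxinj
  have hpdeg : p.degree < (2 * n : ℕ) := by
    have := Lagrange.degree_interpolate_lt (r := fun i => f (x i)) hinjOn
    rw [hpdef]; simpa using this
  have hpval : ∀ i, p.eval (x i) = f (x i) := fun i =>
    Lagrange.eval_interpolate_at_node _ hinjOn (Finset.mem_univ i)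
  set c : ℝ := p.coeff (2 * n - 1) with hcdef
  have hc1 : divDiff f x = c := by
    have h1 : divDiff f x = divDiff (fun t => p.eval t) x := by
      unfold divDiff
      exact Finset.sum_congr rfl fun i _ => by rw [show ((fun t => Polynomial.eval t p) (x i) : ℝ) = f (x i) from hpval i]
    rw [h1, DDAux.divDiff_poly hm x hxinj p hpdeg]
  set g : ℝ → ℝ := fun t => f t - p.eval t with hgdef
  have hpd : Differentiable ℝ fun t => p.eval t := p.differentiable
  have hgd : DifferentiableOn ℝ g (Set.Ioo a b) := hfd.sub hpd.differentiableOn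
  have hgzero : ∀ i, g (x i) = 0 := fun i => by rw [hgdef]; simp [hpval i]
  have hgderiv : ∀ {t : ℝ}, t ∈ Set.Ioo a b →
      deriv g t = deriv f t - deriv (fun s => p.eval s) t := by
    intro t ht
    rw [hgdef]
    exact deriv_sub (hfdAt ht) (hpd.differentiableAt)
  -- key formula for the doubled divided difference of f
  have hkey : ∀ y : Fin n → ℝ, Function.Injective y → (∀ i, y i ∈ Set.Ioo a b) →
      divDiffDoubled f y = c + ∑ i, (deriv g (y i) * DDAux.P y i - g (y i) * DDAux.Pd y i)
        / (DDAux.P y i) ^ 2 := by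
    intro y hy hmy
    have h1 := DDAux.divDiffDoubled_eq f hy (fun i => hfdAt (hmy i))
    have h2 := DDAux.divDiffDoubled_poly hn y hy p hpdeg
    have h3 := DDAux.divDiffDoubled_eq (fun t => p.eval t) hy
      (fun i => hpd.differentiableAt)
    have hc2 : c = ∑ i, (deriv (fun t => p.eval t) (y i) * DDAux.P y i
        - p.eval (y i) * DDAux.Pd y i) / (DDAux.P y i) ^ 2 := by rw [hcdef, ← h2, h3]
    rw [h1, hc2, ← Finset.sum_add_distrib]
    refine Finset.sum_congr rfl fun i _ => ?_
    rw [← add_div]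
    congr 1
    have e1 : deriv g (y i) = deriv f (y i) - deriv (fun s => p.eval s) (y i) := hgderiv (hmy i)
    have e2 : g (y i) = f (y i) - p.eval (y i) := rfl
    rw [e1, e2]
    ring
  -- choose the nodes
  set k0 : Fin n → Fin (2 * n) := fun i => ⟨2 * i.val, by have := i.isLt; omega⟩ with hk0
  set k1 : Fin n → Fin (2 * n) := fun i => ⟨2 * i.val + 1, by have := i.isLt; omega⟩ with hk1
  have hxlt : ∀ i : Fin n, x (k0 i) < x (k1 i) := fun i =>
    hx (by simp only [hk0, hk1, Fin.mk_lt_mk]; omega)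
  have hsubIcc : ∀ i : Fin n, Set.Icc (x (k0 i)) (x (k1 i)) ⊆ Set.Ioo a b := by
    intro i t ht
    exact ⟨lt_of_lt_of_le (hmem (k0 i)).1 ht.1, lt_of_le_of_lt ht.2 (hmem (k1 i)).2⟩
  choose u hu1 hu2 hu3 using fun i : Fin n =>
    DDAux.exists_zero_deriv_nonpos hopen hgd (hxlt i) (hsubIcc i) (hgzero _) (hgzero _)
  choose v hv1 hv2 hv3 using fun i : Fin n =>
    DDAux.exists_zero_deriv_nonneg hopen hgd (hxlt i) (hsubIcc i) (hgzero _) (hgzero _)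
  have hseq : ∀ (w : Fin n → ℝ), (∀ i, w i ∈ Set.Icc (x (k0 i)) (x (k1 i))) → StrictMono w := by
    intro w hw i j hij
    have hij' : (i : ℕ) < (j : ℕ) := hij
    have h2 : x (k1 i) < x (k0 j) := hx (by simp only [hk0, hk1, Fin.mk_lt_mk]; omega)
    exact lt_of_le_of_lt (hw i).2 (lt_of_lt_of_le h2 (hw j).1)
  have husm : StrictMono u := hseq u hu1
  have hvsm : StrictMono v := hseq v hv1
  have humem : ∀ i, u i ∈ Set.Ioo a b := fun i => hsubIcc i (hu1 i)
  have hvmem : ∀ i, v i ∈ Set.Ioo a b := fun i => hsubIcc i (hv1 i)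
  -- the endpoints of the path bound c from both sides
  have hFu : divDiffDoubled f u ≤ c := by
    rw [hkey u husm.injective humem]
    have hsum : ∑ i, (deriv g (u i) * DDAux.P u i - g (u i) * DDAux.Pd u i)
        / (DDAux.P u i) ^ 2 ≤ 0 := by
      refine Finset.sum_nonpos fun i _ => ?_
      rw [hu2 i, zero_mul, sub_zero]
      have hP := DDAux.P_pos husm.injective i
      exact div_nonpos_iff.2 (Or.inr ⟨mul_nonpos_iff.2 (Or.inr ⟨hu3 i, hP.le⟩), (pow_pos hP 2).le⟩)
    linarith
  have hFv : c ≤ divDiffDoubled f v := by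
    rw [hkey v hvsm.injective hvmem]
    have hsum : 0 ≤ ∑ i, (deriv g (v i) * DDAux.P v i - g (v i) * DDAux.Pd v i)
        / (DDAux.P v i) ^ 2 := by
      refine Finset.sum_nonneg fun i _ => ?_
      rw [hv2 i, zero_mul, sub_zero]
      have hP := DDAux.P_pos hvsm.injective i
      exact div_nonneg (mul_nonneg (hv3 i) hP.le) (pow_pos hP 2).le
    linarith
  -- the path between u and v
  set γ : ℝ → Fin n → ℝ := fun lam i => (1 - lam) * u i + lam * v i with hγ
  have hγsm : ∀ lam ∈ Set.Icc (0:ℝ) 1, StrictMono (γ lam) := by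
    intro lam hlam i j hij
    exact DDAux.cc_lt hlam.1 hlam.2 (husm hij) (hvsm hij)
  have hγmem : ∀ lam ∈ Set.Icc (0:ℝ) 1, ∀ i, γ lam i ∈ Set.Ioo a b := by
    intro lam hlam i
    constructor
    · have h := DDAux.cc_lt hlam.1 hlam.2 (humem i).1 (hvmem i).1
      calc a = (1 - lam) * a + lam * a := by ring
        _ < γ lam i := h
    · have h := DDAux.cc_lt hlam.1 hlam.2 (humem i).2 (hvmem i).2
      calc γ lam i < (1 - lam) * b + lam * b := h
        _ = b := by ring
  set F : ℝ → ℝ := fun lam => divDiffDoubled f (γ lam) with hF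
  have hFeq : ∀ lam ∈ Set.Icc (0:ℝ) 1, F lam = ∑ i, (deriv f (γ lam i) * DDAux.P (γ lam) i
      - f (γ lam i) * DDAux.Pd (γ lam) i) / (DDAux.P (γ lam) i) ^ 2 := fun lam hlam =>
    DDAux.divDiffDoubled_eq f (hγsm lam hlam).injective (fun i => hfdAt (hγmem lam hlam i))
  have hγci : ∀ j : Fin n, Continuous fun lam => γ lam j := by
    intro j
    simp only [hγ]
    exact ((continuous_const.sub continuous_id).mul continuous_const).add
      (continuous_id.mul continuous_const)
  have hFcont : ContinuousOn F (Set.Icc (0:ℝ) 1) := by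
    have hbig : ContinuousOn (fun lam => ∑ i : Fin n, (deriv f (γ lam i) * DDAux.P (γ lam) i
        - f (γ lam i) * DDAux.Pd (γ lam) i) / (DDAux.P (γ lam) i) ^ 2) (Set.Icc (0:ℝ) 1) := by
      refine continuousOn_finset_sum _ fun i _ => ?_
      have hmaps : ∀ lam ∈ Set.Icc (0:ℝ) 1, γ lam i ∈ Set.Ioo a b := fun lam h => hγmem lam h i
      have hcf : ContinuousOn (fun lam => f (γ lam i)) (Set.Icc (0:ℝ) 1) :=
        hfc.comp (hγci i).continuousOn hmaps
      have hcf' : ContinuousOn (fun lam => deriv f (γ lam i)) (Set.Icc (0:ℝ) 1) :=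
        hfc'.comp (hγci i).continuousOn hmaps
      have hcP : Continuous (fun lam => DDAux.P (γ lam) i) := by
        unfold DDAux.P
        exact continuous_finset_prod _ fun j _ => ((hγci i).sub (hγci j)).pow 2
      have hcPd : Continuous (fun lam => DDAux.Pd (γ lam) i) := by
        unfold DDAux.Pd
        refine continuous_finset_sum _ fun k _ => ?_
        exact (continuous_finset_prod _ fun j _ => ((hγci i).sub (hγci j)).pow 2).mul
          (continuous_const.mul ((hγci i).sub (hγci k)))
      refine ContinuousOn.div ?_ ?_ ?_
      · exact (hcf'.mul hcP.continuousOn).sub (hcf.mul hcPd.continuousOn)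
      · exact (hcP.pow 2).continuousOn
      · intro lam hlam
        exact pow_ne_zero 2 (DDAux.P_ne_zero (hγsm lam hlam).injective i)
    exact hbig.congr fun lam hlam => hFeq lam hlam
  have hγ0 : γ 0 = u := by funext i; simp [hγ]
  have hγ1 : γ 1 = v := by funext i; simp [hγ]
  have hF0 : F 0 = divDiffDoubled f u := by rw [hF]; simp only [hγ0]
  have hF1 : F 1 = divDiffDoubled f v := by rw [hF]; simp only [hγ1]
  have hmemc : c ∈ Set.Icc (F 0) (F 1) := ⟨by rw [hF0]; exact hFu, by rw [hF1]; exact hFv⟩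
  obtain ⟨lam, hlam, hlamc⟩ := intermediate_value_Icc (by norm_num : (0:ℝ) ≤ 1) hFcont hmemc
  refine ⟨γ lam, hγsm lam hlam, fun i => hγmem lam hlam i, ?_⟩
  rw [hc1, ← hlamc, hF]
end

section
/- Let a ≤ b be real numbers and q a real polynomial of odd degree k that is nonnegative on [b, ∞) and nonpositive on (-∞, a]. Then q can be written as a finite positive (nonnegative-coefficient) linear combination of polynomials of the form (x - a)·N(q̃) and (x - b)·N(q̃) with q̃ ∈ ℂ_{(k-1)/2}[x]. -/
open Polynomial Finset

lemma Nq_mul (p q : Polynomial ℂ) : Nq (p * q) = Nq p * Nq q := by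
  simp [Nq, Polynomial.map_mul]; ring

lemma Nq_one : Nq 1 = 1 := by simp [Nq]

/-- Sum-of-(hermitian)-squares with nonneg real coefficients, degree bound d. -/
def SOS (d : ℕ) (p : Polynomial ℂ) : Prop :=
  ∃ s : Multiset (ℝ × Polynomial ℂ),
    (∀ x ∈ s, 0 ≤ x.1 ∧ x.2.natDegree ≤ d) ∧
    p = (s.map (fun x => Polynomial.C ((x.1 : ℝ) : ℂ) * Nq x.2)).sum

lemma SOS.zero (d : ℕ) : SOS d 0 := ⟨0, by simp, by simp⟩

lemma SOS.add {d p q} (hp : SOS d p) (hq : SOS d q) : SOS d (p + q) := by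
  obtain ⟨s, hs, rfl⟩ := hp; obtain ⟨t, ht, rfl⟩ := hq
  exact ⟨s + t, fun x hx => ((Multiset.mem_add.1 hx).elim (hs x) (ht x)), by
    simp [Multiset.map_add]⟩

lemma SOS.single {d : ℕ} {c : ℝ} (hc : 0 ≤ c) {g : Polynomial ℂ} (hg : g.natDegree ≤ d) :
    SOS d (Polynomial.C (c : ℂ) * Nq g) :=
  ⟨{(c, g)}, by simp [hc, hg], by simp⟩

lemma SOS.smul {d p} (hp : SOS d p) {c : ℝ} (hc : 0 ≤ c) : SOS d (Polynomial.C (c : ℂ) * p) := by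
  obtain ⟨s, hs, rfl⟩ := hp
  refine ⟨s.map (fun x => (c * x.1, x.2)), ?_, ?_⟩
  · rintro x hx
    obtain ⟨y, hy, rfl⟩ := Multiset.mem_map.1 hx
    exact ⟨mul_nonneg hc (hs y hy).1, (hs y hy).2⟩
  · rw [Multiset.map_map, ← Multiset.sum_map_mul_left]
    exact congrArg _ (Multiset.map_congr rfl (fun x _ => by simp; ring))

lemma SOS.mul_Nq {d p} (hp : SOS d p) {e : ℕ} {g : Polynomial ℂ} (hg : g.natDegree ≤ e) :
    SOS (d + e) (Nq g * p) := by
  obtain ⟨s, hs, rfl⟩ := hp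
  refine ⟨s.map (fun x => (x.1, g * x.2)), ?_, ?_⟩
  · rintro x hx
    obtain ⟨y, hy, rfl⟩ := Multiset.mem_map.1 hx
    refine ⟨(hs y hy).1, ?_⟩
    calc (g * y.2).natDegree ≤ g.natDegree + y.2.natDegree := natDegree_mul_le
      _ ≤ e + d := add_le_add hg (hs y hy).2
      _ = d + e := by ring
  · rw [Multiset.map_map, ← Multiset.sum_map_mul_left]
    exact congrArg _ (Multiset.map_congr rfl (fun x _ => by simp [Nq_mul]; ring))

lemma SOS.mono {d d' p} (h : SOS d p) (hd : d ≤ d') : SOS d' p := by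
  obtain ⟨s, hs, rfl⟩ := h
  exact ⟨s, fun x hx => ⟨(hs x hx).1, (hs x hx).2.trans hd⟩, rfl⟩

/-- One-sided limit lemma: nonnegativity on the left extends to the point. -/
lemma eval_nonneg_of_lt (p : Polynomial ℝ) (c : ℝ) (h : ∀ x, x < c → 0 ≤ p.eval x) :
    0 ≤ p.eval c := by
  have hc : Filter.Tendsto (fun x => p.eval x) (nhdsWithin c (Set.Iio c)) (nhds (p.eval c)) :=
    (p.continuousAt).continuousWithinAt.tendsto
  refine ge_of_tendsto hc ?_
  filter_upwards [self_mem_nhdsWithin] with x hx using h x hx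

lemma eval_nonneg_of_gt (p : Polynomial ℝ) (c : ℝ) (h : ∀ x, c < x → 0 ≤ p.eval x) :
    0 ≤ p.eval c := by
  have hc : Filter.Tendsto (fun x => p.eval x) (nhdsWithin c (Set.Ioi c)) (nhds (p.eval c)) :=
    (p.continuousAt).continuousWithinAt.tendsto
  refine ge_of_tendsto hc ?_
  filter_upwards [self_mem_nhdsWithin] with x hx using h x hx

/-- X - r as a nonneg combination of X - a and X - b for r ∈ [a,b]. -/
lemma lambda_mu {a b r : ℝ} (hab : a ≤ b) (har : a ≤ r) (hrb : r ≤ b) :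
    ∃ l m : ℝ, 0 ≤ l ∧ 0 ≤ m ∧
      (X - Polynomial.C ((r : ℝ) : ℂ)) =
        Polynomial.C ((l : ℝ) : ℂ) * (X - Polynomial.C ((a : ℝ) : ℂ)) +
        Polynomial.C ((m : ℝ) : ℂ) * (X - Polynomial.C ((b : ℝ) : ℂ)) := by
  have key : ∀ l m : ℝ, l + m = 1 → l * a + m * b = r →
      (X - Polynomial.C ((r : ℝ) : ℂ)) =
        Polynomial.C ((l : ℝ) : ℂ) * (X - Polynomial.C ((a : ℝ) : ℂ)) +
        Polynomial.C ((m : ℝ) : ℂ) * (X - Polynomial.C ((b : ℝ) : ℂ)) := by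
    intro l m e1 e2
    have e1' : ((l : ℂ)) + m = 1 := by exact_mod_cast congrArg (Complex.ofReal) e1
    have e2' : (l : ℂ) * a + m * b = r := by exact_mod_cast congrArg (Complex.ofReal) e2
    calc (X : Polynomial ℂ) - Polynomial.C ((r : ℝ) : ℂ)
        = Polynomial.C ((l:ℂ) + m) * X - Polynomial.C ((l:ℂ) * a + m * b) := by
          rw [e1', e2']; simp
      _ = _ := by simp only [map_add, map_mul]; ring
  rcases eq_or_lt_of_le hab with rfl | hlt
  · exact ⟨1, 0, zero_le_one, le_refl 0, key 1 0 (by ring) (by rw [le_antisymm hrb har]; ring)⟩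
  · have hba : b - a ≠ 0 := sub_ne_zero.2 (ne_of_gt hlt)
    refine ⟨(b - r) / (b - a), (r - a) / (b - a), div_nonneg (by linarith) (by linarith), div_nonneg (by linarith) (by linarith), ?_⟩
    exact key _ _ (by field_simp; ring) (by field_simp; ring)

lemma map_quadratic_eq_Nq (z : ℂ) :
    (X ^ 2 - Polynomial.C (2 * z.re) * X + Polynomial.C (‖z‖ ^ 2) : Polynomial ℝ).map
      (algebraMap ℝ ℂ) = Nq (X - Polynomial.C z) := by
  have : Nq (X - Polynomial.C z) = (X - Polynomial.C ((starRingEnd ℂ) z)) * (X - Polynomial.C z) := by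
    simp [Nq, Polynomial.map_sub]; ring
  rw [this]
  calc (X ^ 2 - Polynomial.C (2 * z.re) * X + Polynomial.C (‖z‖ ^ 2) : Polynomial ℝ).map
        (algebraMap ℝ ℂ)
      = X ^ 2 - Polynomial.C ((2 * z.re : ℝ) : ℂ) * X + Polynomial.C ((‖z‖ ^ 2 : ℝ) : ℂ) := by simp
    _ = (X - Polynomial.C ((starRingEnd ℂ) z)) * (X - Polynomial.C z) := by
      have e1 : ((2 * z.re : ℝ) : ℂ) = z + (starRingEnd ℂ) z := (Complex.add_conj z).symm
      have e2 : ((‖z‖ ^ 2 : ℝ) : ℂ) = z * (starRingEnd ℂ) z := by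
        push_cast
        exact (Complex.mul_conj' z).symm
      rw [e1, e2, map_add, map_mul]
      ring

lemma no_root_sos (N : ℕ) : ∀ (p : Polynomial ℝ), p.natDegree ≤ N →
    (∀ x : ℝ, p.eval x ≠ 0) → ∀ x₀ : ℝ, 0 < p.eval x₀ → ∀ d : ℕ, p.natDegree ≤ 2 * d →
    ∃ (c : ℝ) (g : Polynomial ℂ), 0 ≤ c ∧ g.natDegree ≤ d ∧
      p.map (algebraMap ℝ ℂ) = Polynomial.C ((c : ℝ) : ℂ) * Nq g := by
  induction N with
  | zero =>
    intro p hN hroot x₀ hx₀ d hd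
    obtain ⟨c, rfl⟩ := Polynomial.natDegree_eq_zero.1 (Nat.le_zero.1 hN)
    refine ⟨c, 1, ?_, by simp, by simp [Nq_one]⟩
    simpa using hx₀.le
  | succ N ih =>
    intro p hN hroot x₀ hx₀ d hd
    rcases Nat.eq_zero_or_pos p.natDegree with h0 | hpos
    · obtain ⟨c, rfl⟩ := Polynomial.natDegree_eq_zero.1 h0
      refine ⟨c, 1, ?_, by simp, by simp [Nq_one]⟩
      simpa using hx₀.le
    · -- p has positive degree, get a complex root
      have hp0 : p ≠ 0 := fun h => hroot 0 (by simp [h])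
      have hdeg : 0 < (p.map (algebraMap ℝ ℂ)).degree := by
        rw [Polynomial.degree_map]
        exact Polynomial.natDegree_pos_iff_degree_pos.1 hpos
      obtain ⟨z, hz⟩ := Complex.exists_root hdeg
      have hzroot : Polynomial.aeval z p = 0 := by
        rwa [Polynomial.aeval_def, ← Polynomial.eval_map]
      have him : z.im ≠ 0 := by
        intro h
        apply hroot z.re
        have hz' : (Polynomial.map (algebraMap ℝ ℂ) p).eval (algebraMap ℝ ℂ z.re) = 0 := by
          have hzz : z = algebraMap ℝ ℂ z.re := Complex.ext (by simp) (by simp [h])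
          rw [← hzz]; exact hz
        have h0 : algebraMap ℝ ℂ (p.eval z.re) = 0 := by
          rwa [Polynomial.eval_map, Polynomial.eval₂_at_apply] at hz'
        simpa using h0
      obtain ⟨p₂, hp₂⟩ := p.quadratic_dvd_of_aeval_eq_zero_im_ne_zero hzroot him
      set s : Polynomial ℝ := X ^ 2 - Polynomial.C (2 * z.re) * X + Polynomial.C (‖z‖ ^ 2) with hs_def
      have hnorm : ‖z‖ ^ 2 = z.re ^ 2 + z.im ^ 2 := by
        rw [Complex.sq_norm, Complex.normSq_apply]; ring
      have hseval : ∀ x : ℝ, s.eval x = (x - z.re) ^ 2 + z.im ^ 2 := by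
        intro x
        simp [hs_def, Complex.sq_norm, Complex.normSq_apply]
        ring
      have hspos : ∀ x : ℝ, 0 < s.eval x := by
        intro x; rw [hseval]; positivity
      have hp₂root : ∀ x : ℝ, p₂.eval x ≠ 0 := by
        intro x hx
        exact hroot x (by rw [hp₂, Polynomial.eval_mul, hx, mul_zero])
      have hp₂x₀ : 0 < p₂.eval x₀ := by
        have h1 := hspos x₀
        have h2 : p.eval x₀ = s.eval x₀ * p₂.eval x₀ := by rw [hp₂, Polynomial.eval_mul]
        nlinarith
      have hs2 : s.natDegree = 2 := by
        unfold s; compute_degree!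
      have hsne : s ≠ 0 := fun h => (hspos 0).ne' (by rw [h]; simp)
      have hp₂ne : p₂ ≠ 0 := fun h => hp₂root 0 (by simp [h])
      have hdegeq : p.natDegree = 2 + p₂.natDegree := by
        rw [hp₂, Polynomial.natDegree_mul hsne hp₂ne, hs2]
      have hd1 : 1 ≤ d := by omega
      obtain ⟨c, g, hc, hg, hmap⟩ := ih p₂ (by omega) hp₂root x₀ hp₂x₀ (d - 1) (by omega)
      refine ⟨c, (X - Polynomial.C z) * g, hc, ?_, ?_⟩
      · calc ((X - Polynomial.C z) * g).natDegree ≤ (X - Polynomial.C z).natDegree + g.natDegree :=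
            Polynomial.natDegree_mul_le
          _ ≤ 1 + (d - 1) := add_le_add (by simp) hg
          _ ≤ d := by omega
      · rw [hp₂, Polynomial.map_mul, map_quadratic_eq_Nq, hmap, Nq_mul]
        ring

lemma Nq_real_linear (c : ℝ) :
    Nq (X - Polynomial.C ((c : ℝ) : ℂ)) = (X - Polynomial.C ((c : ℝ) : ℂ)) ^ 2 := by
  simp [Nq, Polynomial.map_sub, Complex.conj_ofReal]
  ring

lemma SOS.mul_Nq_linear {n : ℕ} {p g : Polynomial ℂ} (h0 : n = 0 → p = 0) (h : SOS (n - 1) p)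
    (hg : g.natDegree ≤ 1) : SOS n (Nq g * p) := by
  cases n with
  | zero => rw [h0 rfl, mul_zero]; exact SOS.zero 0
  | succ n =>
    have := h.mul_Nq hg
    simpa [Nat.add_comm] using this

lemma sq_dvd_of_double_root {q : Polynomial ℝ} (hq : q ≠ 0) {x₀ : ℝ} (h0 : q.eval x₀ = 0)
    (h0' : q.derivative.eval x₀ = 0) : (X - Polynomial.C x₀) ^ 2 ∣ q := by
  have h2 : 1 < q.rootMultiplicity x₀ := (Polynomial.one_lt_rootMultiplicity_iff_isRoot hq).2 ⟨h0, h0'⟩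
  exact dvd_trans (pow_dvd_pow _ h2) (q.pow_rootMultiplicity_dvd x₀)

lemma main_induction (a b : ℝ) (hab : a ≤ b) (N : ℕ) :
    ∀ q : Polynomial ℝ, q.natDegree ≤ N → ∀ n : ℕ,
      (((∀ x, x ≤ a → q.eval x ≤ 0) ∧ (∀ x, b ≤ x → 0 ≤ q.eval x) ∧ q.natDegree ≤ 2 * n + 1) →
        ∃ s₁ s₂ : Polynomial ℂ, SOS n s₁ ∧ SOS n s₂ ∧
          q.map (algebraMap ℝ ℂ) =
            (X - Polynomial.C ((a : ℝ) : ℂ)) * s₁ + (X - Polynomial.C ((b : ℝ) : ℂ)) * s₂)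
      ∧
      (((∀ x, x ≤ a → 0 ≤ q.eval x) ∧ (∀ x, b ≤ x → 0 ≤ q.eval x) ∧ q.natDegree ≤ 2 * n) →
        ∃ p₁ p₂ : Polynomial ℂ, SOS n p₁ ∧ (n = 0 → p₂ = 0) ∧ SOS (n - 1) p₂ ∧
          q.map (algebraMap ℝ ℂ) =
            p₁ + (X - Polynomial.C ((a : ℝ) : ℂ)) * (X - Polynomial.C ((b : ℝ) : ℂ)) * p₂) := by
  induction N with
  | zero =>
    intro q hq n
    obtain ⟨c, rfl⟩ := Polynomial.natDegree_eq_zero.1 (Nat.le_zero.1 hq)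
    constructor
    · rintro ⟨h1, h2, -⟩
      have hc0 : c = 0 := le_antisymm (by simpa using h1 a le_rfl) (by simpa using h2 b le_rfl)
      exact ⟨0, 0, SOS.zero n, SOS.zero n, by simp [hc0]⟩
    · rintro ⟨h1, h2, -⟩
      have hc : 0 ≤ c := by simpa using h2 b le_rfl
      refine ⟨Polynomial.C ((c : ℝ) : ℂ) * Nq 1, 0, ?_, fun _ => rfl, SOS.zero _, by
        simp [Nq_one]⟩
      simpa [Nq_one] using SOS.single hc (g := 1) (by simp)
  | succ N ih =>
    intro q hq n
    rcases Nat.eq_zero_or_pos q.natDegree with h0 | hdpos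
    · -- constant case, same as base
      obtain ⟨c, rfl⟩ := Polynomial.natDegree_eq_zero.1 h0
      constructor
      · rintro ⟨h1, h2, -⟩
        have hc0 : c = 0 := le_antisymm (by simpa using h1 a le_rfl) (by simpa using h2 b le_rfl)
        exact ⟨0, 0, SOS.zero n, SOS.zero n, by simp [hc0]⟩
      · rintro ⟨h1, h2, -⟩
        have hc : 0 ≤ c := by simpa using h2 b le_rfl
        refine ⟨Polynomial.C ((c : ℝ) : ℂ) * Nq 1, 0, ?_, fun _ => rfl, SOS.zero _, by
          simp [Nq_one]⟩
        simpa [Nq_one] using SOS.single hc (g := 1) (by simp)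
    · have hq0 : q ≠ 0 := fun h => by simp [h] at hdpos
      constructor
      · -- C part
        rintro ⟨h1, h2, hd⟩
        -- find a root in [a,b] by IVT
        have hcont : ContinuousOn (fun x => q.eval x) (Set.Icc a b) :=
          (Polynomial.continuous q).continuousOn
        have hmem : (0 : ℝ) ∈ Set.Icc (q.eval a) (q.eval b) :=
          ⟨h1 a le_rfl, h2 b le_rfl⟩
        obtain ⟨r, hrmem, hr⟩ := intermediate_value_Icc hab hcont hmem
        obtain ⟨har, hrb⟩ := hrmem
        obtain ⟨q₁, hq₁⟩ := (Polynomial.dvd_iff_isRoot.2 hr)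
        have hq₁0 : q₁ ≠ 0 := fun h => hq0 (by rw [hq₁, h, mul_zero])
        have hXr : (X - Polynomial.C r : Polynomial ℝ) ≠ 0 := Polynomial.X_sub_C_ne_zero r
        have hdeg : q.natDegree = 1 + q₁.natDegree := by
          rw [hq₁, Polynomial.natDegree_mul hXr hq₁0, Polynomial.natDegree_X_sub_C]
        have hqeval : ∀ x, q.eval x = (x - r) * q₁.eval x := by
          intro x; rw [hq₁]; simp
        -- sign conditions for q₁ (D-type)
        have hD1 : ∀ x, x ≤ a → 0 ≤ q₁.eval x := by
          intro x hxa
          rcases lt_or_eq_of_le (hxa.trans har) with hxr | hxr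
          · by_contra hlt
            push_neg at hlt
            have := mul_pos_of_neg_of_neg (sub_neg.2 hxr) hlt
            rw [← hqeval] at this
            linarith [h1 x hxa]
          · -- x = r, so r ≤ a hence r = a = x
            subst hxr
            apply eval_nonneg_of_lt
            intro y hy
            by_contra hlt
            push_neg at hlt
            have := mul_pos_of_neg_of_neg (sub_neg.2 hy) hlt
            rw [← hqeval] at this
            linarith [h1 y (le_of_lt (lt_of_lt_of_le hy hxa))]
        have hD2 : ∀ x, b ≤ x → 0 ≤ q₁.eval x := by
          intro x hbx
          rcases lt_or_eq_of_le (hrb.trans hbx) with hxr | hxr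
          · by_contra hlt
            push_neg at hlt
            have := mul_neg_of_pos_of_neg (sub_pos.2 hxr) hlt
            rw [← hqeval] at this
            linarith [h2 x hbx]
          · subst hxr
            apply eval_nonneg_of_gt
            intro y hy
            by_contra hlt
            push_neg at hlt
            have := mul_neg_of_pos_of_neg (sub_pos.2 hy) hlt
            rw [← hqeval] at this
            linarith [h2 y (le_of_lt (lt_of_le_of_lt hbx hy))]
        obtain ⟨p₁, p₂, hp₁, hflag, hp₂, heq⟩ :=
          (ih q₁ (by omega) n).2 ⟨hD1, hD2, by omega⟩
        obtain ⟨l, m, hl, hm, hlm⟩ := lambda_mu hab har hrb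
        refine ⟨Polynomial.C ((l : ℝ) : ℂ) * p₁ +
            Polynomial.C ((m : ℝ) : ℂ) * (Nq (X - Polynomial.C ((b : ℝ) : ℂ)) * p₂),
          Polynomial.C ((m : ℝ) : ℂ) * p₁ +
            Polynomial.C ((l : ℝ) : ℂ) * (Nq (X - Polynomial.C ((a : ℝ) : ℂ)) * p₂),
          ?_, ?_, ?_⟩
        · exact (hp₁.smul hl).add ((SOS.mul_Nq_linear hflag hp₂ (by simp)).smul hm)
        · exact (hp₁.smul hm).add ((SOS.mul_Nq_linear hflag hp₂ (by simp)).smul hl)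
        · have hmap : q.map (algebraMap ℝ ℂ) =
              (X - Polynomial.C ((r : ℝ) : ℂ)) * (q₁.map (algebraMap ℝ ℂ)) := by
            rw [hq₁, Polynomial.map_mul, Polynomial.map_sub, Polynomial.map_X, Polynomial.map_C]
            norm_cast
          rw [hmap, heq, hlm, Nq_real_linear, Nq_real_linear]
          ring
      · -- D part
        rintro ⟨h1, h2, hd⟩
        have hn1 : 1 ≤ n := by omega
        by_cases hroots : ∃ x : ℝ, q.eval x = 0
        · obtain ⟨x₀, hx₀⟩ := hroots
          rcases lt_or_ge x₀ a with hxa | hax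
          · -- double root left of a
            have hmin : IsLocalMin (fun x => q.eval x) x₀ := by
              have hmem : Set.Iic a ∈ nhds x₀ := Iic_mem_nhds hxa
              filter_upwards [hmem] with y hy
              rw [hx₀]; exact h1 y hy
            have hder : q.derivative.eval x₀ = 0 := by
              have := hmin.deriv_eq_zero
              rwa [Polynomial.deriv] at this
            obtain ⟨q₃, hq₃⟩ := sq_dvd_of_double_root hq0 hx₀ hder
            have hq₃0 : q₃ ≠ 0 := fun h => hq0 (by rw [hq₃, h, mul_zero])
            have hdeg : q.natDegree = 2 + q₃.natDegree := by
              rw [hq₃, Polynomial.natDegree_mul (pow_ne_zero _ (Polynomial.X_sub_C_ne_zero x₀))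
                hq₃0, Polynomial.natDegree_pow, Polynomial.natDegree_X_sub_C]
            have hqeval : ∀ x, q.eval x = (x - x₀) ^ 2 * q₃.eval x := by
              intro x; rw [hq₃]; simp
            have hsign : ∀ x, x ≠ x₀ → 0 ≤ q.eval x → 0 ≤ q₃.eval x := by
              intro x hx hq
              by_contra hlt
              push_neg at hlt
              have h2' : (0:ℝ) < (x - x₀)^2 := pow_two_pos_of_ne_zero (sub_ne_zero.2 hx)
              nlinarith [hqeval x]
            have hD1 : ∀ x, x ≤ a → 0 ≤ q₃.eval x := by
              intro x hx
              rcases eq_or_ne x x₀ with rfl | hne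
              · apply eval_nonneg_of_lt
                intro y hy
                exact hsign y (ne_of_lt hy) (h1 y (le_of_lt (lt_trans hy hxa)))
              · exact hsign x hne (h1 x hx)
            have hD2 : ∀ x, b ≤ x → 0 ≤ q₃.eval x := by
              intro x hx
              have : x ≠ x₀ := by intro h; subst h; linarith
              exact hsign x this (h2 x hx)
            obtain ⟨p₁', p₂', hp₁', hflag', hp₂', heq'⟩ :=
              (ih q₃ (by omega) (n - 1)).2 ⟨hD1, hD2, by omega⟩
            have hmap : q.map (algebraMap ℝ ℂ) =
                (X - Polynomial.C ((x₀ : ℝ) : ℂ)) ^ 2 * (q₃.map (algebraMap ℝ ℂ)) := by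
              rw [hq₃, Polynomial.map_mul, Polynomial.map_pow, Polynomial.map_sub,
                Polynomial.map_X, Polynomial.map_C]
              norm_cast
            refine ⟨Nq (X - Polynomial.C ((x₀ : ℝ) : ℂ)) * p₁',
              Nq (X - Polynomial.C ((x₀ : ℝ) : ℂ)) * p₂', ?_, by omega, ?_, ?_⟩
            · have := hp₁'.mul_Nq (e := 1) (g := X - Polynomial.C ((x₀ : ℝ) : ℂ)) (by simp)
              rw [show n - 1 + 1 = n from by omega] at this
              rwa [mul_comm (Nq _)] at this ⊢
            · exact SOS.mul_Nq_linear hflag' hp₂' (by simp)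
            · rw [hmap, heq', Nq_real_linear]
              ring
          · rcases lt_or_ge b x₀ with hbx | hxb
            · -- double root right of b
              have hmin : IsLocalMin (fun x => q.eval x) x₀ := by
                have hmem : Set.Ici b ∈ nhds x₀ := Ici_mem_nhds hbx
                filter_upwards [hmem] with y hy
                rw [hx₀]; exact h2 y hy
              have hder : q.derivative.eval x₀ = 0 := by
                have := hmin.deriv_eq_zero
                rwa [Polynomial.deriv] at this
              obtain ⟨q₃, hq₃⟩ := sq_dvd_of_double_root hq0 hx₀ hder
              have hq₃0 : q₃ ≠ 0 := fun h => hq0 (by rw [hq₃, h, mul_zero])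
              have hdeg : q.natDegree = 2 + q₃.natDegree := by
                rw [hq₃, Polynomial.natDegree_mul (pow_ne_zero _ (Polynomial.X_sub_C_ne_zero x₀))
                  hq₃0, Polynomial.natDegree_pow, Polynomial.natDegree_X_sub_C]
              have hqeval : ∀ x, q.eval x = (x - x₀) ^ 2 * q₃.eval x := by
                intro x; rw [hq₃]; simp
              have hsign : ∀ x, x ≠ x₀ → 0 ≤ q.eval x → 0 ≤ q₃.eval x := by
                intro x hx hq
                by_contra hlt
                push_neg at hlt
                have h2' : (0:ℝ) < (x - x₀)^2 := pow_two_pos_of_ne_zero (sub_ne_zero.2 hx)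
                nlinarith [hqeval x]
              have hD1 : ∀ x, x ≤ a → 0 ≤ q₃.eval x := by
                intro x hx
                have : x ≠ x₀ := by intro h; subst h; linarith
                exact hsign x this (h1 x hx)
              have hD2 : ∀ x, b ≤ x → 0 ≤ q₃.eval x := by
                intro x hx
                rcases eq_or_ne x x₀ with rfl | hne
                · apply eval_nonneg_of_gt
                  intro y hy
                  exact hsign y (ne_of_gt hy) (h2 y (le_of_lt (lt_trans hbx hy)))
                · exact hsign x hne (h2 x hx)
              obtain ⟨p₁', p₂', hp₁', hflag', hp₂', heq'⟩ :=
                (ih q₃ (by omega) (n - 1)).2 ⟨hD1, hD2, by omega⟩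
              have hmap : q.map (algebraMap ℝ ℂ) =
                  (X - Polynomial.C ((x₀ : ℝ) : ℂ)) ^ 2 * (q₃.map (algebraMap ℝ ℂ)) := by
                rw [hq₃, Polynomial.map_mul, Polynomial.map_pow, Polynomial.map_sub,
                  Polynomial.map_X, Polynomial.map_C]
                norm_cast
              refine ⟨Nq (X - Polynomial.C ((x₀ : ℝ) : ℂ)) * p₁',
                Nq (X - Polynomial.C ((x₀ : ℝ) : ℂ)) * p₂', ?_, by omega, ?_, ?_⟩
              · have := hp₁'.mul_Nq (e := 1) (g := X - Polynomial.C ((x₀ : ℝ) : ℂ)) (by simp)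
                rw [show n - 1 + 1 = n from by omega] at this
                rwa [mul_comm (Nq _)] at this ⊢
              · exact SOS.mul_Nq_linear hflag' hp₂' (by simp)
              · rw [hmap, heq', Nq_real_linear]
                ring
            · -- root inside [a,b]
              obtain ⟨q₂, hq₂⟩ := (Polynomial.dvd_iff_isRoot.2 hx₀)
              have hq₂0 : q₂ ≠ 0 := fun h => hq0 (by rw [hq₂, h, mul_zero])
              have hdeg : q.natDegree = 1 + q₂.natDegree := by
                rw [hq₂, Polynomial.natDegree_mul (Polynomial.X_sub_C_ne_zero x₀) hq₂0,
                  Polynomial.natDegree_X_sub_C]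
              have hqeval : ∀ x, q.eval x = (x - x₀) * q₂.eval x := by
                intro x; rw [hq₂]; simp
              -- q₂ has C-type signs
              have hC1 : ∀ x, x ≤ a → q₂.eval x ≤ 0 := by
                intro x hxa
                rcases lt_or_eq_of_le (hxa.trans hax) with hxr | hxr
                · by_contra hlt
                  push_neg at hlt
                  have := mul_neg_of_neg_of_pos (sub_neg.2 hxr) hlt
                  rw [← hqeval] at this
                  linarith [h1 x hxa]
                · subst hxr
                  have : 0 ≤ (-q₂).eval x := by
                    apply eval_nonneg_of_lt
                    intro y hy
                    simp only [Polynomial.eval_neg, Left.nonneg_neg_iff]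
                    by_contra hlt
                    push_neg at hlt
                    have := mul_neg_of_neg_of_pos (sub_neg.2 hy) hlt
                    rw [← hqeval] at this
                    linarith [h1 y (le_of_lt (lt_of_lt_of_le hy hxa))]
                  simpa using this
              have hC2 : ∀ x, b ≤ x → 0 ≤ q₂.eval x := by
                intro x hbx
                rcases lt_or_eq_of_le (hxb.trans hbx) with hxr | hxr
                · by_contra hlt
                  push_neg at hlt
                  have := mul_neg_of_pos_of_neg (sub_pos.2 hxr) hlt
                  rw [← hqeval] at this
                  linarith [h2 x hbx]
                · subst hxr
                  apply eval_nonneg_of_gt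
                  intro y hy
                  by_contra hlt
                  push_neg at hlt
                  have := mul_neg_of_pos_of_neg (sub_pos.2 hy) hlt
                  rw [← hqeval] at this
                  linarith [h2 y (le_of_lt (lt_of_le_of_lt hbx hy))]
              obtain ⟨s₁, s₂, hs₁, hs₂, heq⟩ :=
                (ih q₂ (by omega) (n - 1)).1 ⟨hC1, hC2, by omega⟩
              obtain ⟨l, m, hl, hm, hlm⟩ := lambda_mu hab hax hxb
              have hmap : q.map (algebraMap ℝ ℂ) =
                  (X - Polynomial.C ((x₀ : ℝ) : ℂ)) * (q₂.map (algebraMap ℝ ℂ)) := by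
                rw [hq₂, Polynomial.map_mul, Polynomial.map_sub, Polynomial.map_X,
                  Polynomial.map_C]
                norm_cast
              refine ⟨Polynomial.C ((l : ℝ) : ℂ) * (Nq (X - Polynomial.C ((a : ℝ) : ℂ)) * s₁) +
                  Polynomial.C ((m : ℝ) : ℂ) * (Nq (X - Polynomial.C ((b : ℝ) : ℂ)) * s₂),
                Polynomial.C ((m : ℝ) : ℂ) * s₁ + Polynomial.C ((l : ℝ) : ℂ) * s₂,
                ?_, by omega, ?_, ?_⟩
              · have t₁ := hs₁.mul_Nq (e := 1) (g := X - Polynomial.C ((a : ℝ) : ℂ)) (by simp)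
                have t₂ := hs₂.mul_Nq (e := 1) (g := X - Polynomial.C ((b : ℝ) : ℂ)) (by simp)
                rw [show n - 1 + 1 = n from by omega] at t₁ t₂
                exact ((t₁.mono le_rfl).smul hl).add ((t₂.mono le_rfl).smul hm)
              · exact (hs₁.smul hm).add (hs₂.smul hl)
              · rw [hmap, heq, hlm, Nq_real_linear, Nq_real_linear]
                ring
        · -- no real roots
          push_neg at hroots
          have hb : 0 < q.eval b := lt_of_le_of_ne (h2 b le_rfl) (Ne.symm (hroots b))
          obtain ⟨c, g, hc, hg, hmap⟩ :=
            no_root_sos q.natDegree q le_rfl hroots b hb n (by omega)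
          exact ⟨Polynomial.C ((c : ℝ) : ℂ) * Nq g, 0, SOS.single hc hg, fun _ => rfl,
            SOS.zero _, by rw [hmap]; ring⟩

theorem odd_degree_poly_decomposition (a b : ℝ) (hab : a ≤ b)
    (q : Polynomial ℝ) (k : ℕ) (hk : q.natDegree = k) (hodd : Odd k)
    (hpos : ∀ x : ℝ, b ≤ x → 0 ≤ q.eval x) (hneg : ∀ x : ℝ, x ≤ a → q.eval x ≤ 0) :
    ∃ (m : ℕ) (t : Fin m → ℝ) (e : Fin m → ℝ) (r : Fin m → Polynomial ℂ),
      (∀ i, 0 ≤ t i) ∧ (∀ i, e i = a ∨ e i = b) ∧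
      (∀ i, (r i).natDegree ≤ (k - 1) / 2) ∧
      q.map (algebraMap ℝ ℂ) =
        ∑ i, Polynomial.C ((t i : ℝ) : ℂ) * (X - Polynomial.C ((e i : ℝ) : ℂ)) * Nq (r i) := by
  classical
  obtain ⟨j, rfl⟩ := hodd
  have hn : (2 * j + 1 - 1) / 2 = j := by omega
  obtain ⟨s₁, s₂, hs₁, hs₂, heq⟩ :=
    (main_induction a b hab q.natDegree q le_rfl j).1 ⟨hneg, hpos, by omega⟩
  obtain ⟨m₁, hm₁, he₁⟩ := hs₁
  obtain ⟨m₂, hm₂, he₂⟩ := hs₂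
  set G : ℝ × ℝ × Polynomial ℂ → Polynomial ℂ :=
    fun y => Polynomial.C ((y.1 : ℝ) : ℂ) * (X - Polynomial.C ((y.2.1 : ℝ) : ℂ)) * Nq y.2.2
    with hG
  set M : Multiset (ℝ × ℝ × Polynomial ℂ) :=
    m₁.map (fun x => (x.1, a, x.2)) + m₂.map (fun x => (x.1, b, x.2)) with hM
  have hMmem : ∀ y ∈ M, 0 ≤ y.1 ∧ (y.2.1 = a ∨ y.2.1 = b) ∧ y.2.2.natDegree ≤ j := by
    intro y hy
    rcases Multiset.mem_add.1 hy with h | h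
    · obtain ⟨x, hx, rfl⟩ := Multiset.mem_map.1 h
      exact ⟨(hm₁ x hx).1, Or.inl rfl, (hm₁ x hx).2⟩
    · obtain ⟨x, hx, rfl⟩ := Multiset.mem_map.1 h
      exact ⟨(hm₂ x hx).1, Or.inr rfl, (hm₂ x hx).2⟩
  have hsum : q.map (algebraMap ℝ ℂ) = (M.map G).sum := by
    rw [heq, he₁, he₂, hM, Multiset.map_add, Multiset.sum_add, Multiset.map_map,
      Multiset.map_map, ← Multiset.sum_map_mul_left, ← Multiset.sum_map_mul_left]
    congr 1
    · exact congrArg _ (Multiset.map_congr rfl (fun x _ => by simp [hG]; ring))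
    · exact congrArg _ (Multiset.map_congr rfl (fun x _ => by simp [hG]; ring))
  -- convert to a list and then a Fin-indexed family
  set L : List (ℝ × ℝ × Polynomial ℂ) := M.toList with hLdef
  have hLM : (L : Multiset (ℝ × ℝ × Polynomial ℂ)) = M := Multiset.coe_toList M
  have hLmem : ∀ y ∈ L, 0 ≤ y.1 ∧ (y.2.1 = a ∨ y.2.1 = b) ∧ y.2.2.natDegree ≤ j := by
    intro y hy
    exact hMmem y (by rw [← hLM]; exact Multiset.mem_coe.2 hy)
  refine ⟨L.length, fun i => (L.get i).1, fun i => (L.get i).2.1, fun i => (L.get i).2.2,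
    ?_, ?_, ?_, ?_⟩
  · exact fun i => (hLmem _ (L.get_mem i)).1
  · exact fun i => (hLmem _ (L.get_mem i)).2.1
  · intro i
    rw [hn]
    exact (hLmem _ (L.get_mem i)).2.2
  · have key : (∑ i : Fin L.length, G (L.get i)) = (L.map G).sum := by
      calc (∑ i : Fin L.length, G (L.get i)) = (List.ofFn (fun i => G (L.get i))).sum :=
            (List.sum_ofFn).symm
        _ = ((List.ofFn L.get).map G).sum := by rw [List.map_ofFn]; rfl
        _ = (L.map G).sum := by rw [List.ofFn_get]
    have hmapsum : (L.map G).sum = (M.map G).sum := by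
      rw [← hLM, Multiset.map_coe, Multiset.sum_coe]
    rw [hsum, ← hmapsum, ← key]
end

section
/- Let a ≤ b be real numbers and q a real polynomial of even degree k that is nonnegative outside (a, b). Then q can be written as a finite positive linear combination of polynomials of the form N(q̃) with q̃ ∈ ℂ_{k/2}[x] and (x - a)(x - b)·N(q̃) with q̃ ∈ ℂ_{k/2 - 1}[x]. -/
open Polynomial Finset

namespace DecompAux

noncomputable def W (a b : ℝ) : Polynomial ℂ :=
  (X - Polynomial.C ((a : ℝ) : ℂ)) * (X - Polynomial.C ((b : ℝ) : ℂ))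

def Gen (a b : ℝ) (n : ℕ) : Set (Polynomial ℂ) :=
  {P | ∃ (c : ℝ) (f : Polynomial ℂ), 0 ≤ c ∧
    ((f.natDegree ≤ n ∧ P = Polynomial.C ((c : ℝ) : ℂ) * Nq f) ∨
     (1 ≤ n ∧ f.natDegree + 1 ≤ n ∧ P = Polynomial.C ((c : ℝ) : ℂ) * (W a b * Nq f)))}

def InCone (a b : ℝ) (n : ℕ) (P : Polynomial ℂ) : Prop :=
  P ∈ AddSubmonoid.closure (Gen a b n)

lemma Nq_mul (f g : Polynomial ℂ) : Nq (f * g) = Nq f * Nq g := by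
  simp only [Nq, Polynomial.map_mul]; ring

lemma W_map_conj (a b : ℝ) : (W a b).map (starRingEnd ℂ) = W a b := by
  simp [W, Polynomial.map_mul, Polynomial.map_sub, Complex.conj_ofReal]

lemma Nq_W_mul (a b : ℝ) (f : Polynomial ℂ) : Nq (W a b * f) = W a b * W a b * Nq f := by
  rw [Nq_mul, show Nq (W a b) = W a b * W a b from by rw [Nq, W_map_conj]]

lemma InCone.add {a b : ℝ} {n : ℕ} {P Q : Polynomial ℂ} (hP : InCone a b n P)
    (hQ : InCone a b n Q) : InCone a b n (P + Q) := AddSubmonoid.add_mem _ hP hQ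

lemma inCone_N {a b : ℝ} {n : ℕ} (c : ℝ) (hc : 0 ≤ c) {f : Polynomial ℂ}
    (hf : f.natDegree ≤ n) : InCone a b n (Polynomial.C ((c : ℝ) : ℂ) * Nq f) :=
  AddSubmonoid.subset_closure ⟨c, f, hc, Or.inl ⟨hf, rfl⟩⟩

lemma inCone_WN {a b : ℝ} {n : ℕ} (c : ℝ) (hc : 0 ≤ c) (hn : 1 ≤ n) {f : Polynomial ℂ}
    (hf : f.natDegree + 1 ≤ n) :
    InCone a b n (Polynomial.C ((c : ℝ) : ℂ) * (W a b * Nq f)) :=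
  AddSubmonoid.subset_closure ⟨c, f, hc, Or.inr ⟨hn, hf, rfl⟩⟩

lemma InCone.mul {a b : ℝ} {n₁ n₂ : ℕ} {P Q : Polynomial ℂ} (hP : InCone a b n₁ P)
    (hQ : InCone a b n₂ Q) : InCone a b (n₁ + n₂) (P * Q) := by
  induction hP using AddSubmonoid.closure_induction with
  | mem x hx =>
    induction hQ using AddSubmonoid.closure_induction with
    | mem y hy =>
      obtain ⟨c, f, hc, hx'⟩ := hx
      obtain ⟨d, g, hd, hy'⟩ := hy
      have hcd : ((c : ℂ)) * (d : ℂ) = (((c*d : ℝ) : ℂ)) := by push_cast; ring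
      rcases hx' with ⟨hdf, rfl⟩ | ⟨h1, hdf, rfl⟩ <;> rcases hy' with ⟨hdg, rfl⟩ | ⟨h2, hdg, rfl⟩
      · refine AddSubmonoid.subset_closure ⟨c*d, f*g, mul_nonneg hc hd, Or.inl ⟨?_, ?_⟩⟩
        · exact (natDegree_mul_le).trans (add_le_add hdf hdg)
        · rw [Nq_mul, ← hcd, Polynomial.C_mul]; ring
      · refine AddSubmonoid.subset_closure ⟨c*d, f*g, mul_nonneg hc hd, Or.inr ⟨?_, ?_, ?_⟩⟩
        · omega
        · have := natDegree_mul_le (p := f) (q := g); omega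
        · rw [Nq_mul, ← hcd, Polynomial.C_mul]; ring
      · refine AddSubmonoid.subset_closure ⟨c*d, f*g, mul_nonneg hc hd, Or.inr ⟨?_, ?_, ?_⟩⟩
        · omega
        · have := natDegree_mul_le (p := f) (q := g); omega
        · rw [Nq_mul, ← hcd, Polynomial.C_mul]; ring
      · refine AddSubmonoid.subset_closure ⟨c*d, W a b * (f*g), mul_nonneg hc hd,
          Or.inl ⟨?_, ?_⟩⟩
        · have h3 := natDegree_mul_le (p := W a b) (q := f * g)
          have h4 := natDegree_mul_le (p := f) (q := g)
          have h5 : (W a b).natDegree ≤ 2 := by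
            refine (natDegree_mul_le).trans ?_
            have := natDegree_X_sub_C_le (r := ((a:ℝ):ℂ))
            have := natDegree_X_sub_C_le (r := ((b:ℝ):ℂ))
            omega
          omega
        · rw [Nq_W_mul, Nq_mul, ← hcd, Polynomial.C_mul]; ring
    | zero => simp only [mul_zero, zero_mul]; exact (AddSubmonoid.zero_mem _ : (0 : Polynomial ℂ) ∈ AddSubmonoid.closure (Gen a b (n₁ + n₂)))
    | add y z _ _ hy hz => rw [mul_add]; exact AddSubmonoid.add_mem _ hy hz
  | zero => simp only [mul_zero, zero_mul]; exact (AddSubmonoid.zero_mem _ : (0 : Polynomial ℂ) ∈ AddSubmonoid.closure (Gen a b (n₁ + n₂)))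
  | add x y _ _ hx hy => rw [add_mul]; exact AddSubmonoid.add_mem _ hx hy

lemma InCone.exists_rep {a b : ℝ} {n : ℕ} {P : Polynomial ℂ} (h : InCone a b n P) :
    ∃ (m : ℕ) (t : Fin m → ℝ) (flag : Fin m → Bool) (r : Fin m → Polynomial ℂ),
      (∀ i, 0 ≤ t i) ∧
      (∀ i, if flag i then (r i).natDegree ≤ n else (r i).natDegree ≤ n - 1) ∧
      P = ∑ i, Polynomial.C ((t i : ℝ) : ℂ) *
          (if flag i then Nq (r i)
            else (X - Polynomial.C ((a : ℝ) : ℂ)) * (X - Polynomial.C ((b : ℝ) : ℂ)) * Nq (r i)) := by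
  obtain ⟨l, hl, rfl⟩ := AddSubmonoid.exists_list_of_mem_closure h
  have H : ∀ i : Fin l.length, ∃ (c : ℝ) (flag : Bool) (f : Polynomial ℂ), 0 ≤ c ∧
      (if flag then f.natDegree ≤ n else f.natDegree ≤ n - 1) ∧
      l.get i = Polynomial.C ((c : ℝ) : ℂ) *
        (if flag then Nq f
          else (X - Polynomial.C ((a : ℝ) : ℂ)) * (X - Polynomial.C ((b : ℝ) : ℂ)) * Nq f) := by
    intro i
    obtain ⟨c, f, hc, hcase⟩ := hl (l.get i) (l.get_mem i)
    rcases hcase with ⟨hd, he⟩ | ⟨h1, hd, he⟩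
    · exact ⟨c, true, f, hc, by simpa using hd, by simpa using he⟩
    · refine ⟨c, false, f, hc, by simp; omega, ?_⟩
      simpa [W, mul_assoc] using he
  choose t flag r h1 h2 h3 using H
  refine ⟨l.length, t, flag, r, h1, h2, ?_⟩
  rw [← Fin.sum_univ_getElem]
  exact Finset.sum_congr rfl (fun i _ => by rw [← h3 i]; rfl)

lemma Nq_real_linear (t : ℝ) : Nq (X - Polynomial.C ((t : ℝ) : ℂ)) =
    (X - Polynomial.C ((t : ℝ) : ℂ)) ^ 2 := by
  simp [Nq, Polynomial.map_sub, Complex.conj_ofReal]; ring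

lemma inCone_sq {a b : ℝ} {n : ℕ} (hn : 1 ≤ n) (c : ℝ) (hc : 0 ≤ c) (t : ℝ) :
    InCone a b n (Polynomial.C ((c : ℝ) : ℂ) * (X - Polynomial.C ((t : ℝ) : ℂ)) ^ 2) := by
  rw [← Nq_real_linear]
  exact inCone_N c hc ((natDegree_X_sub_C_le _).trans hn)

lemma inCone_W {a b : ℝ} {n : ℕ} (hn : 1 ≤ n) (c : ℝ) (hc : 0 ≤ c) :
    InCone a b n (Polynomial.C ((c : ℝ) : ℂ) * W a b) := by
  have := inCone_WN (a := a) (b := b) c hc hn (f := 1) (by simpa using hn)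
  simpa [Nq] using this

lemma inCone_const {a b : ℝ} {n : ℕ} (c : ℝ) (hc : 0 ≤ c) :
    InCone a b n (Polynomial.C ((c : ℝ) : ℂ)) := by
  have := inCone_N (a := a) (b := b) (n := n) c hc (f := 1) (by simp)
  simpa [Nq] using this

lemma inCone_Nq {a b : ℝ} {n : ℕ} {f : Polynomial ℂ} (hf : f.natDegree ≤ n) :
    InCone a b n (Nq f) := by
  have := inCone_N (a := a) (b := b) 1 zero_le_one hf
  simpa using this

lemma quad_cone {a b : ℝ} (hab : a ≤ b) {r s : ℝ} (hra : a ≤ r) (hrb : r ≤ b)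
    (hsa : a ≤ s) (hsb : s ≤ b) :
    InCone a b 1 ((X - Polynomial.C ((r : ℝ) : ℂ)) * (X - Polynomial.C ((s : ℝ) : ℂ))) := by
  rcases eq_or_lt_of_le hab with rfl | hlt
  · have hr : r = a := le_antisymm hrb hra
    have hs : s = a := le_antisymm hsb hsa
    rw [hr, hs]
    have := inCone_sq (a := a) (b := a) (n := 1) le_rfl 1 zero_le_one a
    simpa [sq] using this
  · set u : ℝ := (r - a) * (s - b) with hu_def
    set v : ℝ := (r - b) * (s - a) with hv_def
    have hu : u ≤ 0 := mul_nonpos_of_nonneg_of_nonpos (by linarith) (by linarith)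
    have hv : v ≤ 0 := mul_nonpos_of_nonpos_of_nonneg (by linarith) (by linarith)
    have huv : 0 ≤ u * v := by nlinarith
    have hsq : Real.sqrt (u * v) ^ 2 = u * v := Real.sq_sqrt huv
    have hsqnn : 0 ≤ Real.sqrt (u * v) := Real.sqrt_nonneg _
    set ν : ℝ := -(u + v) - 2 * Real.sqrt (u * v) with hν_def
    have key : ν ^ 2 + 2 * (u + v) * ν + (u - v) ^ 2 = 0 := by
      rw [hν_def]; linear_combination 4 * hsq
    have hmid : 0 ≤ (-(u + v)) / 2 := by linarith
    have hν0 : 0 ≤ ν := by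
      have h1 : Real.sqrt (u * v) ≤ (-(u + v)) / 2 := by
        rw [show (-(u + v)) / 2 = Real.sqrt (((-(u + v)) / 2) ^ 2) from (Real.sqrt_sq hmid).symm]
        exact Real.sqrt_le_sqrt (by nlinarith [sq_nonneg (u - v)])
      rw [hν_def]; linarith
    have hd0 : (0:ℝ) < (b - a) ^ 2 := pow_pos (by linarith) 2
    have hνd : ν ≤ (b - a) ^ 2 := by
      have h2 : -(u + v) ≤ (b - a) ^ 2 := by
        nlinarith [mul_nonneg (sub_nonneg.2 hra) (sub_nonneg.2 hsa),
          mul_nonneg (sub_nonneg.2 hrb) (sub_nonneg.2 hsb)]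
      rw [hν_def]; linarith
    set μ : ℝ := ν / (b - a) ^ 2 with hμ_def
    have hμ0 : 0 ≤ μ := div_nonneg hν0 hd0.le
    have hμ1 : μ ≤ 1 := (div_le_one hd0).2 hνd
    have Dμ : (r + s - μ * (a + b)) ^ 2 - 4 * (1 - μ) * (r * s - μ * (a * b)) = 0 := by
      have hμd : μ * (b - a) ^ 2 = ν := by rw [hμ_def]; field_simp
      have hid : (b - a) ^ 2 * ((r + s - μ * (a + b)) ^ 2 - 4 * (1 - μ) * (r * s - μ * (a * b)))
          = ν ^ 2 + 2 * (u + v) * ν + (u - v) ^ 2 := by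
        rw [hu_def, hv_def]
        linear_combination (μ * (b - a) ^ 2 + ν + 2 * ((r - a) * (s - b) + (r - b) * (s - a))) * hμd
      have h0 : (b - a) ^ 2 * ((r + s - μ * (a + b)) ^ 2 - 4 * (1 - μ) * (r * s - μ * (a * b))) = 0 :=
        hid.trans key
      exact (mul_eq_zero.1 h0).resolve_left hd0.ne'
    rcases lt_or_eq_of_le hμ1 with hμlt | hμeq
    · have h1μ : (0:ℝ) < 1 - μ := by linarith
      set t : ℝ := (r + s - μ * (a + b)) / (2 * (1 - μ)) with ht_def
      have hne : (1 - μ) ≠ 0 := h1μ.ne'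
      have e1 : r + s = 2 * ((1 - μ) * t) + μ * (a + b) := by
        rw [ht_def]; field_simp; ring
      have h4 : (4 * (1 - μ)) * ((1 - μ) * t ^ 2) = (r + s - μ * (a + b)) ^ 2 := by
        rw [ht_def]; field_simp; ring
      have h5 : (4 * (1 - μ)) * ((1 - μ) * t ^ 2 + μ * (a * b)) = (4 * (1 - μ)) * (r * s) := by
        linear_combination h4 + Dμ
      have e2 : r * s = (1 - μ) * t ^ 2 + μ * (a * b) :=
        (mul_left_cancel₀ (by positivity) h5).symm
      have ec1 : ((r : ℂ)) + (s : ℂ) = 2 * ((1 - (μ : ℂ)) * (t : ℂ)) + (μ : ℂ) * ((a : ℂ) + (b : ℂ)) := by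
        exact_mod_cast congrArg (fun x : ℝ => (x : ℂ)) e1
      have ec2 : ((r : ℂ)) * (s : ℂ) = (1 - (μ : ℂ)) * (t : ℂ) ^ 2 + (μ : ℂ) * ((a : ℂ) * (b : ℂ)) := by
        exact_mod_cast congrArg (fun x : ℝ => (x : ℂ)) e2
      have c1 : Polynomial.C ((r:ℂ)) + Polynomial.C ((s:ℂ)) =
          2 * ((1 - Polynomial.C ((μ:ℂ))) * Polynomial.C ((t:ℂ))) +
            Polynomial.C ((μ:ℂ)) * (Polynomial.C ((a:ℂ)) + Polynomial.C ((b:ℂ))) := by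
        have := congrArg (Polynomial.C : ℂ →+* Polynomial ℂ) ec1
        simpa [map_add, map_mul, map_sub, map_one, map_ofNat] using this
      have c2 : Polynomial.C ((r:ℂ)) * Polynomial.C ((s:ℂ)) =
          (1 - Polynomial.C ((μ:ℂ))) * Polynomial.C ((t:ℂ)) ^ 2 +
            Polynomial.C ((μ:ℂ)) * (Polynomial.C ((a:ℂ)) * Polynomial.C ((b:ℂ))) := by
        have := congrArg (Polynomial.C : ℂ →+* Polynomial ℂ) ec2
        simpa [map_add, map_mul, map_sub, map_one, map_pow] using this
      have hidC : (X - Polynomial.C ((r:ℝ):ℂ)) * (X - Polynomial.C ((s:ℝ):ℂ)) =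
          Polynomial.C ((1 - μ : ℝ) : ℂ) * (X - Polynomial.C ((t:ℝ):ℂ)) ^ 2 +
            Polynomial.C ((μ : ℝ) : ℂ) * W a b := by
        have hcast : ((1 - μ : ℝ) : ℂ) = 1 - (μ : ℂ) := by push_cast; ring
        rw [hcast, W, map_sub, map_one]
        linear_combination (-(X : Polynomial ℂ)) * c1 + c2
      rw [hidC]
      exact (inCone_sq le_rfl (1 - μ) h1μ.le t).add (inCone_W le_rfl μ hμ0)
    · have hrs_sum : r + s = a + b := by
        rw [hμeq] at Dμ
        have h0 : (r + s - (a + b)) ^ 2 = 0 := by linear_combination Dμ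
        have := pow_eq_zero_iff (n := 2) (by norm_num) |>.1 h0
        linarith
      have hr' : r = a + b - s := by linarith
      have hrs_prod : 0 ≤ r * s - a * b := by
        rw [hr']; nlinarith [mul_nonneg (sub_nonneg.2 hsa) (sub_nonneg.2 hsb)]
      have ec1 : ((r : ℂ)) + (s : ℂ) = (a : ℂ) + (b : ℂ) := by
        exact_mod_cast congrArg (fun x : ℝ => (x : ℂ)) hrs_sum
      have ec2 : ((r : ℂ)) * (s : ℂ) = (a : ℂ) * (b : ℂ) + ((r * s - a * b : ℝ) : ℂ) := by
        push_cast; ring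
      have c1 := congrArg (Polynomial.C : ℂ →+* Polynomial ℂ) ec1
      have c2 := congrArg (Polynomial.C : ℂ →+* Polynomial ℂ) ec2
      simp only [map_add, map_mul] at c1 c2
      have hidC : (X - Polynomial.C ((r:ℝ):ℂ)) * (X - Polynomial.C ((s:ℝ):ℂ)) =
          Polynomial.C ((1 : ℝ) : ℂ) * W a b + Polynomial.C ((r * s - a * b : ℝ) : ℂ) := by
        rw [W, Complex.ofReal_one, map_one, one_mul]
        linear_combination (-(X : Polynomial ℂ)) * c1 + c2
      rw [hidC]
      exact (inCone_W le_rfl 1 zero_le_one).add (inCone_const _ hrs_prod)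

lemma eval_nonneg_of_left {g : Polynomial ℝ} {c : ℝ}
    (h : ∀ᶠ x in nhdsWithin c (Set.Iio c), 0 ≤ g.eval x) : 0 ≤ g.eval c :=
  ge_of_tendsto ((g.continuousAt).continuousWithinAt.tendsto) h

lemma eval_nonneg_of_right {g : Polynomial ℝ} {c : ℝ}
    (h : ∀ᶠ x in nhdsWithin c (Set.Ioi c), 0 ≤ g.eval x) : 0 ≤ g.eval c :=
  ge_of_tendsto ((g.continuousAt).continuousWithinAt.tendsto) h

lemma eval_nonneg_left_of_lt {g : Polynomial ℝ} {c : ℝ} (h : ∀ x < c, 0 ≤ g.eval x) :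
    0 ≤ g.eval c :=
  eval_nonneg_of_left (eventually_nhdsWithin_of_forall (fun x hx => h x hx))

lemma eval_nonneg_right_of_gt {g : Polynomial ℝ} {c : ℝ} (h : ∀ x > c, 0 ≤ g.eval x) :
    0 ≤ g.eval c :=
  eval_nonneg_of_right (eventually_nhdsWithin_of_forall (fun x hx => h x hx))

lemma eval_nonneg_left_of_Ioo {g : Polynomial ℝ} {c d : ℝ} (hdc : d < c)
    (h : ∀ x ∈ Set.Ioo d c, 0 ≤ g.eval x) : 0 ≤ g.eval c :=
  eval_nonneg_of_left (Filter.eventually_of_mem (Ioo_mem_nhdsLT_of_mem ⟨hdc, le_rfl⟩) h)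

lemma eval_nonneg_right_of_Ioo' {g : Polynomial ℝ} {c d : ℝ} (hcd : c < d)
    (h : ∀ x ∈ Set.Ioo c d, 0 ≤ g.eval x) : 0 ≤ g.eval c :=
  eval_nonneg_of_right (Filter.eventually_of_mem (Ioo_mem_nhdsGT_of_mem ⟨le_rfl, hcd⟩) h)

lemma key (a b : ℝ) (hab : a ≤ b) : ∀ k : ℕ, ∀ q : Polynomial ℝ, q.natDegree = k → Even k →
    (∀ x : ℝ, x ≤ a ∨ b ≤ x → 0 ≤ q.eval x) →
    InCone a b (k / 2) (q.map (algebraMap ℝ ℂ)) := by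
  intro k
  induction k using Nat.strong_induction_on with
  | _ k IH =>
  intro q hk hev hpos
  rcases Nat.eq_zero_or_pos k with rfl | hkpos
  · obtain ⟨c, hc⟩ := natDegree_eq_zero.1 hk
    have hc0 : 0 ≤ c := by
      have := hpos b (Or.inr le_rfl); rw [← hc] at this; simpa using this
    rw [← hc, Polynomial.map_C]
    exact inCone_const c hc0
  · have hk2 : 2 ≤ k := by rw [Nat.even_iff] at hev; omega
    have hq0 : q ≠ 0 := fun h => by rw [h, natDegree_zero] at hk; omega
    have tail : ∀ p q₂ : Polynomial ℝ, q = p * q₂ → p.natDegree = 2 →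
        InCone a b 1 (p.map (algebraMap ℝ ℂ)) →
        (∀ x : ℝ, x ≤ a ∨ b ≤ x → 0 ≤ q₂.eval x) →
        InCone a b (k / 2) (q.map (algebraMap ℝ ℂ)) := by
      intro p q₂ hfact hpdeg hcone hq₂
      have hp0 : p ≠ 0 := fun h => by simp [h] at hpdeg
      have hq₂0 : q₂ ≠ 0 := fun h => hq0 (by rw [hfact, h, mul_zero])
      have hdeg := natDegree_mul hp0 hq₂0
      rw [← hfact, hk, hpdeg] at hdeg
      have hd₂ : q₂.natDegree = k - 2 := by omega
      have hev' : Even (k - 2) := by rw [Nat.even_iff] at hev ⊢; omega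
      have hIH := IH (k - 2) (by omega) q₂ hd₂ hev' hq₂
      have hmul := hcone.mul hIH
      rw [hfact, Polynomial.map_mul]
      have harith : 1 + (k - 2) / 2 = k / 2 := by rw [Nat.even_iff] at hev; omega
      rwa [harith] at hmul
    have hQdeg : 0 < (q.map (algebraMap ℝ ℂ)).degree := by
      rw [← natDegree_pos_iff_degree_pos,
        natDegree_map_eq_of_injective (algebraMap ℝ ℂ).injective, hk]
      omega
    obtain ⟨z, hz⟩ := Complex.exists_root hQdeg
    by_cases him : z.im = 0
    · -- real root
      set r := z.re with hr_def
      have hzr : z = (r : ℝ) := by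
        rw [← Complex.re_add_im z, him]; simp [hr_def]
      have hqr : q.eval r = 0 := by
        have h1 : (q.map (algebraMap ℝ ℂ)).eval ((r : ℝ) : ℂ) = 0 := by rw [← hzr]; exact hz
        rw [Polynomial.eval_map, show ((r:ℝ):ℂ) = algebraMap ℝ ℂ r from rfl,
          Polynomial.eval₂_at_apply] at h1
        simpa using h1
      obtain ⟨q₁, hq₁⟩ := (Polynomial.dvd_iff_isRoot).2 hqr
      have hq₁ev : ∀ x : ℝ, q.eval x = (x - r) * q₁.eval x := by
        intro x; rw [hq₁]; simp
      rcases lt_or_ge r a with hra | hra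
      · -- r < a : double root at r
        have hq₁r : q₁.eval r = 0 := by
          have hle : q₁.eval r ≤ 0 := by
            have := eval_nonneg_left_of_lt (g := -q₁) (c := r) (fun x hx => by
              have h := hpos x (Or.inl (by linarith))
              rw [hq₁ev x] at h
              simp only [eval_neg]
              nlinarith)
            simpa using this
          have hge : 0 ≤ q₁.eval r :=
            eval_nonneg_right_of_Ioo' hra (fun x hx => by
              have h := hpos x (Or.inl hx.2.le)
              rw [hq₁ev x] at h
              nlinarith [hx.1])
          linarith
        obtain ⟨q₂, hq₂⟩ := (Polynomial.dvd_iff_isRoot).2 hq₁r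
        have hfact : q = (X - Polynomial.C r) * (X - Polynomial.C r) * q₂ := by
          rw [hq₁, hq₂]; ring
        have hqev : ∀ x : ℝ, q.eval x = (x - r) ^ 2 * q₂.eval x := by
          intro x; rw [hfact]; simp only [eval_mul, eval_sub, eval_X, eval_C]; try ring
        have hgen : ∀ x : ℝ, x ≤ a ∨ b ≤ x → x ≠ r → 0 ≤ q₂.eval x := by
          intro x hx hne
          have h := hpos x hx
          rw [hqev x] at h
          have hpos2 : 0 < (x - r) ^ 2 :=
            (sq_nonneg _).lt_of_ne (Ne.symm (pow_ne_zero 2 (sub_ne_zero.2 hne)))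
          exact (mul_nonneg_iff_of_pos_left hpos2).1 h
        refine tail _ _ hfact ?_ ?_ ?_
        · simp [natDegree_mul (X_sub_C_ne_zero r) (X_sub_C_ne_zero r), natDegree_X_sub_C]
        · have hmap : ((X - Polynomial.C r) * (X - Polynomial.C r)).map (algebraMap ℝ ℂ)
              = Nq (X - Polynomial.C ((r:ℝ):ℂ)) := by
            rw [Nq_real_linear]
            simp [Polynomial.map_mul, Polynomial.map_sub, sq]
          rw [hmap]
          exact inCone_Nq ((natDegree_X_sub_C_le _))
        · intro x hx
          rcases eq_or_ne x r with rfl | hne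
          · exact eval_nonneg_left_of_lt (fun y hy =>
              hgen y (Or.inl (by linarith)) (ne_of_lt hy))
          · exact hgen x hx hne
      · rcases le_or_gt r b with hrb | hrb
        · -- a ≤ r ≤ b : find second root s in [a,b]
          have hq₁a : q₁.eval a ≤ 0 := by
            have := eval_nonneg_left_of_lt (g := -q₁) (c := a) (fun x hx => by
              have h := hpos x (Or.inl hx.le)
              rw [hq₁ev x] at h
              simp only [eval_neg]
              nlinarith)
            simpa using this
          have hq₁b : 0 ≤ q₁.eval b := by
            refine eval_nonneg_right_of_gt (fun x hx => ?_)
            have h := hpos x (Or.inr hx.le)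
            rw [hq₁ev x] at h
            nlinarith
          have hmem : (0:ℝ) ∈ Set.Icc (q₁.eval a) (q₁.eval b) := ⟨hq₁a, hq₁b⟩
          have hivt := intermediate_value_Icc hab (Polynomial.continuous q₁).continuousOn hmem
          obtain ⟨s, hsI, hs0⟩ := hivt
          obtain ⟨q₂, hq₂⟩ := (Polynomial.dvd_iff_isRoot).2 hs0
          have hfact : q = (X - Polynomial.C r) * (X - Polynomial.C s) * q₂ := by
            rw [hq₁, hq₂]; ring
          have hqev : ∀ x : ℝ, q.eval x = ((x - r) * (x - s)) * q₂.eval x := by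
            intro x; rw [hfact]; simp only [eval_mul, eval_sub, eval_X, eval_C]; try ring
          have hgen : ∀ x : ℝ, x < a ∨ b < x → 0 ≤ q₂.eval x := by
            intro x hx
            have hprod : 0 < (x - r) * (x - s) := by
              rcases hx with h | h
              · exact mul_pos_of_neg_of_neg (by linarith [hsI.1]) (by linarith [hsI.1])
              · exact mul_pos (by linarith [hsI.2]) (by linarith [hsI.2])
            have h := hpos x (by rcases hx with h | h; exacts [Or.inl h.le, Or.inr h.le])
            rw [hqev x] at h
            exact (mul_nonneg_iff_of_pos_left hprod).1 h
          refine tail _ _ hfact ?_ ?_ ?_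
          · simp [natDegree_mul (X_sub_C_ne_zero r) (X_sub_C_ne_zero s), natDegree_X_sub_C]
          · have hmap : ((X - Polynomial.C r) * (X - Polynomial.C s)).map (algebraMap ℝ ℂ)
                = (X - Polynomial.C ((r:ℝ):ℂ)) * (X - Polynomial.C ((s:ℝ):ℂ)) := by
              simp [Polynomial.map_mul, Polynomial.map_sub]
            rw [hmap]
            exact quad_cone hab hra hrb hsI.1 hsI.2
          · intro x hx
            rcases hx with h | h
            · rcases lt_or_eq_of_le h with h' | rfl
              · exact hgen x (Or.inl h')
              · exact eval_nonneg_left_of_lt (fun y hy => hgen y (Or.inl hy))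
            · rcases lt_or_eq_of_le h with h' | rfl
              · exact hgen x (Or.inr h')
              · exact eval_nonneg_right_of_gt (fun y hy => hgen y (Or.inr hy))
        · -- b < r : double root at r
          have hq₁r : q₁.eval r = 0 := by
            have hge : 0 ≤ q₁.eval r := by
              refine eval_nonneg_right_of_gt (fun x hx => ?_)
              have h := hpos x (Or.inr (by linarith))
              rw [hq₁ev x] at h
              nlinarith
            have hle : q₁.eval r ≤ 0 := by
              have := eval_nonneg_left_of_Ioo (g := -q₁) hrb (fun x hx => by
                have h := hpos x (Or.inr hx.1.le)
                rw [hq₁ev x] at h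
                simp only [eval_neg]
                nlinarith [hx.2])
              simpa using this
            linarith
          obtain ⟨q₂, hq₂⟩ := (Polynomial.dvd_iff_isRoot).2 hq₁r
          have hfact : q = (X - Polynomial.C r) * (X - Polynomial.C r) * q₂ := by
            rw [hq₁, hq₂]; ring
          have hqev : ∀ x : ℝ, q.eval x = (x - r) ^ 2 * q₂.eval x := by
            intro x; rw [hfact]; simp only [eval_mul, eval_sub, eval_X, eval_C]; try ring
          have hgen : ∀ x : ℝ, x ≤ a ∨ b ≤ x → x ≠ r → 0 ≤ q₂.eval x := by
            intro x hx hne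
            have h := hpos x hx
            rw [hqev x] at h
            have hpos2 : 0 < (x - r) ^ 2 :=
            (sq_nonneg _).lt_of_ne (Ne.symm (pow_ne_zero 2 (sub_ne_zero.2 hne)))
            exact (mul_nonneg_iff_of_pos_left hpos2).1 h
          refine tail _ _ hfact ?_ ?_ ?_
          · simp [natDegree_mul (X_sub_C_ne_zero r) (X_sub_C_ne_zero r), natDegree_X_sub_C]
          · have hmap : ((X - Polynomial.C r) * (X - Polynomial.C r)).map (algebraMap ℝ ℂ)
                = Nq (X - Polynomial.C ((r:ℝ):ℂ)) := by
              rw [Nq_real_linear]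
              simp [Polynomial.map_mul, Polynomial.map_sub, sq]
            rw [hmap]
            exact inCone_Nq ((natDegree_X_sub_C_le _))
          · intro x hx
            rcases eq_or_ne x r with rfl | hne
            · exact eval_nonneg_right_of_gt (fun y hy =>
                hgen y (Or.inr (by linarith)) (ne_of_gt hy))
            · exact hgen x hx hne
    · -- nonreal root
      have haev : aeval z q = 0 := by
        rwa [aeval_def, ← Polynomial.eval_map]
      have hdvd := Polynomial.quadratic_dvd_of_aeval_eq_zero_im_ne_zero q haev him
      obtain ⟨q₂, hq₂⟩ := hdvd
      set p : Polynomial ℝ := X ^ 2 - Polynomial.C (2 * z.re) * X + Polynomial.C (‖z‖ ^ 2) with hp_def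
      have hnorm : ‖z‖ ^ 2 = z.re ^ 2 + z.im ^ 2 := by
        rw [Complex.sq_norm, Complex.normSq_apply]; ring
      have hpev : ∀ x : ℝ, p.eval x = (x - z.re) ^ 2 + z.im ^ 2 := by
        intro x; rw [hp_def]; simp only [eval_add, eval_sub, eval_mul, eval_pow, eval_X, eval_C]; rw [hnorm]; ring
      have hppos : ∀ x : ℝ, 0 < p.eval x := by
        intro x; rw [hpev x]
        have : 0 < z.im ^ 2 := (sq_nonneg _).lt_of_ne (Ne.symm (pow_ne_zero 2 him))
        nlinarith [sq_nonneg (x - z.re)]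
      refine tail p q₂ hq₂ ?_ ?_ ?_
      · have hform : p = Polynomial.C 1 * X ^ 2 + Polynomial.C (-(2 * z.re)) * X
            + Polynomial.C (‖z‖ ^ 2) := by rw [hp_def]; simp only [map_one, map_neg]; ring
        rw [hform]
        exact natDegree_quadratic one_ne_zero
      · have hmap : p.map (algebraMap ℝ ℂ) = Nq (X - Polynomial.C z) := by
          have h1 : ((2 * z.re : ℝ) : ℂ) = z + (starRingEnd ℂ) z := by
            rw [Complex.add_conj]; try norm_num
          have h2 : ((‖z‖ ^ 2 : ℝ) : ℂ) = z * (starRingEnd ℂ) z := by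
            rw [Complex.mul_conj']; try norm_num
          rw [hp_def, Nq]
          simp only [Polynomial.map_add, Polynomial.map_sub, Polynomial.map_mul,
            Polynomial.map_pow, Polynomial.map_X, Polynomial.map_C, Complex.coe_algebraMap]
          rw [h1, h2, map_add, map_mul]
          ring
        rw [hmap]
        exact inCone_Nq ((natDegree_X_sub_C_le _))
      · intro x hx
        have h := hpos x hx
        rw [hq₂] at h
        simp only [eval_mul] at h
        exact (mul_nonneg_iff_of_pos_left (hppos x)).1 h

end DecompAux

theorem even_degree_poly_decomposition (a b : ℝ) (hab : a ≤ b)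
    (q : Polynomial ℝ) (k : ℕ) (hk : q.natDegree = k) (heven : Even k)
    (hpos : ∀ x : ℝ, x ≤ a ∨ b ≤ x → 0 ≤ q.eval x) :
    ∃ (m : ℕ) (t : Fin m → ℝ) (flag : Fin m → Bool) (r : Fin m → Polynomial ℂ),
      (∀ i, 0 ≤ t i) ∧
      (∀ i, if flag i then (r i).natDegree ≤ k / 2 else (r i).natDegree ≤ k / 2 - 1) ∧
      q.map (algebraMap ℝ ℂ) =
        ∑ i, Polynomial.C ((t i : ℝ) : ℂ) *
          (if flag i then Nq (r i)
            else (X - Polynomial.C ((a : ℝ) : ℂ)) * (X - Polynomial.C ((b : ℝ) : ℂ)) * Nq (r i)) := by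
  exact (DecompAux.key a b hab k q hk heven hpos).exists_rep
end

section
/- Let F ⊂ ℝ be unbounded both from below and from above, and let f : F → ℝ be 2-monotone (i.e. for all 2×2 Hermitian matrices A ≤ B with spectra in F, f(A) ≤ f(B)). Then f is affine: there exist constants α, β ∈ ℝ with f(x) = αx + β for all x ∈ F. -/
open Matrix
open scoped ComplexOrder

private lemma traceSum (H : Matrix (Fin 2) (Fin 2) ℂ) (hH : H.IsHermitian) :
    H.trace = ∑ i, (hH.eigenvalues i : ℂ) := by
  conv_lhs => rw [hH.spectral_theorem]
  rw [Unitary.conjStarAlgAut_apply, Matrix.trace_mul_cycle, (Matrix.mem_unitaryGroup_iff').mp (hH.eigenvectorUnitary).2,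
    one_mul, Matrix.trace_diagonal]
  simp

private lemma detProd (H : Matrix (Fin 2) (Fin 2) ℂ) (hH : H.IsHermitian) :
    H.det = ∏ i, (hH.eigenvalues i : ℂ) :=
  hH.det_eq_prod_eigenvalues

private lemma eigTwo (H : Matrix (Fin 2) (Fin 2) ℂ) (hH : H.IsHermitian) (x y : ℝ)
    (htr : H.trace = ((x + y : ℝ) : ℂ)) (hdet : H.det = ((x * y : ℝ) : ℂ)) :
    ∀ i, hH.eigenvalues i = x ∨ hH.eigenvalues i = y := by
  have h1 : ((hH.eigenvalues 0 + hH.eigenvalues 1 : ℝ) : ℂ) = ((x + y : ℝ) : ℂ) := by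
    rw [← htr, traceSum H hH, Fin.sum_univ_two]; push_cast; ring
  have h2 : ((hH.eigenvalues 0 * hH.eigenvalues 1 : ℝ) : ℂ) = ((x * y : ℝ) : ℂ) := by
    rw [← hdet, detProd H hH, Fin.prod_univ_two]; push_cast; ring
  have hs : hH.eigenvalues 0 + hH.eigenvalues 1 = x + y := by exact_mod_cast h1
  have hp : hH.eigenvalues 0 * hH.eigenvalues 1 = x * y := by exact_mod_cast h2
  intro i
  have hi : i = 0 ∨ i = 1 := by omega
  rcases hi with hi | hi <;> subst hi
  · have hq : (hH.eigenvalues 0 - x) * (hH.eigenvalues 0 - y) = 0 := by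
      linear_combination (hH.eigenvalues 0) * hs - hp
    rcases mul_eq_zero.mp hq with h | h
    · exact Or.inl (by linarith [sub_eq_zero.mp h])
    · exact Or.inr (by linarith [sub_eq_zero.mp h])
  · have hq : (hH.eigenvalues 1 - x) * (hH.eigenvalues 1 - y) = 0 := by
      linear_combination (hH.eigenvalues 1) * hs - hp
    rcases mul_eq_zero.mp hq with h | h
    · exact Or.inl (by linarith [sub_eq_zero.mp h])
    · exact Or.inr (by linarith [sub_eq_zero.mp h])

private lemma cfcAffine (H : Matrix (Fin 2) (Fin 2) ℂ) (hH : H.IsHermitian) (f : ℝ → ℝ)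
    (α β : ℝ) (h : ∀ i, f (hH.eigenvalues i) = α * hH.eigenvalues i + β) :
    hH.cfc f = (α:ℂ) • H + (β:ℂ) • (1 : Matrix (Fin 2) (Fin 2) ℂ) := by
  rw [Matrix.IsHermitian.cfc]
  have hd : diagonal (RCLike.ofReal ∘ f ∘ hH.eigenvalues)
      = (α:ℂ) • diagonal (RCLike.ofReal ∘ hH.eigenvalues) + (β:ℂ) • (1 : Matrix (Fin 2) (Fin 2) ℂ) := by
    ext i j
    by_cases hij : i = j
    · subst hij
      simp only [Matrix.diagonal_apply_eq, Function.comp_apply, Pi.add_apply,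
        Matrix.add_apply, Matrix.smul_apply, Matrix.one_apply_eq, smul_eq_mul, mul_one, h i]
      rw [show ((RCLike.ofReal (hH.eigenvalues i)) : ℂ) = ((hH.eigenvalues i : ℝ) : ℂ) from rfl]
      push_cast; rfl
    · simp [Matrix.diagonal_apply_ne _ hij, Matrix.one_apply_ne hij]
  rw [hd]
  have hU : (hH.eigenvectorUnitary : Matrix (Fin 2) (Fin 2) ℂ) * star (hH.eigenvectorUnitary : Matrix (Fin 2) (Fin 2) ℂ) = 1 :=
    (Matrix.mem_unitaryGroup_iff).mp (hH.eigenvectorUnitary).2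
  rw [Unitary.conjStarAlgAut_apply, Matrix.mul_add, Matrix.add_mul, Matrix.mul_smul, Matrix.smul_mul, Matrix.mul_smul,
    Matrix.smul_mul, Matrix.mul_one, hU, ← Unitary.conjStarAlgAut_apply (S := ℂ), ← hH.spectral_theorem]

private lemma psdTraceDet (M : Matrix (Fin 2) (Fin 2) ℂ) (h : M.PosSemidef) :
    ∃ s p : ℝ, 0 ≤ s ∧ 0 ≤ p ∧ M.trace = (s : ℂ) ∧ M.det = (p : ℂ) := by
  have e0 := h.eigenvalues_nonneg 0
  have e1 := h.eigenvalues_nonneg 1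
  exact ⟨_, _, add_nonneg e0 e1, mul_nonneg e0 e1,
    by rw [traceSum M h.1, Fin.sum_univ_two]; push_cast; ring,
    by rw [detProd M h.1, Fin.prod_univ_two]; push_cast; ring⟩

section main

variable {F : Set ℝ} {f : ℝ → ℝ}

private lemma mono_of_hmono
    (hmono : ∀ (A B : Matrix (Fin 2) (Fin 2) ℂ) (hA : A.IsHermitian) (hB : B.IsHermitian),
      (∀ i, hA.eigenvalues i ∈ F) → (∀ i, hB.eigenvalues i ∈ F) →
      (B - A).PosSemidef → (hB.cfc f - hA.cfc f).PosSemidef)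
    {x y : ℝ} (hx : x ∈ F) (hy : y ∈ F) (hxy : x ≤ y) : f x ≤ f y := by
  set A : Matrix (Fin 2) (Fin 2) ℂ := !![(x:ℂ), 0; 0, (x:ℂ)] with hAdef
  set B : Matrix (Fin 2) (Fin 2) ℂ := !![(y:ℂ), 0; 0, (y:ℂ)] with hBdef
  have hA : A.IsHermitian := by
    ext i j; fin_cases i <;> fin_cases j <;>
      simp [hAdef, Matrix.conjTranspose_apply, Complex.conj_ofReal]
  have hB : B.IsHermitian := by
    ext i j; fin_cases i <;> fin_cases j <;>
      simp [hBdef, Matrix.conjTranspose_apply, Complex.conj_ofReal]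
  have eigA : ∀ i, hA.eigenvalues i = x ∨ hA.eigenvalues i = x := by
    refine eigTwo A hA x x ?_ ?_
    · rw [Matrix.trace_fin_two, show A 0 0 = (x:ℂ) from rfl, show A 1 1 = (x:ℂ) from rfl]
      push_cast; ring
    · rw [Matrix.det_fin_two, show A 0 0 = (x:ℂ) from rfl, show A 1 1 = (x:ℂ) from rfl,
        show A 0 1 = (0:ℂ) from rfl, show A 1 0 = (0:ℂ) from rfl]
      push_cast; ring
  have eigB : ∀ i, hB.eigenvalues i = y ∨ hB.eigenvalues i = y := by
    refine eigTwo B hB y y ?_ ?_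
    · rw [Matrix.trace_fin_two, show B 0 0 = (y:ℂ) from rfl, show B 1 1 = (y:ℂ) from rfl]
      push_cast; ring
    · rw [Matrix.det_fin_two, show B 0 0 = (y:ℂ) from rfl, show B 1 1 = (y:ℂ) from rfl,
        show B 0 1 = (0:ℂ) from rfl, show B 1 0 = (0:ℂ) from rfl]
      push_cast; ring
  have memA : ∀ i, hA.eigenvalues i ∈ F := fun i => by rcases eigA i with h | h <;> rw [h] <;> exact hx
  have memB : ∀ i, hB.eigenvalues i ∈ F := fun i => by rcases eigB i with h | h <;> rw [h] <;> exact hy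
  have hBA : (B - A).PosSemidef := by
    have hdiag : B - A = Matrix.diagonal (fun _ => ((y - x : ℝ) : ℂ)) := by
      ext i j; fin_cases i <;> fin_cases j <;>
        simp [hAdef, hBdef, Matrix.diagonal] <;> push_cast <;> ring
    rw [hdiag]
    exact Matrix.PosSemidef.diagonal (fun i => Complex.zero_le_real.mpr (by linarith))
  have hD := hmono A B hA hB memA memB hBA
  have cfcA : hA.cfc f = ((0:ℝ):ℂ) • A + ((f x : ℝ):ℂ) • (1 : Matrix (Fin 2) (Fin 2) ℂ) :=
    cfcAffine A hA f 0 (f x) (fun i => by rcases eigA i with h | h <;> rw [h] <;> ring)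
  have cfcB : hB.cfc f = ((0:ℝ):ℂ) • B + ((f y : ℝ):ℂ) • (1 : Matrix (Fin 2) (Fin 2) ℂ) :=
    cfcAffine B hB f 0 (f y) (fun i => by rcases eigB i with h | h <;> rw [h] <;> ring)
  obtain ⟨s, p, hs, hp, htr, hdet⟩ := psdTraceDet _ hD
  rw [cfcA, cfcB, Matrix.trace_sub, Matrix.trace_add, Matrix.trace_add, Matrix.trace_smul,
    Matrix.trace_smul, Matrix.trace_smul, Matrix.trace_smul, Matrix.trace_one] at htr
  have htr2 : f y + f y - (f x + f x) = s := by
    have : ((f y + f y - (f x + f x) : ℝ) : ℂ) = (s : ℂ) := by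
      rw [← htr]; push_cast; simp; ring
    exact_mod_cast this
  linarith

set_option maxHeartbeats 1000000 in
private lemma keyPoly
    (hmono : ∀ (A B : Matrix (Fin 2) (Fin 2) ℂ) (hA : A.IsHermitian) (hB : B.IsHermitian),
      (∀ i, hA.eigenvalues i ∈ F) → (∀ i, hB.eigenvalues i ∈ F) →
      (B - A).PosSemidef → (hB.cfc f - hA.cfc f).PosSemidef)
    {a b c d : ℝ} (haF : a ∈ F) (hbF : b ∈ F) (hcF : c ∈ F) (hdF : d ∈ F)
    (hab : a < b) (hbc : b < c) (hcd : c < d) :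
    (d - c) * ((f c - f b) + (f d - f c)) * ((f c - f b) * (b - a) - (f b - f a) * (c - b))
      ≤ (c - a) * (f b - f a) * ((f d - f c) * (c - b) - (f c - f b) * (d - c)) := by
  have hca : (0:ℝ) < c - a := by linarith
  have hdb : (0:ℝ) < d - b := by linarith
  set u2 : ℝ := (b - a) * (d - a) / (c - a) with hu2def
  set w2 : ℝ := (c - b) * (d - c) / (c - a) with hw2def
  have hu2 : 0 ≤ u2 := div_nonneg (mul_nonneg (by linarith) (by linarith)) hca.le
  have hw2 : 0 ≤ w2 := div_nonneg (mul_nonneg (by linarith) (by linarith)) hca.le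
  set u : ℝ := Real.sqrt u2 with hudef
  set w : ℝ := Real.sqrt w2 with hwdef
  have hu : u * u = u2 := Real.mul_self_sqrt hu2
  have hw : w * w = w2 := Real.mul_self_sqrt hw2
  set A : Matrix (Fin 2) (Fin 2) ℂ := !![(a:ℂ), 0; 0, (c:ℂ)] with hAdef
  set B : Matrix (Fin 2) (Fin 2) ℂ :=
    !![((a + u * u : ℝ):ℂ), ((u * w : ℝ):ℂ); ((u * w : ℝ):ℂ), ((c + w * w : ℝ):ℂ)] with hBdef
  have hA : A.IsHermitian := by
    ext i j; fin_cases i <;> fin_cases j <;>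
      simp [hAdef, Matrix.conjTranspose_apply, Complex.conj_ofReal]
  have hB : B.IsHermitian := by
    ext i j; fin_cases i <;> fin_cases j <;>
      simp [hBdef, Matrix.conjTranspose_apply, Complex.conj_ofReal]
  have eigA : ∀ i, hA.eigenvalues i = a ∨ hA.eigenvalues i = c := by
    refine eigTwo A hA a c ?_ ?_
    · rw [Matrix.trace_fin_two, show A 0 0 = (a:ℂ) from rfl, show A 1 1 = (c:ℂ) from rfl]
      push_cast; ring
    · rw [Matrix.det_fin_two, show A 0 0 = (a:ℂ) from rfl, show A 1 1 = (c:ℂ) from rfl,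
        show A 0 1 = (0:ℂ) from rfl, show A 1 0 = (0:ℂ) from rfl]
      push_cast; ring
  have hBtr : (a + u * u) + (c + w * w) = b + d := by
    rw [hu, hw, hu2def, hw2def]; field_simp; ring
  have hBdet : (a + u * u) * (c + w * w) - (u * w) * (u * w) = b * d := by
    have h1 : (u * w) * (u * w) = u2 * w2 := by
      calc (u * w) * (u * w) = (u * u) * (w * w) := by ring
      _ = u2 * w2 := by rw [hu, hw]
    rw [hu, hw, h1, hu2def, hw2def]; field_simp; ring
  have eigB : ∀ i, hB.eigenvalues i = b ∨ hB.eigenvalues i = d := by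
    refine eigTwo B hB b d ?_ ?_
    · rw [Matrix.trace_fin_two, show B 0 0 = ((a + u * u : ℝ):ℂ) from rfl,
        show B 1 1 = ((c + w * w : ℝ):ℂ) from rfl, ← hBtr]
      push_cast; ring
    · rw [Matrix.det_fin_two, show B 0 0 = ((a + u * u : ℝ):ℂ) from rfl,
        show B 1 1 = ((c + w * w : ℝ):ℂ) from rfl, show B 0 1 = ((u * w : ℝ):ℂ) from rfl,
        show B 1 0 = ((u * w : ℝ):ℂ) from rfl, ← hBdet]
      push_cast; ring
  have memA : ∀ i, hA.eigenvalues i ∈ F := fun i => by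
    rcases eigA i with h | h <;> rw [h] <;> assumption
  have memB : ∀ i, hB.eigenvalues i ∈ F := fun i => by
    rcases eigB i with h | h <;> rw [h] <;> assumption
  have hBA : (B - A).PosSemidef := by
    have hfact : B - A = (!![(u:ℂ), (w:ℂ)] : Matrix (Fin 1) (Fin 2) ℂ)ᴴ * !![(u:ℂ), (w:ℂ)] := by
      ext i j
      fin_cases i <;> fin_cases j <;>
        simp [hAdef, hBdef, Matrix.mul_apply, Fin.sum_univ_one,
          Matrix.conjTranspose_apply, Complex.conj_ofReal] <;> push_cast <;> ring
    rw [hfact]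
    exact Matrix.posSemidef_conjTranspose_mul_self _
  set α₁ : ℝ := (f c - f a) / (c - a) with hα₁def
  set β₁ : ℝ := f a - α₁ * a with hβ₁def
  set α₂ : ℝ := (f d - f b) / (d - b) with hα₂def
  set β₂ : ℝ := f b - α₂ * b with hβ₂def
  have cfcA : hA.cfc f = (α₁:ℂ) • A + (β₁:ℂ) • (1 : Matrix (Fin 2) (Fin 2) ℂ) := by
    refine cfcAffine A hA f α₁ β₁ (fun i => ?_)
    rcases eigA i with h | h <;> rw [h]
    · rw [hβ₁def]; ring
    · rw [hβ₁def, hα₁def]; field_simp; ring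
  have cfcB : hB.cfc f = (α₂:ℂ) • B + (β₂:ℂ) • (1 : Matrix (Fin 2) (Fin 2) ℂ) := by
    refine cfcAffine B hB f α₂ β₂ (fun i => ?_)
    rcases eigB i with h | h <;> rw [h]
    · rw [hβ₂def]; ring
    · rw [hβ₂def, hα₂def]; field_simp; ring
  obtain ⟨s, p, hs, hp, htr, hdet⟩ := psdTraceDet _ (hmono A B hA hB memA memB hBA)
  set X : ℝ := α₂ * (a + u * u) + β₂ - (α₁ * a + β₁) with hXdef
  set Y : ℝ := α₂ * (c + w * w) + β₂ - (α₁ * c + β₁) with hYdef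
  set Z : ℝ := α₂ * (u * w) with hZdef
  have hD00 : (hB.cfc f - hA.cfc f) 0 0 = ((X : ℝ) : ℂ) := by
    rw [cfcA, cfcB]
    simp only [Matrix.sub_apply, Matrix.add_apply, Matrix.smul_apply, smul_eq_mul,
      Matrix.one_apply_eq]
    rw [show B 0 0 = ((a + u * u : ℝ):ℂ) from rfl, show A 0 0 = (a:ℂ) from rfl, hXdef]
    push_cast; ring
  have hD11 : (hB.cfc f - hA.cfc f) 1 1 = ((Y : ℝ) : ℂ) := by
    rw [cfcA, cfcB]
    simp only [Matrix.sub_apply, Matrix.add_apply, Matrix.smul_apply, smul_eq_mul,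
      Matrix.one_apply_eq]
    rw [show B 1 1 = ((c + w * w : ℝ):ℂ) from rfl, show A 1 1 = (c:ℂ) from rfl, hYdef]
    push_cast; ring
  have hD01 : (hB.cfc f - hA.cfc f) 0 1 = ((Z : ℝ) : ℂ) := by
    rw [cfcA, cfcB]
    simp only [Matrix.sub_apply, Matrix.add_apply, Matrix.smul_apply, smul_eq_mul]
    rw [Matrix.one_apply_ne (by decide), show B 0 1 = ((u * w : ℝ):ℂ) from rfl,
      show A 0 1 = (0:ℂ) from rfl, hZdef]
    push_cast; ring
  have hD10 : (hB.cfc f - hA.cfc f) 1 0 = ((Z : ℝ) : ℂ) := by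
    rw [cfcA, cfcB]
    simp only [Matrix.sub_apply, Matrix.add_apply, Matrix.smul_apply, smul_eq_mul]
    rw [Matrix.one_apply_ne (by decide), show B 1 0 = ((u * w : ℝ):ℂ) from rfl,
      show A 1 0 = (0:ℂ) from rfl, hZdef]
    push_cast; ring
  rw [Matrix.det_fin_two, hD00, hD11, hD01, hD10] at hdet
  have hdet2 : X * Y - Z * Z = p := by
    have : ((X * Y - Z * Z : ℝ) : ℂ) = (p : ℂ) := by rw [← hdet]; push_cast; ring
    exact_mod_cast this
  have hXYZ : 0 ≤ X * Y - Z * Z := by rw [hdet2]; exact hp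
  have hZZ : Z * Z = α₂ ^ 2 * (u2 * w2) := by
    rw [hZdef]; linear_combination (α₂ ^ 2 * w2) * hu + (α₂ ^ 2 * (u * u)) * hw
  have hid : (c - a) * (f b - f a) * ((f d - f c) * (c - b) - (f c - f b) * (d - c))
      - (d - c) * ((f c - f b) + (f d - f c)) * ((f c - f b) * (b - a) - (f b - f a) * (c - b))
      = (d - b) * (c - a) * (X * Y - Z * Z) := by
    rw [hZZ, hXdef, hYdef, hu, hw, hu2def, hw2def, hβ₁def, hβ₂def, hα₁def, hα₂def]
    field_simp
    ring
  nlinarith [mul_nonneg (mul_nonneg hdb.le hca.le) hXYZ, hid]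

end main


section endg
variable {F : Set ℝ} {f : ℝ → ℝ}

private lemma vanish
    (hbelow : ¬ BddBelow F) (habove : ¬ BddAbove F)
    (mono : ∀ ⦃x y : ℝ⦄, x ∈ F → y ∈ F → x ≤ y → f x ≤ f y)
    (key : ∀ ⦃a b c d : ℝ⦄, a ∈ F → b ∈ F → c ∈ F → d ∈ F → a < b → b < c → c < d →
      (d - c) * ((f c - f b) + (f d - f c)) * ((f c - f b) * (b - a) - (f b - f a) * (c - b))
        ≤ (c - a) * (f b - f a) * ((f d - f c) * (c - b) - (f c - f b) * (d - c)))
    {x y z : ℝ} (hx : x ∈ F) (hy : y ∈ F) (hz : z ∈ F) (hxy : x < y) (hyz : y < z) :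
    (f z - f y) * (y - x) = (f y - f x) * (z - y) := by
  have hS1 : 0 ≤ f y - f x := by have := mono hx hy hxy.le; linarith
  have hS2 : 0 ≤ f z - f y := by have := mono hy hz hyz.le; linarith
  rcases lt_trichotomy ((f z - f y) * (y - x) - (f y - f x) * (z - y)) 0 with hE | hE | hE
  · -- E < 0 : take m very negative
    exfalso
    have hnegE : 0 < (f y - f x) * (z - y) - (f z - f y) * (y - x) := by linarith
    obtain ⟨m, hmF, hm⟩ := not_bddBelow_iff.mp hbelow
      (min x (x - (z - x) * (f z - f y) * (y - x) /
        ((f y - f x) * (z - y) - (f z - f y) * (y - x))))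
    have hmx : m < x := lt_of_lt_of_le hm (min_le_left _ _)
    have hmb : m < x - (z - x) * (f z - f y) * (y - x) /
        ((f y - f x) * (z - y) - (f z - f y) * (y - x)) :=
      lt_of_lt_of_le hm (min_le_right _ _)
    have h2 := div_mul_cancel₀ ((z - x) * (f z - f y) * (y - x)) hnegE.ne'
    have h3 : 0 < (x - m - (z - x) * (f z - f y) * (y - x) /
        ((f y - f x) * (z - y) - (f z - f y) * (y - x)))
        * ((f y - f x) * (z - y) - (f z - f y) * (y - x)) :=
      mul_pos (by linarith) hnegE
    have hF1 : (z - x) * ((f z - f y) * (y - x))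
        ≤ (x - m) * ((f y - f x) * (z - y) - (f z - f y) * (y - x)) := by
      linarith [h2, h3]
    have hR : 0 ≤ f x - f m := by have := mono hmF hx hmx.le; linarith
    have hkey := key hmF hx hy hz hmx hxy hyz
    have hT0 : (z - y) * ((f y - f x) + (f z - f y)) * (f y - f x) * (x - m) ≤ 0 := by
      linarith [hkey, mul_le_mul_of_nonneg_left hF1 hR]
    have h6 : 0 ≤ (z - y) * (x - m) * ((f y - f x) * (f z - f y)) :=
      mul_nonneg (mul_nonneg (by linarith) (by linarith)) (mul_nonneg hS1 hS2)
    have h9 : (z - y) * (x - m) * ((f y - f x) * (f y - f x)) ≤ 0 := by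
      nlinarith [hT0, h6]
    have hS1sq : (f y - f x) * (f y - f x) ≤ 0 := by
      by_contra hpos
      push_neg at hpos
      have := mul_pos (mul_pos (show (0:ℝ) < z - y by linarith)
        (show (0:ℝ) < x - m by linarith)) hpos
      linarith
    have hS1z : f y - f x = 0 :=
      mul_self_eq_zero.mp (le_antisymm hS1sq (mul_self_nonneg _))
    have h7 : (f y - f x) * (z - y) = 0 := by rw [hS1z]; ring
    have h8 : 0 ≤ (f z - f y) * (y - x) := mul_nonneg hS2 (by linarith)
    linarith
  · linarith
  · -- E > 0 : take M very positive
    exfalso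
    obtain ⟨M, hMF, hM⟩ := not_bddAbove_iff.mp habove
      (max z (z + (z - x) * (f y - f x) * (z - y) /
        ((f z - f y) * (y - x) - (f y - f x) * (z - y))))
    have hzM : z < M := lt_of_le_of_lt (le_max_left _ _) hM
    have hMb : z + (z - x) * (f y - f x) * (z - y) /
        ((f z - f y) * (y - x) - (f y - f x) * (z - y)) < M :=
      lt_of_le_of_lt (le_max_right _ _) hM
    have h2 := div_mul_cancel₀ ((z - x) * (f y - f x) * (z - y)) hE.ne'
    have h3 : 0 < (M - z - (z - x) * (f y - f x) * (z - y) /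
        ((f z - f y) * (y - x) - (f y - f x) * (z - y)))
        * ((f z - f y) * (y - x) - (f y - f x) * (z - y)) :=
      mul_pos (by linarith) hE
    have hF1 : (z - x) * ((f y - f x) * (z - y))
        ≤ (M - z) * ((f z - f y) * (y - x) - (f y - f x) * (z - y)) := by
      linarith [h2, h3]
    have hT : 0 ≤ f M - f z := by have := mono hz hMF hzM.le; linarith
    have hkey := key hx hy hz hMF hxy hyz hzM
    have hT0 : (M - z) * (f z - f y) *
        (((f z - f y) * (y - x) - (f y - f x) * (z - y)) + (z - x) * (f y - f x)) ≤ 0 := by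
      linarith [hkey, mul_le_mul_of_nonneg_left hF1 hT]
    have hS2z : f z - f y = 0 := by
      by_contra hne
      have hS2p : 0 < f z - f y := lt_of_le_of_ne hS2 (Ne.symm hne)
      have h4 : 0 < (M - z) * (f z - f y) *
          ((f z - f y) * (y - x) - (f y - f x) * (z - y)) :=
        mul_pos (mul_pos (by linarith) hS2p) hE
      have h5 : 0 ≤ (M - z) * (f z - f y) * ((z - x) * (f y - f x)) :=
        mul_nonneg (mul_nonneg (by linarith) hS2) (mul_nonneg (by linarith) hS1)
      linarith
    have h7 : (f z - f y) * (y - x) = 0 := by rw [hS2z]; ring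
    have h8 : 0 ≤ (f y - f x) * (z - y) := mul_nonneg hS1 (by linarith)
    linarith

private lemma affine_of_vanish
    (hbelow : ¬ BddBelow F) (habove : ¬ BddAbove F)
    (V : ∀ ⦃x y z : ℝ⦄, x ∈ F → y ∈ F → z ∈ F → x < y → y < z →
      (f z - f y) * (y - x) = (f y - f x) * (z - y)) :
    ∃ α β : ℝ, ∀ x ∈ F, f x = α * x + β := by
  obtain ⟨x₀, hx₀F, _⟩ := not_bddAbove_iff.mp habove 0
  obtain ⟨y₀, hy₀F, hxy₀⟩ := not_bddAbove_iff.mp habove x₀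
  have hne : y₀ - x₀ ≠ 0 := by linarith
  refine ⟨(f y₀ - f x₀) / (y₀ - x₀), f x₀ - (f y₀ - f x₀) / (y₀ - x₀) * x₀, fun x hx => ?_⟩
  rcases lt_trichotomy x x₀ with h1 | h1 | h1
  · have hV := V hx hx₀F hy₀F h1 hxy₀
    field_simp
    nlinarith [hV]
  · subst h1; field_simp; ring
  · rcases lt_trichotomy x y₀ with h2 | h2 | h2
    · have hV := V hx₀F hx hy₀F h1 h2
      field_simp
      nlinarith [hV]
    · subst h2; field_simp; ring
    · have hV := V hx₀F hy₀F hx hxy₀ h2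
      field_simp
      nlinarith [hV]

end endg


theorem two_monotone_on_unbounded_set_is_affine (F : Set ℝ)
    (hbelow : ¬ BddBelow F) (habove : ¬ BddAbove F) (f : ℝ → ℝ)
    (hmono : ∀ (A B : Matrix (Fin 2) (Fin 2) ℂ) (hA : A.IsHermitian) (hB : B.IsHermitian),
      (∀ i, hA.eigenvalues i ∈ F) → (∀ i, hB.eigenvalues i ∈ F) →
      (B - A).PosSemidef → (hB.cfc f - hA.cfc f).PosSemidef) :
    ∃ α β : ℝ, ∀ x ∈ F, f x = α * x + β := by
  refine affine_of_vanish hbelow habove ?_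
  intro x y z hx hy hz hxy hyz
  exact vanish hbelow habove
    (fun a b ha hb hab => mono_of_hmono hmono ha hb hab)
    (fun a b c d ha hb hc hd h1 h2 h3 => keyPoly hmono ha hb hc hd h1 h2 h3)
    hx hy hz hxy hyz
end
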